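/- arXiv:0812.4091 — 4 statements merged into one kernel-verified Lean document; each statement's English description precedes it below -/
import Mathlib

section
/- For every integer n ≥ 0, the number of 2-distant noncrossing partitions of [n] equals the number of 12312-avoiding partitions of [n]. -/
/-- The maximum of the first `i` letters of `w` (and `0` if `i = 0`). -/
def prefMax (w : List ℕ) (i : ℕ) : ℕ := (w.take i).foldr max 0

/-- `w` is the canonical word of a set partition of `[n]` (where `n = w.length`):
it is a restricted growth string with letters in `{1, 2, ...}`, i.e. the `i`-th letter
is at least `1` and at most one more than the maximum of the previous letters.
(The `i`-th letter is the index of the block containing `i+1`, blocks being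
ordered by their minima.) -/
def IsCanonicalWord (w : List ℕ) : Prop :=
  ∀ i, i < w.length → 1 ≤ w.getD i 0 ∧ w.getD i 0 ≤ prefMax w i + 1

/-- The number of blocks of the partition with canonical word `w`. -/
def numBlocks (w : List ℕ) : ℕ := w.foldr max 0

/-- The canonical word `w` avoids the pattern `12312`: there is no subsequence
`b₁ b₂ b₃ b₄ b₅` (in this left-to-right order) with `b₁ = b₄`, `b₂ = b₅`
and `b₁ < b₂ < b₃`. -/
def Avoids12312 (w : List ℕ) : Prop :=
  ¬ ∃ i1 i2 i3 i4 i5, i1 < i2 ∧ i2 < i3 ∧ i3 < i4 ∧ i4 < i5 ∧ i5 < w.length ∧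
    w.getD i1 0 = w.getD i4 0 ∧ w.getD i2 0 = w.getD i5 0 ∧
    w.getD i1 0 < w.getD i2 0 ∧ w.getD i2 0 < w.getD i3 0

/-- `(i, j)` (0-indexed positions, corresponding to the elements `i+1 < j+1`) is an edge
of the partition diagram of the partition with canonical word `w`: the two elements are
in the same block and no element strictly between them is in that block. -/
def IsArc (w : List ℕ) (i j : ℕ) : Prop :=
  i < j ∧ j < w.length ∧ w.getD i 0 = w.getD j 0 ∧
    ∀ k, i < k → k < j → w.getD k 0 ≠ w.getD i 0

/-- The partition with canonical word `w` is 2-distant noncrossing: there are no two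
edges `(i₁, j₁)`, `(i₂, j₂)` of its partition diagram with `i₁ < i₂ ≤ j₁ < j₂`
and `j₁ - i₂ ≥ 2`. -/
def Is2DNC (w : List ℕ) : Prop :=
  ¬ ∃ i1 j1 i2 j2, IsArc w i1 j1 ∧ IsArc w i2 j2 ∧
    i1 < i2 ∧ i2 ≤ j1 ∧ j1 < j2 ∧ i2 + 2 ≤ j1


namespace Stmt9

lemma foldr_max_init (w : List ℕ) (c : ℕ) : w.foldr max c = max (w.foldr max 0) c := by
  induction w with
  | nil => simp
  | cons x t ih => simp [List.foldr_cons, ih, max_assoc]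

lemma numBlocks_append (w : List ℕ) (a : ℕ) :
    numBlocks (w ++ [a]) = max (numBlocks w) a := by
  rw [numBlocks, numBlocks, List.foldr_append, List.foldr_cons, List.foldr_nil, foldr_max_init]
  simp

lemma prefMax_append (w : List ℕ) (a : ℕ) (i : ℕ) (h : i ≤ w.length) :
    prefMax (w ++ [a]) i = prefMax w i := by
  simp [prefMax, List.take_append_of_le_length h]

lemma prefMax_length (w : List ℕ) : prefMax w w.length = numBlocks w := by
  simp [prefMax, numBlocks]

lemma getD_append_lt (w : List ℕ) (a : ℕ) {i : ℕ} (h : i < w.length) :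
    (w ++ [a]).getD i 0 = w.getD i 0 := List.getD_append _ _ _ _ h

lemma getD_append_len (w : List ℕ) (a : ℕ) :
    (w ++ [a]).getD w.length 0 = a := by
  rw [List.getD_append_right _ _ _ _ le_rfl]
  simp

lemma rgs_nil : IsCanonicalWord [] := by intro i hi; simp at hi

lemma rgs_append (w : List ℕ) (a : ℕ) :
    IsCanonicalWord (w ++ [a]) ↔
      IsCanonicalWord w ∧ 1 ≤ a ∧ a ≤ numBlocks w + 1 := by
  constructor
  · intro h
    refine ⟨fun i hi => ?_, ?_⟩
    · have := h i (by simp; omega)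
      rwa [getD_append_lt w a hi, prefMax_append w a i hi.le] at this
    · have := h w.length (by simp)
      rwa [getD_append_len, prefMax_append w a _ le_rfl, prefMax_length] at this
  · rintro ⟨h, h1, h2⟩ i hi
    simp at hi
    rcases lt_or_eq_of_le hi with hi' | hi'
    · rw [getD_append_lt w a hi', prefMax_append w a i hi'.le]
      exact h i hi'
    · subst hi'
      rw [getD_append_len, prefMax_append w a _ le_rfl, prefMax_length]
      exact ⟨h1, h2⟩

lemma getD_le_numBlocks (w : List ℕ) {i : ℕ} (h : i < w.length) :
    w.getD i 0 ≤ numBlocks w := by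
  induction w using List.reverseRecOn with
  | nil => simp at h
  | append_singleton t x ih =>
    rw [numBlocks_append]
    simp at h
    rcases lt_or_eq_of_le h with h' | h'
    · rw [getD_append_lt t x h']; exact le_max_of_le_left (ih h')
    · subst h'; rw [getD_append_len]; exact le_max_right _ _

lemma getD_pos (w : List ℕ) (hw : IsCanonicalWord w) {i : ℕ} (h : i < w.length) :
    1 ≤ w.getD i 0 := (hw i h).1

/-- every value `1 ≤ b ≤ numBlocks w` occurs -/
lemma occ_of_le (w : List ℕ) (hw : IsCanonicalWord w) {b : ℕ} (h1 : 1 ≤ b)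
    (h2 : b ≤ numBlocks w) : ∃ i, i < w.length ∧ w.getD i 0 = b := by
  induction w using List.reverseRecOn with
  | nil => simp [numBlocks] at h2; omega
  | append_singleton t x ih =>
    rw [rgs_append] at hw
    rw [numBlocks_append] at h2
    rcases le_or_gt b (numBlocks t) with hb | hb
    · obtain ⟨i, hi, he⟩ := ih hw.1 hb
      exact ⟨i, by simp; omega, by rw [getD_append_lt t x hi]; exact he⟩
    · have : b = x := by omega
      exact ⟨t.length, by simp, by rw [getD_append_len]; omega⟩

lemma occ2_of_lt (w : List ℕ) (hw : IsCanonicalWord w) {a b : ℕ} (h1 : 1 ≤ a)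
    (hab : a < b) (h2 : b ≤ numBlocks w) :
    ∃ i j, i < j ∧ j < w.length ∧ w.getD i 0 = a ∧ w.getD j 0 = b := by
  induction w using List.reverseRecOn with
  | nil => simp [numBlocks] at h2; omega
  | append_singleton t x ih =>
    rw [rgs_append] at hw
    rw [numBlocks_append] at h2
    rcases le_or_gt b (numBlocks t) with hb | hb
    · obtain ⟨i, j, hij, hj, he1, he2⟩ := ih hw.1 hb
      exact ⟨i, j, hij, by simp; omega,
        by rw [getD_append_lt t x (hij.trans hj)]; exact he1,
        by rw [getD_append_lt t x hj]; exact he2⟩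
    · have hbx : b = x := by omega
      obtain ⟨i, hi, he⟩ := occ_of_le t hw.1 h1 (by omega)
      exact ⟨i, t.length, hi, by simp,
        by rw [getD_append_lt t x hi]; exact he, by rw [getD_append_len]; omega⟩

lemma occ3_of_lt (w : List ℕ) (hw : IsCanonicalWord w) {a b c : ℕ} (h1 : 1 ≤ a)
    (hab : a < b) (hbc : b < c) (h2 : c ≤ numBlocks w) :
    ∃ i j k, i < j ∧ j < k ∧ k < w.length ∧
      w.getD i 0 = a ∧ w.getD j 0 = b ∧ w.getD k 0 = c := by
  induction w using List.reverseRecOn with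
  | nil => simp [numBlocks] at h2; omega
  | append_singleton t x ih =>
    rw [rgs_append] at hw
    rw [numBlocks_append] at h2
    rcases le_or_gt c (numBlocks t) with hb | hb
    · obtain ⟨i, j, k, hij, hjk, hk, he1, he2, he3⟩ := ih hw.1 hb
      exact ⟨i, j, k, hij, hjk, by simp; omega,
        by rw [getD_append_lt t x (hij.trans (hjk.trans hk))]; exact he1,
        by rw [getD_append_lt t x (hjk.trans hk)]; exact he2,
        by rw [getD_append_lt t x hk]; exact he3⟩
    · have hcx : c = x := by omega
      obtain ⟨i, j, hij, hj, he1, he2⟩ := occ2_of_lt t hw.1 h1 hab (by omega)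
      exact ⟨i, j, t.length, hij, hj, by simp,
        by rw [getD_append_lt t x (hij.trans hj)]; exact he1,
        by rw [getD_append_lt t x hj]; exact he2,
        by rw [getD_append_len]; omega⟩

end Stmt9

namespace Stmt9

/-- `b` is blocked from being appended (avoid class). -/
def Blk (w : List ℕ) (b : ℕ) : Prop :=
  ∃ i1 i2 i3 i4, i1 < i2 ∧ i2 < i3 ∧ i3 < i4 ∧ i4 < w.length ∧
    w.getD i1 0 = w.getD i4 0 ∧ w.getD i2 0 = b ∧
    w.getD i1 0 < b ∧ b < w.getD i3 0

lemma avoid_nil : Avoids12312 [] := by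
  rintro ⟨i1, i2, i3, i4, i5, -, -, -, -, h, -⟩; simp at h

lemma avoid_append (w : List ℕ) (a : ℕ) :
    Avoids12312 (w ++ [a]) ↔ Avoids12312 w ∧ ¬ Blk w a := by
  constructor
  · intro h
    constructor
    · rintro ⟨i1, i2, i3, i4, i5, o1, o2, o3, o4, o5, e1, e2, l1, l2⟩
      refine h ⟨i1, i2, i3, i4, i5, o1, o2, o3, o4, by simp; omega, ?_, ?_, ?_, ?_⟩ <;>
        rw [getD_append_lt w a (by omega), getD_append_lt w a (by omega)] <;>
        assumption
    · rintro ⟨i1, i2, i3, i4, o1, o2, o3, o4, e1, e2, l1, l2⟩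
      refine h ⟨i1, i2, i3, i4, w.length, o1, o2, o3, o4, by simp, ?_, ?_, ?_, ?_⟩
      · rw [getD_append_lt w a (by omega), getD_append_lt w a (by omega)]; exact e1
      · rw [getD_append_lt w a (by omega), getD_append_len]; exact e2
      · rw [getD_append_lt w a (by omega), getD_append_lt w a (by omega)]; omega
      · rw [getD_append_lt w a (by omega), getD_append_lt w a (by omega)]; omega
  · rintro ⟨h1, h2⟩ ⟨i1, i2, i3, i4, i5, o1, o2, o3, o4, o5, e1, e2, l1, l2⟩
    simp at o5
    have g : ∀ i, i < w.length → (w ++ [a]).getD i 0 = w.getD i 0 :=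
      fun i hi => getD_append_lt w a hi
    rcases lt_or_eq_of_le o5 with o5' | o5'
    · rw [g i1 (by omega), g i4 (by omega)] at e1
      rw [g i2 (by omega), g i5 (by omega)] at e2
      rw [g i1 (by omega), g i2 (by omega)] at l1
      rw [g i2 (by omega), g i3 (by omega)] at l2
      exact h1 ⟨i1, i2, i3, i4, i5, o1, o2, o3, o4, o5', e1, e2, l1, l2⟩
    · subst o5'
      rw [g i2 (by omega), getD_append_len] at e2
      rw [g i1 (by omega), g i4 (by omega)] at e1
      rw [g i1 (by omega), g i2 (by omega)] at l1
      rw [g i2 (by omega), g i3 (by omega)] at l2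
      exact h2 ⟨i1, i2, i3, i4, o1, o2, o3, by omega, e1, by omega, by omega, by omega⟩

lemma blk_append (w : List ℕ) {a : ℕ} (hw : IsCanonicalWord w) (h1 : 1 ≤ a)
    (h2 : a ≤ numBlocks w + 1) (b : ℕ) :
    Blk (w ++ [a]) b ↔ (b < numBlocks (w ++ [a]) ∧ (a < b ∨ Blk w b)) := by
  constructor
  · rintro ⟨i1, i2, i3, i4, o1, o2, o3, o4, e1, e2, l1, l2⟩
    have hw' : IsCanonicalWord (w ++ [a]) := (rgs_append w a).mpr ⟨hw, h1, h2⟩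
    have hb3 : (w ++ [a]).getD i3 0 ≤ numBlocks (w ++ [a]) :=
      getD_le_numBlocks _ (by omega)
    refine ⟨by omega, ?_⟩
    rcases lt_or_ge a b with hab | hab
    · exact Or.inl hab
    · right
      have hi4 : i4 < w.length := by
        rcases lt_or_eq_of_le (Nat.lt_succ_iff.mp (by simpa using o4)) with h' | h'
        · exact h'
        · exfalso
          rw [h', getD_append_len] at e1
          rw [getD_append_lt w a (by omega)] at e1
          rw [getD_append_lt w a (by omega)] at l1
          omega
      have g : ∀ i, i < w.length → (w ++ [a]).getD i 0 = w.getD i 0 :=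
        fun i hi => getD_append_lt w a hi
      rw [g i1 (by omega), g i4 (by omega)] at e1
      rw [g i2 (by omega)] at e2
      rw [g i1 (by omega)] at l1
      rw [g i3 (by omega)] at l2
      exact ⟨i1, i2, i3, i4, o1, o2, o3, hi4, e1, e2, l1, l2⟩
  · rintro ⟨hbm, hab | hblk⟩
    · -- construct pattern using first occurrences: a < b < numBlocks w
      have hm : numBlocks (w ++ [a]) = max (numBlocks w) a := numBlocks_append w a
      have haM : a ≤ numBlocks w := by
        rcases max_cases (numBlocks w) a with ⟨he, _⟩ | ⟨he, hlt⟩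
        · omega
        · omega
      have hbM : b < numBlocks w := by omega
      obtain ⟨i, j, k, hij, hjk, hk, e1, e2, e3⟩ :=
        occ3_of_lt w hw h1 hab hbM le_rfl
      refine ⟨i, j, k, w.length, hij, hjk, hk, by simp, ?_, ?_, ?_, ?_⟩
      · rw [getD_append_lt w a (by omega), getD_append_len]; omega
      · rw [getD_append_lt w a (by omega)]; exact e2
      · rw [getD_append_lt w a (by omega)]; omega
      · rw [getD_append_lt w a (by omega)]; omega
    · obtain ⟨i1, i2, i3, i4, o1, o2, o3, o4, e1, e2, l1, l2⟩ := hblk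
      refine ⟨i1, i2, i3, i4, o1, o2, o3, by simp; omega, ?_, ?_, ?_, ?_⟩ <;>
        rw [getD_append_lt w a (by omega)] <;>
        try rw [getD_append_lt w a (by omega)]
      all_goals assumption

end Stmt9

namespace Stmt9

open scoped Classical in
/-- allowed extension letters, avoid class -/
noncomputable def EA (w : List ℕ) : Finset ℕ :=
  (Finset.range (numBlocks w + 2)).filter (fun b => 1 ≤ b ∧ ¬ Blk w b)

open scoped Classical in
lemma mem_EA {w : List ℕ} {b : ℕ} :
    b ∈ EA w ↔ b < numBlocks w + 2 ∧ 1 ≤ b ∧ ¬ Blk w b := by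
  simp [EA]

lemma not_blk_of_ge (w : List ℕ) {b : ℕ} (hb : numBlocks w ≤ b) : ¬ Blk w b := by
  rintro ⟨i1, i2, i3, i4, o1, o2, o3, o4, e1, e2, l1, l2⟩
  have := getD_le_numBlocks w (show i3 < w.length by omega)
  omega

lemma top_mem_EA (w : List ℕ) {hM : 1 ≤ numBlocks w} : numBlocks w ∈ EA w :=
  mem_EA.mpr ⟨by omega, hM, not_blk_of_ge w le_rfl⟩

lemma top1_mem_EA (w : List ℕ) : numBlocks w + 1 ∈ EA w :=
  mem_EA.mpr ⟨by omega, by omega, not_blk_of_ge w (by omega)⟩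

lemma EA_nil : EA [] = {1} := by
  ext b
  simp only [mem_EA, Finset.mem_singleton]
  constructor
  · rintro ⟨h1, h2, -⟩
    simp [numBlocks] at h1; omega
  · rintro rfl
    refine ⟨by simp [numBlocks], le_rfl, ?_⟩
    rintro ⟨i1, i2, i3, i4, o1, o2, o3, o4, -⟩
    simp at o4

/-- the crucial card formula for the avoid class -/
def fRule (k j : ℕ) : ℕ := if j + 1 = k then k + 1 else if j + 2 = k then k else j + 3

lemma keyA (w : List ℕ) (hw : IsCanonicalWord w) {a : ℕ} (ha : a ∈ EA w) :
    (EA (w ++ [a])).card =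
      fRule (EA w).card ((EA w).filter (fun b => b < a)).card := by
  classical
  obtain ⟨haM, ha1, hablk⟩ := mem_EA.mp ha
  set M := numBlocks w with hMdef
  have hm' : numBlocks (w ++ [a]) = max M a := numBlocks_append w a
  have hblk := blk_append w hw ha1 (by omega)
  -- three cases on a
  rcases show a = M + 1 ∨ a = M ∨ a < M by omega with hc | hc | hc
  · -- new letter
    have hmax : numBlocks (w ++ [a]) = M + 1 := by rw [hm', hc]; omega
    have hE : EA (w ++ [a]) = insert (M + 2) (EA w) := by
      ext b
      simp only [mem_EA, Finset.mem_insert, hmax, hblk b, hmax]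
      constructor
      · rintro ⟨hb2, hb1, hnb⟩
        rcases show b = M + 2 ∨ b < M + 2 by omega with h' | h'
        · exact Or.inl h'
        · right
          refine ⟨h', hb1, fun hB => hnb ⟨?_, Or.inr hB⟩⟩
          rcases hB with ⟨i1, i2, i3, i4, o1, o2, o3, o4, e1, e2, l1, l2⟩
          have := getD_le_numBlocks w (show i3 < w.length by omega)
          omega
      · rintro (rfl | hb)
        · exact ⟨by omega, by omega, fun hB => by omega⟩
        · obtain ⟨hb2, hb1, hnb⟩ := hb
          refine ⟨by omega, hb1, fun hB => ?_⟩
          rcases hB.2 with h' | h'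
          · -- a < b : b = M+1 possible? b < M+2 and a = M+1 < b impossible
            omega
          · exact hnb h'
    have hr : ((EA w).filter (fun b => b < a)).card = (EA w).card - 1 := by
      have : (EA w).filter (fun b => b < a) = (EA w).erase (M + 1) := by
        ext b
        simp only [Finset.mem_filter, Finset.mem_erase]
        constructor
        · rintro ⟨hb, hlt⟩; exact ⟨by omega, hb⟩
        · rintro ⟨hne, hb⟩
          have := (mem_EA.mp hb).1
          exact ⟨hb, by omega⟩
      rw [this, Finset.card_erase_of_mem (top1_mem_EA w)]
    have hcard1 : 1 ≤ (EA w).card := Finset.card_pos.mpr ⟨M + 1, top1_mem_EA w⟩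
    rw [hE, Finset.card_insert_of_notMem (by intro h; have := (mem_EA.mp h).1; omega),
      hr]
    unfold fRule
    have : (EA w).card - 1 + 1 = (EA w).card := by omega
    rw [if_pos this]
  · -- a = M (old top letter), here 1 ≤ M
    have hM1 : 1 ≤ M := by omega
    have hmax : numBlocks (w ++ [a]) = M := by rw [hm', hc]; omega
    have hE : EA (w ++ [a]) = EA w := by
      ext b
      simp only [mem_EA, hblk b, hmax]
      constructor
      · rintro ⟨hb2, hb1, hnb⟩
        refine ⟨by omega, hb1, fun hB => ?_⟩
        have hbM : b < M := by
          by_contra h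
          exact not_blk_of_ge w (by omega) hB
        exact hnb ⟨by omega, Or.inr hB⟩
      · rintro ⟨hb2, hb1, hnb⟩
        refine ⟨by omega, hb1, fun hB => ?_⟩
        obtain ⟨hbm, h' | h'⟩ := hB
        · omega
        · exact hnb h'
    have hr : ((EA w).filter (fun b => b < a)).card + 2 = (EA w).card := by
      have hsub : {M, M + 1} ⊆ EA w := by
        intro x hx
        simp only [Finset.mem_insert, Finset.mem_singleton] at hx
        rcases hx with rfl | rfl
        · exact top_mem_EA w (hM := hM1)
        · exact top1_mem_EA w
      have : (EA w).filter (fun b => b < a) = EA w \ {M, M + 1} := by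
        ext b
        simp only [Finset.mem_filter, Finset.mem_sdiff, Finset.mem_insert,
          Finset.mem_singleton]
        constructor
        · rintro ⟨hb, hlt⟩; exact ⟨hb, by omega⟩
        · rintro ⟨hb, hne⟩
          have := (mem_EA.mp hb).1
          refine ⟨hb, by omega⟩
      rw [this, Finset.card_sdiff_of_subset hsub]
      have h2 : ({M, M + 1} : Finset ℕ).card = 2 := by
        rw [Finset.card_insert_of_notMem (by simp), Finset.card_singleton]
      have hle : ({M, M + 1} : Finset ℕ).card ≤ (EA w).card :=
        Finset.card_le_card hsub
      omega
    rw [hE]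
    unfold fRule
    rw [if_neg (by omega), if_pos (by omega)]
  · -- a < M
    have hmax : numBlocks (w ++ [a]) = M := by rw [hm']; omega
    set r := ((EA w).filter (fun b => b < a)).card with hrdef
    have hE : EA (w ++ [a]) =
        insert M (insert (M + 1) (insert a ((EA w).filter (fun b => b < a)))) := by
      ext b
      simp only [mem_EA, hblk b, hmax, Finset.mem_insert, Finset.mem_filter]
      constructor
      · rintro ⟨hb2, hb1, hnb⟩
        rcases show b = M ∨ b = M + 1 ∨ b < M by omega with h' | h' | h'
        · exact Or.inl h'
        · exact Or.inr (Or.inl h')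
        · rcases show b = a ∨ b < a ∨ a < b by omega with h'' | h'' | h''
          · exact Or.inr (Or.inr (Or.inl h''))
          · refine Or.inr (Or.inr (Or.inr ⟨⟨by omega, hb1, ?_⟩, h''⟩))
            intro hB
            exact hnb ⟨by omega, Or.inr hB⟩
          · exact absurd ⟨by omega, Or.inl h''⟩ hnb
      · rintro (rfl | rfl | rfl | ⟨hb, hlt⟩)
        · exact ⟨by omega, by omega, fun hB => not_blk_of_ge w (by omega) (by
            rcases hB.2 with h' | h'
            · omega
            · exact h')⟩
        · exact ⟨by omega, by omega, fun hB => by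
            rcases hB.2 with h' | h'
            · omega
            · exact not_blk_of_ge w (by omega) h'⟩
        · exact ⟨by omega, ha1, fun hB => by
            rcases hB.2 with h' | h'
            · omega
            · exact hablk h'⟩
        · obtain ⟨hb2, hb1, hnb⟩ := hb
          exact ⟨by omega, hb1, fun hB => by
            rcases hB.2 with h' | h'
            · omega
            · exact hnb h'⟩
    have hbound : r + 3 ≤ (EA w).card := by
      have hsub : insert M (insert (M + 1) (insert a
          ((EA w).filter (fun b => b < a)))) ⊆ EA w := by
        intro x hx
        simp only [Finset.mem_insert, Finset.mem_filter] at hx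
        rcases hx with rfl | rfl | rfl | ⟨hb, -⟩
        · exact top_mem_EA w (hM := by omega)
        · exact top1_mem_EA w
        · exact ha
        · exact hb
      calc r + 3 = (insert M (insert (M + 1) (insert a
            ((EA w).filter (fun b => b < a))))).card := by
              rw [Finset.card_insert_of_notMem, Finset.card_insert_of_notMem,
                Finset.card_insert_of_notMem]
              · simp only [Finset.mem_filter]; omega
              · simp only [Finset.mem_insert, Finset.mem_filter]
                push_neg
                exact ⟨by omega, fun h => by omega⟩
              · simp only [Finset.mem_insert, Finset.mem_filter]
                push_neg
                refine ⟨by omega, by omega, fun h => by omega⟩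
        _ ≤ (EA w).card := Finset.card_le_card hsub
    have : (EA (w ++ [a])).card = r + 3 := by
      rw [hE, Finset.card_insert_of_notMem, Finset.card_insert_of_notMem,
        Finset.card_insert_of_notMem]
      · simp only [Finset.mem_filter]; omega
      · simp only [Finset.mem_insert, Finset.mem_filter]
        push_neg
        exact ⟨by omega, fun h => by omega⟩
      · simp only [Finset.mem_insert, Finset.mem_filter]
        push_neg
        refine ⟨by omega, by omega, fun h => by omega⟩
    rw [this]
    unfold fRule
    rw [if_neg (by omega), if_neg (by omega)]

end Stmt9

namespace Stmt9

def occSet (w : List ℕ) (b : ℕ) : Finset ℕ :=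
  (Finset.range w.length).filter (fun i => w.getD i 0 = b)

def Occ (w : List ℕ) (b : ℕ) : Prop := (occSet w b).Nonempty

def lastpos (w : List ℕ) (b : ℕ) : ℕ := (occSet w b).sup id

lemma mem_occSet {w : List ℕ} {b i : ℕ} :
    i ∈ occSet w b ↔ i < w.length ∧ w.getD i 0 = b := by simp [occSet]

lemma lastpos_mem {w : List ℕ} {b : ℕ} (h : Occ w b) : lastpos w b ∈ occSet w b := by
  obtain ⟨i, hi, he⟩ := Finset.exists_mem_eq_sup (occSet w b) h id
  rw [lastpos, he]; exact hi

lemma lastpos_lt {w : List ℕ} {b : ℕ} (h : Occ w b) : lastpos w b < w.length :=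
  (mem_occSet.mp (lastpos_mem h)).1

lemma getD_lastpos {w : List ℕ} {b : ℕ} (h : Occ w b) :
    w.getD (lastpos w b) 0 = b := (mem_occSet.mp (lastpos_mem h)).2

lemma le_lastpos {w : List ℕ} {b i : ℕ} (h : i ∈ occSet w b) : i ≤ lastpos w b :=
  Finset.le_sup (f := id) h

lemma lastpos_inj {w : List ℕ} {b c : ℕ} (hb : Occ w b) (hc : Occ w c)
    (h : lastpos w b = lastpos w c) : b = c := by
  have h1 := getD_lastpos hb
  have h2 := getD_lastpos hc
  rw [h] at h1; rw [h1] at h2; exact h2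

lemma occSet_append_ne (w : List ℕ) {a b : ℕ} (hba : b ≠ a) :
    occSet (w ++ [a]) b = occSet w b := by
  ext i
  simp only [mem_occSet, List.length_append, List.length_singleton]
  constructor
  · rintro ⟨hi, he⟩
    rcases lt_or_eq_of_le (Nat.lt_succ_iff.mp hi) with h' | h'
    · rw [getD_append_lt w a h'] at he; exact ⟨h', he⟩
    · rw [h', getD_append_len] at he; omega
  · rintro ⟨hi, he⟩
    exact ⟨by omega, by rw [getD_append_lt w a hi]; exact he⟩

lemma occ_append_ne (w : List ℕ) {a b : ℕ} (hba : b ≠ a) :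
    Occ (w ++ [a]) b ↔ Occ w b := by
  unfold Occ; rw [occSet_append_ne w hba]

lemma lastpos_append_ne (w : List ℕ) {a b : ℕ} (hba : b ≠ a) :
    lastpos (w ++ [a]) b = lastpos w b := by
  unfold lastpos; rw [occSet_append_ne w hba]

lemma occSet_append_self (w : List ℕ) (a : ℕ) :
    occSet (w ++ [a]) a = insert w.length (occSet w a) := by
  ext i
  simp only [mem_occSet, Finset.mem_insert, List.length_append, List.length_singleton]
  constructor
  · rintro ⟨hi, he⟩
    rcases lt_or_eq_of_le (Nat.lt_succ_iff.mp hi) with h' | h'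
    · rw [getD_append_lt w a h'] at he; exact Or.inr ⟨h', he⟩
    · exact Or.inl h'
  · rintro (rfl | ⟨hi, he⟩)
    · exact ⟨by omega, getD_append_len w a⟩
    · exact ⟨by omega, by rw [getD_append_lt w a hi]; exact he⟩

lemma occ_append_self (w : List ℕ) (a : ℕ) : Occ (w ++ [a]) a := by
  unfold Occ
  rw [occSet_append_self]
  exact ⟨w.length, Finset.mem_insert_self _ _⟩

lemma lastpos_append_self (w : List ℕ) (a : ℕ) :
    lastpos (w ++ [a]) a = w.length := by
  unfold lastpos
  rw [occSet_append_self, Finset.sup_insert]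
  have : (occSet w a).sup id ≤ w.length := by
    apply Finset.sup_le
    intro i hi
    exact le_of_lt (mem_occSet.mp hi).1
  simp only [id]
  omega

lemma arc_lt {w : List ℕ} {i j : ℕ} (h : IsArc w i j) : j < w.length := h.2.1

lemma arc_append (w : List ℕ) (a : ℕ) (i j : ℕ) :
    IsArc (w ++ [a]) i j ↔
      IsArc w i j ∨ (j = w.length ∧ Occ w a ∧ i = lastpos w a) := by
  constructor
  · rintro ⟨hij, hjl, he, hk⟩
    simp only [List.length_append, List.length_singleton] at hjl
    rcases lt_or_eq_of_le (Nat.lt_succ_iff.mp hjl) with h' | h'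
    · left
      rw [getD_append_lt w a (by omega), getD_append_lt w a h'] at he
      refine ⟨hij, h', he, fun k hk1 hk2 => ?_⟩
      have := hk k hk1 hk2
      rwa [getD_append_lt w a (by omega), getD_append_lt w a (by omega)] at this
    · right
      subst h'
      rw [getD_append_lt w a (by omega), getD_append_len] at he
      have hocc : Occ w a := ⟨i, mem_occSet.mpr ⟨hij, he⟩⟩
      refine ⟨rfl, hocc, ?_⟩
      have hle : i ≤ lastpos w a := le_lastpos (mem_occSet.mpr ⟨hij, he⟩)
      rcases lt_or_eq_of_le hle with h'' | h''
      · exfalso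
        have := hk (lastpos w a) h'' (lastpos_lt hocc)
        rw [getD_append_lt w a (lastpos_lt hocc), getD_append_lt w a (by omega),
          getD_lastpos hocc, he] at this
        exact this rfl
      · exact h''
  · rintro (⟨hij, hjl, he, hk⟩ | ⟨rfl, hocc, rfl⟩)
    · refine ⟨hij, by simp; omega, ?_, fun k hk1 hk2 => ?_⟩
      · rw [getD_append_lt w a (by omega), getD_append_lt w a hjl]; exact he
      · rw [getD_append_lt w a (by omega), getD_append_lt w a (by omega)]
        exact hk k hk1 hk2
    · refine ⟨lastpos_lt hocc, by simp, ?_, fun k hk1 hk2 => ?_⟩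
      · rw [getD_append_lt w a (lastpos_lt hocc), getD_append_len,
          getD_lastpos hocc]
      · rw [getD_append_lt w a (by omega), getD_append_lt w a (lastpos_lt hocc),
          getD_lastpos hocc]
        intro hcon
        have : k ∈ occSet w a := mem_occSet.mpr ⟨by omega, hcon⟩
        have := le_lastpos this
        omega

def Cov (w : List ℕ) (p : ℕ) : Prop := ∃ i j, IsArc w i j ∧ i < p ∧ p + 2 ≤ j

lemma cov_append (w : List ℕ) (a p : ℕ) :
    Cov (w ++ [a]) p ↔
      Cov w p ∨ (Occ w a ∧ lastpos w a < p ∧ p + 2 ≤ w.length) := by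
  constructor
  · rintro ⟨i, j, harc, hip, hpj⟩
    rcases (arc_append w a i j).mp harc with h | ⟨rfl, hocc, rfl⟩
    · exact Or.inl ⟨i, j, h, hip, hpj⟩
    · exact Or.inr ⟨hocc, hip, hpj⟩
  · rintro (⟨i, j, harc, hip, hpj⟩ | ⟨hocc, hip, hpj⟩)
    · exact ⟨i, j, (arc_append w a i j).mpr (Or.inl harc), hip, hpj⟩
    · exact ⟨lastpos w a, w.length,
        (arc_append w a _ _).mpr (Or.inr ⟨rfl, hocc, rfl⟩), hip, hpj⟩

def AllowedD (w : List ℕ) (b : ℕ) : Prop := Occ w b ∧ ¬ Cov w (lastpos w b)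

lemma dnc_nil : Is2DNC [] := by
  rintro ⟨i1, j1, i2, j2, h1, -⟩
  have := arc_lt h1; simp at this

lemma dnc_append (w : List ℕ) (a : ℕ) :
    Is2DNC (w ++ [a]) ↔ Is2DNC w ∧ (Occ w a → ¬ Cov w (lastpos w a)) := by
  constructor
  · intro h
    constructor
    · rintro ⟨i1, j1, i2, j2, a1, a2, o1, o2, o3, o4⟩
      exact h ⟨i1, j1, i2, j2, (arc_append w a _ _).mpr (Or.inl a1),
        (arc_append w a _ _).mpr (Or.inl a2), o1, o2, o3, o4⟩
    · intro hocc ⟨i, j, harc, hip, hpj⟩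
      exact h ⟨i, j, lastpos w a, w.length, (arc_append w a _ _).mpr (Or.inl harc),
        (arc_append w a _ _).mpr (Or.inr ⟨rfl, hocc, rfl⟩), hip, by omega,
        arc_lt harc, hpj⟩
  · rintro ⟨h1, h2⟩ ⟨i1, j1, i2, j2, a1, a2, o1, o2, o3, o4⟩
    rcases (arc_append w a i2 j2).mp a2 with b2 | ⟨rfl, hocc, rfl⟩
    · rcases (arc_append w a i1 j1).mp a1 with b1 | ⟨rfl, hocc, rfl⟩
      · exact h1 ⟨i1, j1, i2, j2, b1, b2, o1, o2, o3, o4⟩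
      · have := arc_lt b2; omega
    · rcases (arc_append w a i1 j1).mp a1 with b1 | ⟨h', -⟩
      · exact h2 hocc ⟨i1, j1, b1, o1, o4⟩
      · omega

lemma allowedD_append_self (w : List ℕ) (a : ℕ) : AllowedD (w ++ [a]) a := by
  refine ⟨occ_append_self w a, ?_⟩
  rw [lastpos_append_self]
  rintro ⟨i, j, harc, hip, hpj⟩
  have := arc_lt harc
  simp only [List.length_append, List.length_singleton] at this
  omega

lemma allowedD_append_ne (w : List ℕ) {a b : ℕ} (hba : b ≠ a) :
    AllowedD (w ++ [a]) b ↔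
      AllowedD w b ∧ (Occ w a →
        (lastpos w b < lastpos w a ∨ w.length < lastpos w b + 2)) := by
  unfold AllowedD
  rw [occ_append_ne w hba, lastpos_append_ne w hba, cov_append]
  constructor
  · rintro ⟨hocc, hcov⟩
    push_neg at hcov
    refine ⟨⟨hocc, hcov.1⟩, fun hocca => ?_⟩
    by_contra hcon
    push_neg at hcon
    have hne : lastpos w b ≠ lastpos w a := fun h => hba (lastpos_inj hocc hocca h)
    have := hcov.2 hocca (by omega)
    omega
  · rintro ⟨⟨hocc, hcov⟩, himp⟩
    refine ⟨hocc, ?_⟩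
    rintro (h | ⟨hocca, h1, h2⟩)
    · exact hcov h
    · rcases himp hocca with h' | h' <;> omega

end Stmt9

namespace Stmt9

open scoped Classical in
/-- allowed old letters, 2dnc class -/
noncomputable def AFd (w : List ℕ) : Finset ℕ :=
  (Finset.range (numBlocks w + 1)).filter (fun b => AllowedD w b)

noncomputable def ED (w : List ℕ) : Finset ℕ := insert (numBlocks w + 1) (AFd w)

open scoped Classical in
noncomputable def keyD (w : List ℕ) (b : ℕ) : ℕ :=
  if Occ w b then lastpos w b else w.length

open scoped Classical in
lemma mem_AFd {w : List ℕ} {b : ℕ} :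
    b ∈ AFd w ↔ b < numBlocks w + 1 ∧ AllowedD w b := by simp [AFd]

lemma mem_ED {w : List ℕ} {b : ℕ} :
    b ∈ ED w ↔ b = numBlocks w + 1 ∨ (b < numBlocks w + 1 ∧ AllowedD w b) := by
  simp [ED, mem_AFd]

lemma top_not_mem_AFd (w : List ℕ) : numBlocks w + 1 ∉ AFd w := by
  intro h; have := (mem_AFd.mp h).1; omega

lemma card_ED (w : List ℕ) : (ED w).card = (AFd w).card + 1 := by
  rw [ED, Finset.card_insert_of_notMem (top_not_mem_AFd w)]

lemma not_occ_top (w : List ℕ) : ¬ Occ w (numBlocks w + 1) := by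
  rintro ⟨i, hi⟩
  obtain ⟨h1, h2⟩ := mem_occSet.mp hi
  have := getD_le_numBlocks w h1
  omega

lemma keyD_top (w : List ℕ) : keyD w (numBlocks w + 1) = w.length := by
  rw [keyD, if_neg (not_occ_top w)]

lemma keyD_occ {w : List ℕ} {b : ℕ} (h : Occ w b) : keyD w b = lastpos w b := by
  rw [keyD, if_pos h]

lemma keyD_inj (w : List ℕ) :
    ∀ x ∈ ED w, ∀ y ∈ ED w, keyD w x = keyD w y → x = y := by
  intro x hx y hy h
  rcases mem_ED.mp hx with rfl | ⟨hx1, hx2, hx3⟩ <;>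
    rcases mem_ED.mp hy with rfl | ⟨hy1, hy2, hy3⟩
  · rfl
  · rw [keyD_top, keyD_occ hy2] at h
    have := lastpos_lt hy2; omega
  · rw [keyD_top, keyD_occ hx2] at h
    have := lastpos_lt hx2; omega
  · rw [keyD_occ hx2, keyD_occ hy2] at h
    exact lastpos_inj hx2 hy2 h

lemma ED_nil : ED [] = {1} := by
  have : AFd [] = ∅ := by
    ext b
    simp only [mem_AFd, Finset.notMem_empty, iff_false]
    rintro ⟨-, ⟨i, hi⟩, -⟩
    have := (mem_occSet.mp hi).1
    simp at this
  rw [ED, this]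
  simp [numBlocks]

lemma occ_iff (w : List ℕ) (hw : IsCanonicalWord w) (b : ℕ) :
    Occ w b ↔ 1 ≤ b ∧ b ≤ numBlocks w := by
  constructor
  · rintro ⟨i, hi⟩
    obtain ⟨h1, h2⟩ := mem_occSet.mp hi
    subst h2
    exact ⟨getD_pos w hw h1, getD_le_numBlocks w h1⟩
  · rintro ⟨h1, h2⟩
    obtain ⟨i, hi, he⟩ := occ_of_le w hw h1 h2
    exact ⟨i, mem_occSet.mpr ⟨hi, he⟩⟩

/-- the last letter of a nonempty word is always allowed -/
lemma last_allowed (w : List ℕ) (hne : 0 < w.length) :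
    AllowedD w (w.getD (w.length - 1) 0) := by
  set l := w.getD (w.length - 1) 0
  have hocc : Occ w l := ⟨w.length - 1, mem_occSet.mpr ⟨by omega, rfl⟩⟩
  have hlp : lastpos w l = w.length - 1 := by
    have h1 := lastpos_lt hocc
    have h2 := le_lastpos (mem_occSet.mpr ⟨show w.length - 1 < w.length by omega,
      rfl (a := l)⟩)
    omega
  refine ⟨hocc, ?_⟩
  rw [hlp]
  rintro ⟨i, j, harc, hip, hpj⟩
  have := arc_lt harc
  omega

lemma lastpos_last (w : List ℕ) (hne : 0 < w.length) :
    lastpos w (w.getD (w.length - 1) 0) = w.length - 1 := by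
  set l := w.getD (w.length - 1) 0
  have hocc : Occ w l := ⟨w.length - 1, mem_occSet.mpr ⟨by omega, rfl⟩⟩
  have h1 := lastpos_lt hocc
  have h2 := le_lastpos (mem_occSet.mpr ⟨show w.length - 1 < w.length by omega,
    rfl (a := l)⟩)
  omega

lemma eq_last_of_lastpos {w : List ℕ} {b : ℕ} (hocc : Occ w b)
    (h : lastpos w b = w.length - 1) : b = w.getD (w.length - 1) 0 := by
  have := getD_lastpos hocc
  rw [h] at this
  exact this.symm

lemma validD_append (w : List ℕ) (a : ℕ) :
    (IsCanonicalWord (w ++ [a]) ∧ Is2DNC (w ++ [a])) ↔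
      ((IsCanonicalWord w ∧ Is2DNC w) ∧ a ∈ ED w) := by
  rw [rgs_append, dnc_append, mem_ED]
  constructor
  · rintro ⟨⟨hw, h1, h2⟩, hd, himp⟩
    refine ⟨⟨hw, hd⟩, ?_⟩
    rcases show a = numBlocks w + 1 ∨ a ≤ numBlocks w by omega with h | h
    · exact Or.inl h
    · have hocc : Occ w a := (occ_iff w hw a).mpr ⟨h1, h⟩
      exact Or.inr ⟨by omega, hocc, himp hocc⟩
  · rintro ⟨⟨hw, hd⟩, ha | ⟨ha1, ha2, ha3⟩⟩
    · subst ha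
      exact ⟨⟨hw, by omega, by omega⟩, hd, fun hocc => absurd hocc (not_occ_top w)⟩
    · have h1 : 1 ≤ a := ((occ_iff w hw a).mp ha2).1
      exact ⟨⟨hw, h1, by omega⟩, hd, fun _ => ha3⟩

lemma keyDcard (w : List ℕ) (hw : IsCanonicalWord w) {a : ℕ} (ha : a ∈ ED w) :
    (ED (w ++ [a])).card =
      fRule (ED w).card ((ED w).filter (fun b => keyD w b < keyD w a)).card := by
  classical
  set M := numBlocks w with hMdef
  have hm' : numBlocks (w ++ [a]) = max M a := numBlocks_append w a
  by_cases hfresh : a = numBlocks w + 1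
  · -- a = M + 1 : fresh letter
    subst hfresh
    set a := M + 1 with hadef
    have hmax : numBlocks (w ++ [a]) = M + 1 := by rw [hm']; omega
    have hAF : AFd (w ++ [a]) = insert (M + 1) (AFd w) := by
      ext b
      simp only [mem_AFd, hmax, Finset.mem_insert]
      constructor
      · rintro ⟨hb, hall⟩
        rcases show b = M + 1 ∨ b < M + 1 by omega with h | h
        · exact Or.inl h
        · right
          have hba : b ≠ M + 1 := by omega
          rw [allowedD_append_ne w hba] at hall
          exact ⟨h, hall.1⟩
      · rintro (rfl | hb)
        · exact ⟨by omega, allowedD_append_self w _⟩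
        · obtain ⟨hb1, hb2⟩ := hb
          refine ⟨by omega, ?_⟩
          rw [allowedD_append_ne w (by omega)]
          refine ⟨hb2, fun hocc => absurd hocc ?_⟩
          rw [hadef]; exact not_occ_top w
    have hrank : (ED w).filter (fun b => keyD w b < keyD w (M + 1)) = AFd w := by
      ext b
      simp only [Finset.mem_filter, keyD_top]
      constructor
      · rintro ⟨hb, hlt⟩
        rcases mem_ED.mp hb with rfl | ⟨h1, h2⟩
        · rw [keyD_top] at hlt; omega
        · exact mem_AFd.mpr ⟨h1, h2⟩
      · intro hb
        obtain ⟨hb1, hb2⟩ := mem_AFd.mp hb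
        refine ⟨Finset.mem_insert_of_mem hb, ?_⟩
        rw [keyD_occ hb2.1]
        rw [keyD_top]; exact lastpos_lt hb2.1
    rw [card_ED, card_ED, hAF, hrank,
      Finset.card_insert_of_notMem (top_not_mem_AFd w)]
    unfold fRule
    rw [if_pos rfl]
  · -- a ≤ M, a ∈ AFd w
    obtain ⟨haM, hocca, hcova⟩ : a < numBlocks w + 1 ∧ Occ w a ∧ ¬ Cov w (lastpos w a) := by
      rcases mem_ED.mp ha with h | ⟨h1, h2, h3⟩
      · exact absurd h hfresh
      · exact ⟨h1, h2, h3⟩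
    have hocc : Occ w a := hocca
    have hlen : 0 < w.length := by
      obtain ⟨i, hi⟩ := hocc; have := (mem_occSet.mp hi).1; omega
    set l := w.getD (w.length - 1) 0 with hldef
    have hlocc : Occ w l := ⟨w.length - 1, mem_occSet.mpr ⟨by omega, rfl⟩⟩
    have hllp : lastpos w l = w.length - 1 := lastpos_last w hlen
    have hlall : AllowedD w l := last_allowed w hlen
    have hl1 : 1 ≤ l := getD_pos w hw (by omega)
    have hlM : l ≤ M := getD_le_numBlocks w (by omega)
    have hlAF : l ∈ AFd w := mem_AFd.mpr ⟨by omega, hlall⟩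
    have haAF : a ∈ AFd w := mem_AFd.mpr ⟨haM, hocca, hcova⟩
    have ha1 : 1 ≤ a := ((occ_iff w hw a).mp hocc).1
    have hmax : numBlocks (w ++ [a]) = M := by
      rw [hm']
      have : a ≤ M := by omega
      omega
    have hlpa := lastpos_lt hocc
    by_cases hal : a = l
    · -- appending the last letter again
      have hAF : AFd (w ++ [a]) = AFd w := by
        ext b
        simp only [mem_AFd, hmax]
        by_cases hba : b = a
        · subst hba
          constructor
          · rintro ⟨h, -⟩; exact ⟨h, hocca, hcova⟩
          · rintro ⟨h, -⟩; exact ⟨h, allowedD_append_self w b⟩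
        · rw [allowedD_append_ne w hba]
          constructor
          · rintro ⟨hb, hall, -⟩; exact ⟨hb, hall⟩
          · rintro ⟨hb, hall⟩
            refine ⟨hb, hall, fun _ => ?_⟩
            left
            have h1 : lastpos w b < w.length := lastpos_lt hall.1
            have h2 : lastpos w b ≠ w.length - 1 := by
              intro h
              exact hba (by rw [eq_last_of_lastpos hall.1 h, ← hldef, hal])
            rw [hal, hllp]
            omega
      have hrank : (ED w).filter (fun b => keyD w b < keyD w a) =
          (AFd w).erase a := by
        ext b
        simp only [Finset.mem_filter, Finset.mem_erase]
        rw [keyD_occ hocc]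
        constructor
        · rintro ⟨hb, hlt⟩
          rcases mem_ED.mp hb with rfl | ⟨h1, h2⟩
          · rw [keyD_top] at hlt
            exfalso; rw [hal, hllp] at hlt; omega
          · rw [keyD_occ h2.1] at hlt
            refine ⟨fun h => ?_, mem_AFd.mpr ⟨h1, h2⟩⟩
            subst h; omega
        · rintro ⟨hne, hb⟩
          obtain ⟨hb1, hb2⟩ := mem_AFd.mp hb
          refine ⟨Finset.mem_insert_of_mem hb, ?_⟩
          rw [keyD_occ hb2.1]
          have h1 : lastpos w b < w.length := lastpos_lt hb2.1
          have h2 : lastpos w b ≠ w.length - 1 := by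
            intro h
            exact hne (by rw [eq_last_of_lastpos hb2.1 h, ← hldef, hal])
          rw [hal, hllp]
          omega
      rw [card_ED, card_ED, hAF, hrank, Finset.card_erase_of_mem haAF]
      have hk : 1 ≤ (AFd w).card := Finset.card_pos.mpr ⟨a, haAF⟩
      unfold fRule
      rw [if_neg (by omega), if_pos (by omega)]
    · -- appending a non-last letter
      have hlpal : lastpos w a < w.length - 1 := by
        have h2 : lastpos w a ≠ w.length - 1 := by
          intro h; exact hal (eq_last_of_lastpos hocc h)
        omega
      set r := ((AFd w).filter (fun b => lastpos w b < lastpos w a)).card with hrdef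
      have hAF : AFd (w ++ [a]) =
          insert a (insert l ((AFd w).filter
            (fun b => lastpos w b < lastpos w a))) := by
        ext b
        simp only [mem_AFd, hmax, Finset.mem_insert, Finset.mem_filter]
        by_cases hba : b = a
        · subst hba; simp only [true_or, iff_true]
          exact ⟨by omega, allowedD_append_self w b⟩
        · rw [allowedD_append_ne w hba]
          by_cases hbl : b = l
          · subst hbl
            simp only [hba, false_or, true_or, iff_true]
            refine ⟨by omega, hlall, fun _ => Or.inr ?_⟩
            rw [hllp]; omega
          · simp only [hba, hbl, false_or]
            constructor
            · rintro ⟨hb, hall, himp⟩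
              rcases himp hocc with h | h
              · exact ⟨⟨hb, hall⟩, h⟩
              · exfalso
                have h1 : lastpos w b < w.length := lastpos_lt hall.1
                have : lastpos w b = w.length - 1 := by omega
                exact hbl (eq_last_of_lastpos hall.1 this)
            · rintro ⟨⟨hb, hall⟩, hlt⟩
              exact ⟨hb, hall, fun _ => Or.inl hlt⟩
      have hanotin : a ∉ insert l ((AFd w).filter
          (fun b => lastpos w b < lastpos w a)) := by
        simp only [Finset.mem_insert, Finset.mem_filter]
        push_neg
        exact ⟨hal, fun h => by omega⟩
      have hlnotin : l ∉ (AFd w).filter (fun b => lastpos w b < lastpos w a) := by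
        simp only [Finset.mem_filter]
        push_neg
        intro h
        rw [hllp]
        omega
      have hrank : (ED w).filter (fun b => keyD w b < keyD w a) =
          (AFd w).filter (fun b => lastpos w b < lastpos w a) := by
        ext b
        simp only [Finset.mem_filter]
        rw [keyD_occ hocc]
        constructor
        · rintro ⟨hb, hlt⟩
          rcases mem_ED.mp hb with rfl | ⟨h1, h2⟩
          · rw [keyD_top] at hlt; omega
          · rw [keyD_occ h2.1] at hlt
            exact ⟨mem_AFd.mpr ⟨h1, h2⟩, hlt⟩
        · rintro ⟨hb, hlt⟩
          obtain ⟨hb1, hb2⟩ := mem_AFd.mp hb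
          exact ⟨Finset.mem_insert_of_mem hb, by rw [keyD_occ hb2.1]; exact hlt⟩
      have hsub : insert a (insert l ((AFd w).filter
          (fun b => lastpos w b < lastpos w a))) ⊆ AFd w := by
        intro x hx
        simp only [Finset.mem_insert, Finset.mem_filter] at hx
        rcases hx with rfl | rfl | ⟨hx, -⟩
        · exact haAF
        · exact hlAF
        · exact hx
      have hbound : r + 2 ≤ (AFd w).card := by
        have := Finset.card_le_card hsub
        rw [Finset.card_insert_of_notMem hanotin,
          Finset.card_insert_of_notMem hlnotin] at this
        omega
      rw [card_ED, card_ED, hAF, hrank, Finset.card_insert_of_notMem hanotin,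
        Finset.card_insert_of_notMem hlnotin, ← hrdef]
      unfold fRule
      rw [if_neg (by omega), if_neg (by omega)]

end Stmt9

namespace Stmt9

lemma validA_append (w : List ℕ) (a : ℕ) :
    (IsCanonicalWord (w ++ [a]) ∧ Avoids12312 (w ++ [a])) ↔
      ((IsCanonicalWord w ∧ Avoids12312 w) ∧ a ∈ EA w) := by
  rw [rgs_append, avoid_append]
  constructor
  · rintro ⟨⟨hw, h1, h2⟩, hav, hnb⟩
    exact ⟨⟨hw, hav⟩, mem_EA.mpr ⟨by omega, h1, hnb⟩⟩
  · rintro ⟨⟨hw, hav⟩, ha⟩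
    obtain ⟨h1, h2, h3⟩ := mem_EA.mp ha
    exact ⟨⟨hw, h2, by omega⟩, hav, h3⟩

lemma rank_card_lt (s : Finset ℕ) (g : ℕ → ℕ) {a : ℕ} (ha : a ∈ s) :
    (s.filter (fun b => g b < g a)).card < s.card := by
  apply Finset.card_lt_card
  rw [Finset.ssubset_iff_of_subset (Finset.filter_subset _ s)]
  exact ⟨a, ha, by simp⟩

lemma rank_bijective (s : Finset ℕ) (g : ℕ → ℕ)
    (hg : ∀ x ∈ s, ∀ y ∈ s, g x = g y → x = y) :
    Function.Bijective (fun a : {x // x ∈ s} =>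
      (⟨(s.filter (fun b => g b < g a.1)).card, rank_card_lt s g a.2⟩ : Fin s.card)) := by
  rw [Fintype.bijective_iff_injective_and_card]
  refine ⟨?_, by simp⟩
  intro a b hab
  simp only [Fin.mk.injEq] at hab
  by_contra hne
  have hne' : a.1 ≠ b.1 := fun h => hne (Subtype.ext h)
  have hgne : g a.1 ≠ g b.1 := fun h => hne' (hg a.1 a.2 b.1 b.2 h)
  rcases lt_or_gt_of_ne hgne with h | h
  · have : (s.filter (fun x => g x < g a.1)).card <
        (s.filter (fun x => g x < g b.1)).card := by
      apply Finset.card_lt_card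
      rw [Finset.ssubset_iff_of_subset (by
        intro x hx
        simp only [Finset.mem_filter] at hx ⊢
        exact ⟨hx.1, by omega⟩)]
      exact ⟨a.1, Finset.mem_filter.mpr ⟨a.2, h⟩, by simp⟩
    omega
  · have : (s.filter (fun x => g x < g b.1)).card <
        (s.filter (fun x => g x < g a.1)).card := by
      apply Finset.card_lt_card
      rw [Finset.ssubset_iff_of_subset (by
        intro x hx
        simp only [Finset.mem_filter] at hx ⊢
        exact ⟨hx.1, by omega⟩)]
      exact ⟨b.1, Finset.mem_filter.mpr ⟨b.2, h⟩, by simp⟩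
    omega

/-- abstract generating-tree data -/
structure GT where
  Valid : List ℕ → Prop
  E : List ℕ → Finset ℕ
  key : List ℕ → ℕ → ℕ
  valid_nil : Valid []
  E_nil : E [] = {1}
  key_inj : ∀ w, ∀ x ∈ E w, ∀ y ∈ E w, key w x = key w y → x = y
  valid_append : ∀ w a, Valid (w ++ [a]) ↔ (Valid w ∧ a ∈ E w)
  card_append : ∀ w a, Valid w → a ∈ E w →
    (E (w ++ [a])).card =
      fRule (E w).card ((E w).filter (fun b => key w b < key w a)).card

def W (G : GT) (n : ℕ) : Type := {w : List ℕ // w.length = n ∧ G.Valid w}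

lemma W_ne_nil {G : GT} {n : ℕ} (w : W G (n + 1)) : w.1 ≠ [] := by
  intro h
  have := w.2.1
  rw [h] at this
  simp at this

lemma W_decomp {G : GT} {n : ℕ} (w : W G (n + 1)) :
    w.1.dropLast ++ [w.1.getLast (W_ne_nil w)] = w.1 :=
  List.dropLast_append_getLast _

lemma W_parts {G : GT} {n : ℕ} (w : W G (n + 1)) :
    G.Valid w.1.dropLast ∧ w.1.getLast (W_ne_nil w) ∈ G.E w.1.dropLast :=
  (G.valid_append _ _).mp (by rw [W_decomp w]; exact w.2.2)

lemma WSigma_ext {G : GT} {n : ℕ} {x y : Σ v : W G n, {a // a ∈ G.E v.1}}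
    (h1 : x.1.1 = y.1.1) (h2 : x.2.1 = y.2.1) : x = y := by
  obtain ⟨⟨v, hv⟩, ⟨a, ha⟩⟩ := x
  obtain ⟨⟨v', hv'⟩, ⟨a', ha'⟩⟩ := y
  dsimp at h1 h2
  subst h1
  subst h2
  rfl

/-- peeling off the last letter -/
def stepEquiv (G : GT) (n : ℕ) :
    W G (n + 1) ≃ Σ v : W G n, {a // a ∈ G.E v.1} where
  toFun w :=
    ⟨⟨w.1.dropLast, by rw [List.length_dropLast, w.2.1]; rfl, (W_parts w).1⟩,
     ⟨w.1.getLast (W_ne_nil w), (W_parts w).2⟩⟩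
  invFun p :=
    ⟨p.1.1 ++ [p.2.1], by simp [p.1.2.1], (G.valid_append _ _).mpr ⟨p.1.2.2, p.2.2⟩⟩
  left_inv w := Subtype.ext (W_decomp w)
  right_inv p := WSigma_ext (List.dropLast_concat) List.getLast_concat

end Stmt9

namespace Stmt9

noncomputable def fiberEquiv (G : GT) (w : List ℕ) :
    {a // a ∈ G.E w} ≃ Fin (G.E w).card :=
  Equiv.ofBijective _ (rank_bijective (G.E w) (G.key w) (G.key_inj w))

noncomputable def stepEquivFin (G : GT) (n : ℕ) :
    W G (n + 1) ≃ Σ v : W G n, Fin (G.E v.1).card :=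
  (stepEquiv G n).trans (Equiv.sigmaCongrRight (fun v => fiberEquiv G v.1))

lemma label_step (G : GT) (n : ℕ) (w : W G (n + 1)) :
    (G.E w.1).card =
      fRule (G.E ((stepEquivFin G n w).1).1).card (((stepEquivFin G n w).2 : ℕ)) := by
  have h1 : (stepEquivFin G n w).1 = (stepEquiv G n w).1 := rfl
  have h2 : ((stepEquivFin G n w).2 : ℕ) =
      ((G.E (stepEquiv G n w).1.1).filter
        (fun b => G.key (stepEquiv G n w).1.1 b <
          G.key (stepEquiv G n w).1.1 (stepEquiv G n w).2.1)).card := rfl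
  rw [h2, h1]
  have hc := G.card_append (w.1.dropLast) (w.1.getLast (W_ne_nil w))
    (W_parts w).1 (W_parts w).2
  calc (G.E w.1).card
      = (G.E (w.1.dropLast ++ [w.1.getLast (W_ne_nil w)])).card := by rw [W_decomp]
    _ = _ := hc

lemma sigmaFin_ext {α : Type*} {g : α → ℕ} {x y : Σ a, Fin (g a)}
    (h1 : x.1 = y.1) (h2 : (x.2 : ℕ) = (y.2 : ℕ)) : x = y := by
  obtain ⟨a, j⟩ := x
  obtain ⟨b, k⟩ := y
  dsimp at h1
  subst h1
  dsimp at h2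
  rw [show j = k from Fin.ext h2]

def midEquiv {G1 G2 : GT} {n : ℕ} (e : W G1 n ≃ W G2 n)
    (he : ∀ v, (G1.E v.1).card = (G2.E (e v).1).card) :
    (Σ v : W G1 n, Fin (G1.E v.1).card) ≃ Σ u : W G2 n, Fin (G2.E u.1).card where
  toFun p := ⟨e p.1, Fin.cast (he p.1) p.2⟩
  invFun q := ⟨e.symm q.1, Fin.cast (by rw [he (e.symm q.1), e.apply_symm_apply]) q.2⟩
  left_inv p := sigmaFin_ext (e.symm_apply_apply p.1) rfl
  right_inv q := sigmaFin_ext (e.apply_symm_apply q.1) rfl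

theorem tree_equiv (G1 G2 : GT) (n : ℕ) :
    ∃ e : W G1 n ≃ W G2 n, ∀ v, (G1.E v.1).card = (G2.E (e v).1).card := by
  induction n with
  | zero =>
    refine ⟨{ toFun := fun _ => ⟨[], rfl, G2.valid_nil⟩,
              invFun := fun _ => ⟨[], rfl, G1.valid_nil⟩,
              left_inv := fun w => Subtype.ext (List.length_eq_zero_iff.mp w.2.1).symm,
              right_inv := fun w => Subtype.ext (List.length_eq_zero_iff.mp w.2.1).symm },
          fun v => ?_⟩
    show (G1.E v.1).card = (G2.E []).card
    rw [List.length_eq_zero_iff.mp v.2.1, G1.E_nil, G2.E_nil]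
  | succ n ih =>
    obtain ⟨e, he⟩ := ih
    refine ⟨(stepEquivFin G1 n).trans ((midEquiv e he).trans
      (stepEquivFin G2 n).symm), fun w => ?_⟩
    have l1 := label_step G1 n w
    have l2 := label_step G2 n
      ((stepEquivFin G2 n).symm ((midEquiv e he) (stepEquivFin G1 n w)))
    rw [(stepEquivFin G2 n).apply_symm_apply] at l2
    have goal_eq : (((stepEquivFin G1 n).trans ((midEquiv e he).trans
        (stepEquivFin G2 n).symm)) w) =
        (stepEquivFin G2 n).symm ((midEquiv e he) (stepEquivFin G1 n w)) := rfl
    rw [goal_eq, l2, l1]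
    have hfst : ((midEquiv e he) (stepEquivFin G1 n w)).1 =
        e (stepEquivFin G1 n w).1 := rfl
    have hsnd : (((midEquiv e he) (stepEquivFin G1 n w)).2 : ℕ) =
        ((stepEquivFin G1 n w).2 : ℕ) := rfl
    rw [hsnd, hfst]
    generalize ((stepEquivFin G1 n w).2 : ℕ) = k
    rw [he (stepEquivFin G1 n w).1]

noncomputable def GTA : GT where
  Valid w := IsCanonicalWord w ∧ Avoids12312 w
  E := EA
  key _ b := b
  valid_nil := ⟨rgs_nil, avoid_nil⟩
  E_nil := EA_nil
  key_inj := fun _ _ _ _ _ h => h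
  valid_append := validA_append
  card_append := fun w a hv ha => keyA w hv.1 ha

noncomputable def GTD : GT where
  Valid w := IsCanonicalWord w ∧ Is2DNC w
  E := ED
  key := keyD
  valid_nil := ⟨rgs_nil, dnc_nil⟩
  E_nil := ED_nil
  key_inj := keyD_inj
  valid_append := validD_append
  card_append := fun w a hv ha => keyDcard w hv.1 ha

end Stmt9


/-- For every integer `n ≥ 0`, the number of 2-distant noncrossing partitions of `[n]`
equals the number of 12312-avoiding partitions of `[n]` (partitions being encoded by
their canonical words). -/
theorem stmt9 (n : ℕ) :
    Nat.card {w : List ℕ // w.length = n ∧ IsCanonicalWord w ∧ Is2DNC w} =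
    Nat.card {w : List ℕ // w.length = n ∧ IsCanonicalWord w ∧ Avoids12312 w} := by
  obtain ⟨e, -⟩ := Stmt9.tree_equiv Stmt9.GTD Stmt9.GTA n
  exact Nat.card_congr e
end

section
/- For every integer n ≥ 2, the number of 12312-avoiding partitions of [n] equals 1 plus the sum over i = 2, …, n of the number of 12312-avoiding partitions of [i] in which 1 and 2 lie in different blocks. -/
lemma prefMax_succ (w : List ℕ) (i : ℕ) :
    prefMax w (i+1) = max (prefMax w i) (w.getD i 0) := by
  induction w generalizing i with
  | nil => simp [prefMax]
  | cons a t ih =>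
    cases i with
    | zero => simp [prefMax]
    | succ j =>
      have := ih j
      simp only [prefMax, List.take_succ_cons, List.foldr_cons, List.getD_cons_succ] at *
      rw [this]
      simp [Nat.max_assoc]

lemma prefMax_le (w : List ℕ) (h : IsCanonicalWord w) : ∀ i, prefMax w i ≤ i := by
  intro i
  induction i with
  | zero => simp [prefMax]
  | succ j ih =>
    rw [prefMax_succ]
    rcases lt_or_ge j w.length with hj | hj
    · exact max_le (ih.trans (Nat.le_succ j)) ((h j hj).2.trans (by omega))
    · rw [List.getD_eq_default _ _ hj]; omega

lemma getD_le (w : List ℕ) (h : IsCanonicalWord w) (i : ℕ) : w.getD i 0 ≤ w.length := by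
  rcases lt_or_ge i w.length with hj | hj
  · exact (h i hj).2.trans (by have := prefMax_le w h i; omega)
  · rw [List.getD_eq_default _ _ hj]; omega

lemma finite_aux (n : ℕ) : {w : List ℕ | w.length = n ∧ IsCanonicalWord w}.Finite := by
  rw [Set.finite_coe_iff.symm]
  refine Finite.of_injective (fun w : {w : List ℕ | w.length = n ∧ IsCanonicalWord w} =>
    (fun j : Fin n => (⟨(w : List ℕ).getD j 0, by
      have := getD_le w w.2.2 j
      have := w.2.1
      omega⟩ : Fin (n+1)))) ?_
  rintro ⟨w1, h1, c1⟩ ⟨w2, h2, c2⟩ h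
  simp only [Subtype.mk.injEq]
  apply List.ext_getElem (by omega)
  intro i hi1 hi2
  have := congrFun h ⟨i, by omega⟩
  simp only [Fin.mk.injEq] at this
  rwa [List.getD_eq_getElem _ _ hi1, List.getD_eq_getElem _ _ hi2] at this

lemma getD_shift (u : List ℕ) (j : ℕ) :
    (1::1::u).getD (j+1) 0 = (1::u).getD j 0 := by
  cases j <;> simp

lemma prefMax_shift (u : List ℕ) (j : ℕ) :
    prefMax (1::1::u) (j+2) = prefMax (1::u) (j+1) := by
  induction j with
  | zero => simp [prefMax]
  | succ k ih =>
    rw [show k+1+2 = (k+2)+1 by rfl, prefMax_succ, ih, getD_shift, ← prefMax_succ]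

lemma canon_cc (u : List ℕ) : IsCanonicalWord (1::1::u) ↔ IsCanonicalWord (1::u) := by
  constructor
  · intro h i hi
    cases i with
    | zero => simp [prefMax]
    | succ j =>
      have := h (j+2) (by simpa using hi)
      rwa [getD_shift, prefMax_shift] at this
  · intro h i hi
    match i with
    | 0 => simp [prefMax]
    | 1 => simp [prefMax]
    | (j+2) =>
      have := h (j+1) (by simpa using hi)
      rwa [getD_shift, prefMax_shift]

lemma avoid_cc (u : List ℕ) : Avoids12312 (1::1::u) ↔ Avoids12312 (1::u) := by
  constructor
  · intro h h'
    apply h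
    obtain ⟨i1, i2, i3, i4, i5, h12, h23, h34, h45, h5, e14, e25, l12, l23⟩ := h'
    exact ⟨i1+1, i2+1, i3+1, i4+1, i5+1, by omega, by omega, by omega, by omega,
      by simp at h5 ⊢; omega,
      by rw [getD_shift, getD_shift]; exact e14,
      by rw [getD_shift, getD_shift]; exact e25,
      by rw [getD_shift, getD_shift]; exact l12,
      by rw [getD_shift, getD_shift]; exact l23⟩
  · intro h h'
    apply h
    obtain ⟨i1, i2, i3, i4, i5, h12, h23, h34, h45, h5, e14, e25, l12, l23⟩ := h'
    have hi2 : 2 ≤ i2 := by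
      by_contra hc
      push_neg at hc
      interval_cases i2
      · omega
      · have hi1 : i1 = 0 := by omega
        subst hi1
        simp at l12
    have key : ∀ k, 1 ≤ k → (1::u).getD (k-1) 0 = (1::1::u).getD k 0 := by
      intro k hk
      obtain ⟨m, rfl⟩ := Nat.exists_eq_add_of_le hk
      rw [show 1+m-1 = m by omega, ← getD_shift, show m+1 = 1+m by omega]
    have v1 : (1::u).getD (i1-1) 0 = (1::1::u).getD i1 0 := by
      rcases Nat.eq_zero_or_pos i1 with h0 | h0
      · subst h0; simp
      · exact key i1 h0
    refine ⟨i1-1, i2-1, i3-1, i4-1, i5-1, by omega, by omega, by omega, by omega,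
      by simp at h5 ⊢; omega, ?_, ?_, ?_, ?_⟩
    · rw [v1, key i4 (by omega)]; exact e14
    · rw [key i2 (by omega), key i5 (by omega)]; exact e25
    · rw [v1, key i2 (by omega)]; exact l12
    · rw [key i2 (by omega), key i3 (by omega)]; exact l23

/-- The set of 12312-avoiding canonical words of length `n`. -/
def Sset (n : ℕ) : Set (List ℕ) :=
  {w | w.length = n ∧ IsCanonicalWord w ∧ Avoids12312 w}

/-- Those where additionally 1 and 2 lie in different blocks. -/
def Tset (n : ℕ) : Set (List ℕ) :=
  {w | w.length = n ∧ IsCanonicalWord w ∧ Avoids12312 w ∧ w.getD 0 0 ≠ w.getD 1 0}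

lemma head_one (w : List ℕ) (h : IsCanonicalWord w) (hl : 0 < w.length) :
    w.getD 0 0 = 1 := by
  have := h 0 hl
  have : prefMax w 0 = 0 := rfl
  omega

lemma Sfin (n : ℕ) : (Sset n).Finite :=
  (finite_aux n).subset (fun _ hw => ⟨hw.1, hw.2.1⟩)

lemma Tfin (n : ℕ) : (Tset n).Finite :=
  (finite_aux n).subset (fun _ hw => ⟨hw.1, hw.2.1⟩)

lemma key_step (n : ℕ) (hn : 2 ≤ n) :
    (Sset (n+1)).ncard = (Sset n).ncard + (Tset (n+1)).ncard := by
  set A : Set (List ℕ) := {w ∈ Sset (n+1) | w.getD 0 0 = w.getD 1 0} with hA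
  have hAfin : A.Finite := (Sfin (n+1)).subset (fun w hw => hw.1)
  have hsplit : Sset (n+1) = A ∪ Tset (n+1) := by
    ext w
    simp only [Sset, Tset, hA, Set.mem_setOf_eq, Set.mem_union, Set.mem_sep_iff]
    constructor
    · intro hw
      rcases eq_or_ne (w.getD 0 0) (w.getD 1 0) with h | h
      · exact Or.inl ⟨hw, h⟩
      · exact Or.inr ⟨hw.1, hw.2.1, hw.2.2, h⟩
    · rintro (⟨hw, _⟩ | ⟨h1, h2, h3, _⟩)
      · exact hw
      · exact ⟨h1, h2, h3⟩
  have hdisj : Disjoint A (Tset (n+1)) := by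
    rw [Set.disjoint_left]
    rintro w ⟨_, he⟩ ht
    exact ht.2.2.2 he
  have hform : ∀ w ∈ A, ∃ u : List ℕ, w = 1 :: 1 :: u := by
    rintro w ⟨⟨hl, hc, _⟩, he⟩
    match w with
    | [] => simp at hl
    | [a] => simp at hl; omega
    | a :: b :: u =>
      have ha : a = 1 := head_one _ hc (by simp)
      have hb : b = 1 := by
        have : (a :: b :: u).getD 1 0 = b := rfl
        have : (a :: b :: u).getD 0 0 = a := rfl
        omega
      exact ⟨u, by rw [ha, hb]⟩
  have himg : Sset n = List.tail '' A := by
    ext v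
    constructor
    · intro hv
      obtain ⟨hl, hc, ha⟩ := hv
      match v with
      | [] => simp at hl; omega
      | c :: u =>
        have hc1 : c = 1 := head_one _ hc (by simp)
        subst hc1
        refine ⟨1 :: 1 :: u, ⟨⟨by simpa using hl, (canon_cc u).mpr hc,
          (avoid_cc u).mpr ha⟩, rfl⟩, rfl⟩
    · rintro ⟨w, hw, rfl⟩
      obtain ⟨u, rfl⟩ := hform w hw
      obtain ⟨⟨hl, hc, ha⟩, _⟩ := hw
      exact ⟨by simpa using hl, (canon_cc u).mp hc, (avoid_cc u).mp ha⟩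
  have hinj : Set.InjOn List.tail A := by
    intro w1 h1 w2 h2 he
    obtain ⟨u1, rfl⟩ := hform w1 h1
    obtain ⟨u2, rfl⟩ := hform w2 h2
    simp at he
    rw [he]
  rw [hsplit, Set.ncard_union_eq hdisj hAfin (Tfin (n+1)), himg,
    Set.ncard_image_of_injOn hinj]

lemma S2 : Sset 2 = {[1,1], [1,2]} := by
  ext w
  constructor
  · rintro ⟨hl, hc, _⟩
    match w with
    | [a, b] =>
      have ha : a = 1 := head_one _ hc (by simp)
      have hb := hc 1 (by simp)
      have hpm : prefMax [a, b] 1 = a := by simp [prefMax]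
      have hgd : ([a,b] : List ℕ).getD 1 0 = b := rfl
      rw [hgd, hpm, ha] at hb
      subst ha
      rcases (by omega : b = 1 ∨ b = 2) with rfl | rfl
      · exact Or.inl rfl
      · exact Or.inr rfl
  · intro hw
    have hav : ∀ v : List ℕ, v.length = 2 → Avoids12312 v := by
      rintro v hl ⟨i1, i2, i3, i4, i5, h⟩
      rw [hl] at h
      omega
    have hc1 : IsCanonicalWord [1,1] := by
      intro i hi; simp only [List.length] at hi
      interval_cases i <;> simp [prefMax]
    have hc2 : IsCanonicalWord [1,2] := by
      intro i hi; simp only [List.length] at hi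
      interval_cases i <;> simp [prefMax]
    rcases hw with rfl | rfl
    · exact ⟨rfl, hc1, hav _ rfl⟩
    · exact ⟨rfl, hc2, hav _ rfl⟩

lemma T2 : Tset 2 = {[1,2]} := by
  ext w
  constructor
  · rintro ⟨hl, hc, ha, hne⟩
    have : w ∈ Sset 2 := ⟨hl, hc, ha⟩
    rw [S2] at this
    rcases this with rfl | rfl
    · simp at hne
    · rfl
  · rintro rfl
    have : ([1,2] : List ℕ) ∈ Sset 2 := by rw [S2]; exact Or.inr rfl
    exact ⟨this.1, this.2.1, this.2.2, by simp⟩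

/-- For every integer `n ≥ 2`, the number of 12312-avoiding partitions of `[n]` equals
`1` plus the sum over `i = 2, …, n` of the number of 12312-avoiding partitions of `[i]`
in which `1` and `2` lie in different blocks. -/
theorem stmt15 (n : ℕ) (hn : 2 ≤ n) :
    Nat.card {w : List ℕ // w.length = n ∧ IsCanonicalWord w ∧ Avoids12312 w} =
    1 + ∑ i ∈ Finset.Icc 2 n,
      Nat.card {w : List ℕ // w.length = i ∧ IsCanonicalWord w ∧ Avoids12312 w ∧
        w.getD 0 0 ≠ w.getD 1 0} := by
  have hS : ∀ m : ℕ,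
      Nat.card {w : List ℕ // w.length = m ∧ IsCanonicalWord w ∧ Avoids12312 w} =
      (Sset m).ncard := fun m => Nat.card_coe_set_eq (Sset m)
  have hT : ∀ m : ℕ,
      Nat.card {w : List ℕ // w.length = m ∧ IsCanonicalWord w ∧ Avoids12312 w ∧
        w.getD 0 0 ≠ w.getD 1 0} = (Tset m).ncard := fun m => Nat.card_coe_set_eq (Tset m)
  simp only [hS, hT]
  induction n, hn using Nat.le_induction with
  | base =>
    rw [Finset.Icc_self, Finset.sum_singleton, S2, T2, Set.ncard_pair (by simp),
      Set.ncard_singleton]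
  | succ n hn ih =>
    rw [Finset.sum_Icc_succ_top (by omega), key_step n hn, ih]
    omega
end

section
/- Let a(n,m) be the number of 3-Motzkin paths of length n with exactly m steps H₂, and let b(n,m) be the number of 3-Motzkin paths of length n with exactly m steps H₂ of positive height. Let A = ∑_{n,m≥0} a(n,m) xⁿ yᵐ and B = ∑_{n,m≥0} b(n,m) xⁿ yᵐ, formal power series in two commuting variables x, y over ℚ. Then B = 1 + 3·x·B + x²·B·A. -/
/-- Steps of a 3-Motzkin path: `U = (1,1)`, `D = (1,-1)` and three
labeled horizontal steps `H0, H1, H2` (each equal to `(1,0)`). -/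
inductive MStep : Type
  | U : MStep
  | D : MStep
  | H0 : MStep
  | H1 : MStep
  | H2 : MStep
  deriving DecidableEq

/-- The contribution of a step to the y-coordinate. -/
def MStep.eff : MStep → ℤ
  | U => 1
  | D => -1
  | H0 => 0
  | H1 => 0
  | H2 => 0

/-- The height (y-coordinate of the starting point) of the `i`-th step (0-indexed). -/
def mHeight (L : List MStep) (i : ℕ) : ℤ := ((L.take i).map MStep.eff).sum

/-- `L` is a 3-Motzkin path of length `n`: it has `n` steps, ends at height `0`,
and never goes below the x-axis. -/
def IsMotzkin3 (L : List MStep) (n : ℕ) : Prop :=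
  L.length = n ∧ (L.map MStep.eff).sum = 0 ∧ ∀ i, 0 ≤ mHeight L i

/-- The number of `H2` steps of `L` of positive height. -/
def posH2Steps (L : List MStep) : ℕ :=
  ((Finset.range L.length).filter
    (fun i => L[i]? = some MStep.H2 ∧ 0 < mHeight L i)).card

namespace MW

/-- total effect -/
def sE (L : List MStep) : ℤ := (L.map MStep.eff).sum

@[simp] lemma sE_nil : sE [] = 0 := rfl
@[simp] lemma sE_cons (s : MStep) (L : List MStep) : sE (s :: L) = s.eff + sE L := by
  simp [sE]
@[simp] lemma sE_append (P Q : List MStep) : sE (P ++ Q) = sE P + sE Q := by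
  simp [sE]

@[simp] lemma mHeight_zero (L : List MStep) : mHeight L 0 = 0 := rfl
@[simp] lemma mHeight_nil (i : ℕ) : mHeight [] i = 0 := by simp [mHeight]
@[simp] lemma mHeight_cons (s : MStep) (L : List MStep) (i : ℕ) :
    mHeight (s :: L) (i + 1) = s.eff + mHeight L i := by
  simp [mHeight]

lemma mHeight_of_le (L : List MStep) {i : ℕ} (h : L.length ≤ i) : mHeight L i = sE L := by
  simp [mHeight, sE, List.take_of_length_le h]

lemma mHeight_append_left (P Q : List MStep) {i : ℕ} (h : i ≤ P.length) :
    mHeight (P ++ Q) i = mHeight P i := by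
  simp [mHeight, List.take_append, Nat.sub_eq_zero_of_le h]

lemma mHeight_append_right (P Q : List MStep) (i : ℕ) :
    mHeight (P ++ Q) (P.length + i) = sE P + mHeight Q i := by
  have h1 : (P ++ Q).take (P.length + i) = P ++ Q.take i := by
    rw [List.take_append, List.take_of_length_le (Nat.le_add_right _ _)]
    congr 2
    omega
  rw [mHeight, h1, List.map_append, List.sum_append]
  rfl

lemma mHeight_take (L : List MStep) (k i : ℕ) :
    mHeight (L.take k) i = mHeight L (min i k) := by
  simp [mHeight, List.take_take]

lemma mHeight_drop (L : List MStep) (k i : ℕ) :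
    mHeight (L.drop k) i = mHeight L (k + i) - mHeight L k := by
  have : L.take (k + i) = L.take k ++ (L.drop k).take i := by
    rw [List.take_add]
  simp [mHeight, this]

lemma mHeight_succ (L : List MStep) (i : ℕ) (h : i < L.length) :
    mHeight L (i + 1) = mHeight L i + (L[i]).eff := by
  have : L.take (i + 1) = L.take i ++ [L[i]] := by
    rw [List.take_succ]; simp [List.getElem?_eq_getElem h]
  rw [mHeight, this, List.map_append, List.sum_append]
  simp [mHeight]

/-- heights-nonneg with offset -/
def ok (h : ℤ) (L : List MStep) : Prop := ∀ i, 0 ≤ h + mHeight L i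

lemma ok.nonneg {h : ℤ} {L : List MStep} (H : ok h L) : 0 ≤ h := by
  simpa using H 0

@[simp] lemma ok_nil {h : ℤ} : ok h [] ↔ 0 ≤ h := by
  constructor
  · exact fun H => H.nonneg
  · intro H i; simp only [mHeight_nil, add_zero]; exact H

@[simp] lemma ok_cons {h : ℤ} {s : MStep} {L : List MStep} :
    ok h (s :: L) ↔ 0 ≤ h ∧ ok (h + s.eff) L := by
  constructor
  · intro H
    refine ⟨H.nonneg, fun i => ?_⟩
    have := H (i + 1); simpa [add_assoc] using this
  · rintro ⟨h0, H⟩ i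
    cases i with
    | zero => simpa using h0
    | succ j => have := H j; simpa [add_assoc] using this

lemma ok_append {h : ℤ} {P Q : List MStep} :
    ok h (P ++ Q) ↔ ok h P ∧ ok (h + sE P) Q := by
  constructor
  · intro H
    constructor
    · intro i
      rcases le_or_gt i P.length with hi | hi
      · have := H i; rwa [mHeight_append_left P Q hi] at this
      · rw [mHeight_of_le P hi.le]
        have := H P.length
        rwa [mHeight_append_left P Q le_rfl, mHeight_of_le P le_rfl] at this
    · intro i
      have := H (P.length + i); rwa [mHeight_append_right, ← add_assoc] at this
  · rintro ⟨H1, H2⟩ i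
    rcases le_or_gt i P.length with hi | hi
    · rw [mHeight_append_left P Q hi]; exact H1 i
    · obtain ⟨j, rfl⟩ := Nat.exists_eq_add_of_le hi.le
      rw [mHeight_append_right, ← add_assoc]; exact H2 j

lemma isMotzkin_iff {L : List MStep} {n : ℕ} :
    IsMotzkin3 L n ↔ L.length = n ∧ sE L = 0 ∧ ok 0 L := by
  unfold IsMotzkin3 ok sE
  simp


/-- number of `H2` steps whose height (starting from offset `h`) is positive -/
def cnt (h : ℤ) : List MStep → ℕ
  | [] => 0
  | s :: L => (if s = MStep.H2 ∧ 0 < h then 1 else 0) + cnt (h + s.eff) L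

@[simp] lemma cnt_nil (h : ℤ) : cnt h [] = 0 := rfl
lemma cnt_cons (h : ℤ) (s : MStep) (L : List MStep) :
    cnt h (s :: L) = (if s = MStep.H2 ∧ 0 < h then 1 else 0) + cnt (h + s.eff) L := rfl

lemma cnt_append (h : ℤ) (P Q : List MStep) :
    cnt h (P ++ Q) = cnt h P + cnt (h + sE P) Q := by
  induction P generalizing h with
  | nil => simp
  | cons s P ih => simp [cnt_cons, ih, add_assoc]

lemma filter_card_eq_cnt (L : List MStep) (h : ℤ) :
    ((Finset.range L.length).filter
      (fun i => L[i]? = some MStep.H2 ∧ 0 < h + mHeight L i)).card = cnt h L := by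
  induction L generalizing h with
  | nil => simp
  | cons s L ih =>
    rw [Finset.card_filter, List.length_cons, Finset.sum_range_succ']
    have ih' := ih (h + s.eff)
    rw [Finset.card_filter] at ih'
    simp only [List.getElem?_cons_succ, List.getElem?_cons_zero, mHeight_cons, mHeight_zero,
      add_zero, cnt_cons, ← add_assoc]
    rw [add_comm, ih']
    simp

lemma posH2Steps_eq_cnt (L : List MStep) : posH2Steps L = cnt 0 L := by
  rw [posH2Steps, ← filter_card_eq_cnt L 0]
  congr 1
  ext i
  simp

lemma cnt_eq_count {L : List MStep} {h : ℤ}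
    (H : ∀ i, i < L.length → 0 < h + mHeight L i) : cnt h L = L.count MStep.H2 := by
  induction L generalizing h with
  | nil => simp
  | cons s L ih =>
    have h0 : 0 < h := by simpa using H 0 (Nat.succ_pos _)
    rw [cnt_cons, ih (fun i hi => by simpa [add_assoc] using H (i+1) (by simpa using hi)),
      List.count_cons]
    by_cases hs : s = MStep.H2 <;> simp [hs, h0, add_comm]


lemma eff_eq_neg_one {s : MStep} (h : s.eff = -1) : s = MStep.D := by
  cases s <;> simp_all [MStep.eff]

lemma sE_take (L : List MStep) (k : ℕ) : sE (L.take k) = mHeight L k := rfl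

lemma sE_drop (L : List MStep) (k : ℕ) :
    sE (L.drop k) = sE L - mHeight L k := by
  have h := mHeight_drop L k L.length
  rw [mHeight_of_le (L.drop k) (by simp), mHeight_of_le L (by omega)] at h
  omega

/-- first-return split existence -/
lemma split_exists {T : List MStep} (hsum : sE T = -1) (hok : ok 1 T) :
    ∃ P Q, T = P ++ MStep.D :: Q ∧ sE P = 0 ∧ ok 0 P ∧ sE Q = 0 ∧ ok 0 Q := by
  have hlen : 1 ≤ T.length := by
    by_contra h
    have : T = [] := List.eq_nil_of_length_eq_zero (by omega)
    rw [this] at hsum; simp at hsum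
  have hex : ∃ k, mHeight T (k + 1) = -1 := by
    refine ⟨T.length - 1, ?_⟩
    rw [show T.length - 1 + 1 = T.length by omega, mHeight_of_le T le_rfl]
    exact hsum
  classical
  set k := Nat.find hex with hk
  have hkspec : mHeight T (k + 1) = -1 := Nat.find_spec hex
  have hmin : ∀ j, j < k → mHeight T (j + 1) ≠ -1 := fun j hj => Nat.find_min hex hj
  have hnn : ∀ j, j ≤ k → 0 ≤ mHeight T j := by
    intro j hj
    cases j with
    | zero => simp
    | succ i =>
      have h1 : mHeight T (i + 1) ≠ -1 := hmin i (by omega)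
      have h2 : 0 ≤ 1 + mHeight T (i + 1) := hok (i + 1)
      omega
  have hklen : k < T.length := by
    have : k ≤ T.length - 1 := Nat.find_min' hex (by
      rw [show T.length - 1 + 1 = T.length by omega, mHeight_of_le T le_rfl]; exact hsum)
    omega
  have hstep : mHeight T (k + 1) = mHeight T k + (T[k]).eff := mHeight_succ T k hklen
  have hknn : 0 ≤ mHeight T k := hnn k le_rfl
  have heffle : (T[k]).eff ≥ -1 := by cases T[k] <;> simp [MStep.eff]
  have heff : (T[k]).eff = -1 ∧ mHeight T k = 0 := by omega
  have hD : T[k] = MStep.D := eff_eq_neg_one heff.1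
  refine ⟨T.take k, T.drop (k + 1), ?_, ?_, ?_, ?_, ?_⟩
  · conv_lhs => rw [← List.take_append_drop k T]
    rw [List.drop_eq_getElem_cons hklen, hD]
  · rw [sE_take]; exact heff.2
  · intro i
    rw [mHeight_take]
    have := hnn (min i k) (min_le_right _ _)
    omega
  · rw [sE_drop, hkspec]; omega
  · intro i
    rw [mHeight_drop, hkspec]
    have := hok (k + 1 + i)
    omega

/-- first-return split uniqueness -/
lemma split_unique {P Q P' Q' : List MStep}
    (heq : P ++ MStep.D :: Q = P' ++ MStep.D :: Q')
    (hP : sE P = 0) (hP0 : ok 0 P) (hP' : sE P' = 0) (hP0' : ok 0 P') :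
    P = P' ∧ Q = Q' := by
  have key : ∀ (P Q P' Q' : List MStep), P ++ MStep.D :: Q = P' ++ MStep.D :: Q' →
      sE P = 0 → sE P' = 0 → ok 0 P' → P.length < P'.length → False := by
    intro P Q P' Q' heq hP hP' hok hlt
    have htake : P = P'.take P.length := by
      have h1 : (P ++ MStep.D :: Q).take P.length = P := by simp
      have h2 : (P' ++ MStep.D :: Q').take P.length = P'.take P.length := by
        rw [List.take_append, Nat.sub_eq_zero_of_le hlt.le]
        simp
      rw [heq] at h1
      exact h1.symm.trans h2
    have hidx : P'[P.length]'hlt = MStep.D := by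
      have h1 : (P ++ MStep.D :: Q)[P.length]'(by simp) = MStep.D := by
        rw [List.getElem_append_right le_rfl]
        simp
      have h2 : (P' ++ MStep.D :: Q')[P.length]'(by simp; omega) = P'[P.length]'hlt :=
        List.getElem_append_left hlt
      have h4 : (P ++ MStep.D :: Q)[P.length]? = (P' ++ MStep.D :: Q')[P.length]? := by
        rw [heq]
      rw [List.getElem?_eq_getElem (by simp), List.getElem?_eq_getElem (by simp; omega), h1, h2]
        at h4
      exact (Option.some_inj.mp h4).symm
    have hmh : mHeight P' P.length = 0 := by
      rw [← sE_take, ← htake, hP]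
    have : mHeight P' (P.length + 1) = -1 := by
      rw [mHeight_succ P' P.length hlt, hmh, hidx]; rfl
    have := hok (P.length + 1)
    omega
  have hlen : P.length = P'.length := by
    rcases lt_trichotomy P.length P'.length with h | h | h
    · exact absurd (key P Q P' Q' heq hP hP' hP0' h) (fun x => x)
    · exact h
    · exact absurd (key P' Q' P Q heq.symm hP' hP hP0 h) (fun x => x)
  obtain ⟨h1, h2⟩ := List.append_inj heq hlen
  exact ⟨h1, by injection h2⟩

lemma ok_mono {h h' : ℤ} (hle : h ≤ h') {L : List MStep} (H : ok h L) : ok h' L :=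
  fun i => le_trans (H i) (by linarith [H i])

lemma comp_motzkin {P Q : List MStep} {k l : ℕ}
    (hP : IsMotzkin3 P k) (hQ : IsMotzkin3 Q l) :
    IsMotzkin3 (MStep.U :: P ++ MStep.D :: Q) (k + l + 2) := by
  rw [isMotzkin_iff] at hP hQ ⊢
  obtain ⟨hPl, hPs, hPo⟩ := hP
  obtain ⟨hQl, hQs, hQo⟩ := hQ
  refine ⟨by simp only [List.length_cons, List.length_append]; omega, by simp [hPs, hQs, MStep.eff], ?_⟩
  rw [show (MStep.U :: P ++ MStep.D :: Q) = MStep.U :: (P ++ MStep.D :: Q) by simp]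
  rw [ok_cons, ok_append, ok_cons]
  refine ⟨le_rfl, ok_mono (by norm_num [MStep.eff]) hPo, ?_, ?_⟩
  · rw [hPs]; norm_num [MStep.eff]
  · rw [hPs]
    have h : (0 : ℤ) + MStep.U.eff + 0 + MStep.D.eff = 0 := by norm_num [MStep.eff]
    rw [h]
    exact hQo

lemma comp_count {P Q : List MStep} (hPo : ok 0 P) (hPs : sE P = 0) :
    posH2Steps (MStep.U :: P ++ MStep.D :: Q) = P.count MStep.H2 + posH2Steps Q := by
  rw [posH2Steps_eq_cnt, posH2Steps_eq_cnt]
  rw [show (MStep.U :: P ++ MStep.D :: Q) = MStep.U :: (P ++ MStep.D :: Q) by simp]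
  rw [cnt_cons, cnt_append, cnt_cons]
  have h1 : cnt (0 + MStep.U.eff) P = P.count MStep.H2 := by
    apply cnt_eq_count
    intro i _
    have := hPo i
    simp only [MStep.eff]
    omega
  simp only [MStep.eff] at h1 ⊢
  rw [h1, hPs]
  simp [MStep.eff]


abbrev aS (n m : ℕ) : Type := {L : List MStep // IsMotzkin3 L n ∧ L.count MStep.H2 = m}
abbrev bS (n m : ℕ) : Type := {L : List MStep // IsMotzkin3 L n ∧ posH2Steps L = m}
abbrev uS (n m : ℕ) : Type :=
  {L : List MStep // (IsMotzkin3 L n ∧ posH2Steps L = m) ∧ L.head? = some MStep.U}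

instance : Fintype MStep :=
  ⟨⟨{MStep.U, MStep.D, MStep.H0, MStep.H1, MStep.H2}, by decide⟩, fun x => by cases x <;> decide⟩

lemma finite_subtype {p : List MStep → Prop} {n : ℕ} (hp : ∀ L, p L → L.length = n) :
    Finite {L : List MStep // p L} := by
  have h : {L : List MStep | p L} ⊆ {L : List MStep | L.length = n} := fun L hL => hp L hL
  exact ((List.finite_length_eq MStep n).subset h).to_subtype

instance (n m : ℕ) : Finite (aS n m) := finite_subtype (fun L hL => hL.1.1)
instance (n m : ℕ) : Finite (bS n m) := finite_subtype (fun L hL => hL.1.1)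
instance (n m : ℕ) : Finite (uS n m) := finite_subtype (fun L hL => hL.1.1.1)

lemma ncard_sigma {ι : Type*} [Fintype ι] (f : ι → Type*) [∀ i, Finite (f i)] :
    Nat.card (Σ i, f i) = ∑ i, Nat.card (f i) := by
  letI := fun i => Fintype.ofFinite (f i)
  simp [Nat.card_eq_fintype_card, Fintype.card_sigma]

def hstep : Fin 3 → MStep := ![MStep.H0, MStep.H1, MStep.H2]

lemma hstep_eff (j : Fin 3) : (hstep j).eff = 0 := by fin_cases j <;> rfl
lemma hstep_ne_U (j : Fin 3) : hstep j ≠ MStep.U := by fin_cases j <;> decide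
lemma hstep_ne_D (j : Fin 3) : hstep j ≠ MStep.D := by fin_cases j <;> decide
lemma hstep_inj : Function.Injective hstep := by decide

lemma posH2_cons_hstep (j : Fin 3) (T : List MStep) :
    posH2Steps (hstep j :: T) = posH2Steps T := by
  rw [posH2Steps_eq_cnt, posH2Steps_eq_cnt, cnt_cons, hstep_eff]
  simp

lemma motzkin_cons_hstep {T : List MStep} {n : ℕ} (j : Fin 3) :
    IsMotzkin3 (hstep j :: T) (n + 1) ↔ IsMotzkin3 T n := by
  rw [isMotzkin_iff, isMotzkin_iff, sE_cons, hstep_eff, ok_cons, hstep_eff]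
  simp

lemma hstep0 : hstep 0 = MStep.H0 := rfl
lemma hstep1 : hstep 1 = MStep.H1 := rfl
lemma hstep2 : hstep 2 = MStep.H2 := rfl

lemma card_bS_rec1 (n m : ℕ) :
    Nat.card (bS (n + 1) m) = 3 * Nat.card (bS n m) + Nat.card (uS (n + 1) m) := by
  have key : Nat.card ((Fin 3 × bS n m) ⊕ uS (n + 1) m) = Nat.card (bS (n + 1) m) := by
    apply Nat.card_eq_of_bijective
      (Sum.elim
        (fun x => ⟨hstep x.1 :: x.2.1, (motzkin_cons_hstep x.1).mpr x.2.2.1,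
          by rw [posH2_cons_hstep]; exact x.2.2.2⟩)
        (fun x => ⟨x.1, x.2.1⟩) : _ → bS (n + 1) m)
    constructor
    · rintro (⟨j, T, hT⟩ | ⟨L, hL⟩) (⟨j', T', hT'⟩ | ⟨L', hL'⟩) h <;>
        have hv := congrArg Subtype.val h <;>
        simp only [Sum.elim_inl, Sum.elim_inr] at hv
      · rw [List.cons.injEq] at hv
        obtain ⟨h1, h2⟩ := hv
        have hjj : j = j' := hstep_inj h1
        subst hjj; subst h2
        rfl
      · exfalso
        rw [← hv] at hL'
        exact hstep_ne_U j (by simpa using hL'.2)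
      · exfalso
        rw [hv] at hL
        exact hstep_ne_U j' (by simpa using hL.2)
      · simp only [Sum.inr.injEq]
        exact Subtype.ext hv
    · rintro ⟨L, hM, hpos⟩
      match L, hM, hpos with
      | [], hM, _ => exact absurd hM.1 (by simp)
      | s :: T, hM, hpos =>
        cases s with
        | U => exact ⟨Sum.inr ⟨MStep.U :: T, ⟨⟨hM, hpos⟩, rfl⟩⟩, rfl⟩
        | D =>
          exfalso
          have := hM.2.2 1
          rw [show (1 : ℕ) = 0 + 1 by rfl, mHeight_cons] at this
          simp [MStep.eff] at this
        | H0 =>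
          rw [← hstep0] at hM hpos
          exact ⟨Sum.inl ⟨0, ⟨T, (motzkin_cons_hstep 0).mp hM,
            by rw [posH2_cons_hstep 0 T] at hpos; exact hpos⟩⟩, Subtype.ext rfl⟩
        | H1 =>
          rw [← hstep1] at hM hpos
          exact ⟨Sum.inl ⟨1, ⟨T, (motzkin_cons_hstep 1).mp hM,
            by rw [posH2_cons_hstep 1 T] at hpos; exact hpos⟩⟩, Subtype.ext rfl⟩
        | H2 =>
          rw [← hstep2] at hM hpos
          exact ⟨Sum.inl ⟨2, ⟨T, (motzkin_cons_hstep 2).mp hM,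
            by rw [posH2_cons_hstep 2 T] at hpos; exact hpos⟩⟩, Subtype.ext rfl⟩
  rw [← key, Nat.card_sum, Nat.card_prod, Nat.card_eq_fintype_card]
  simp


lemma card_uS_one (m : ℕ) : Nat.card (uS 1 m) = 0 := by
  have : IsEmpty (uS 1 m) := by
    constructor
    rintro ⟨L, ⟨⟨hlen, hsum, _⟩, _⟩, hhead⟩
    match L, hlen, hsum, hhead with
    | [s], _, hsum, hhead =>
      have : s = MStep.U := by simpa using hhead
      subst this
      simp [MStep.eff] at hsum
  exact Nat.card_of_isEmpty

lemma card_uS_rec (n m : ℕ) :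
    Nat.card (uS (n + 2) m) =
      ∑ k ∈ Finset.range (n + 1), ∑ p ∈ Finset.range (m + 1),
        Nat.card (aS k p) * Nat.card (bS (n - k) (m - p)) := by
  have key : Nat.card (Σ (k : Fin (n + 1)) (p : Fin (m + 1)),
      aS k p × bS (n - k) (m - p)) = Nat.card (uS (n + 2) m) := by
    apply Nat.card_eq_of_bijective (fun x =>
      (⟨MStep.U :: x.2.2.1.1 ++ MStep.D :: x.2.2.2.1,
        ⟨⟨by
          have h := comp_motzkin x.2.2.1.2.1 x.2.2.2.2.1
          have hk : (x.1 : ℕ) ≤ n := by omega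
          rwa [show (x.1 : ℕ) + (n - x.1) + 2 = n + 2 by omega] at h, by
          rw [comp_count ((isMotzkin_iff.mp x.2.2.1.2.1).2.2)
            ((isMotzkin_iff.mp x.2.2.1.2.1).2.1), x.2.2.1.2.2, x.2.2.2.2.2]
          have hp : (x.2.1 : ℕ) ≤ m := by omega
          omega⟩, rfl⟩⟩ : uS (n + 2) m))
    constructor
    · rintro ⟨k, p, ⟨P, hP⟩, ⟨Q, hQ⟩⟩ ⟨k', p', ⟨P', hP'⟩, ⟨Q', hQ'⟩⟩ h
      have hv := congrArg Subtype.val h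
      have hv2 : P ++ MStep.D :: Q = P' ++ MStep.D :: Q' := by injection hv
      obtain ⟨hPP, hQQ⟩ := split_unique hv2 (isMotzkin_iff.mp hP.1).2.1
        (isMotzkin_iff.mp hP.1).2.2 (isMotzkin_iff.mp hP'.1).2.1
        (isMotzkin_iff.mp hP'.1).2.2
      have hk : k = k' := by
        apply Fin.ext
        rw [← hP.1.1, ← hP'.1.1, hPP]
      subst hk
      have hp : p = p' := by
        apply Fin.ext
        rw [← hP.2, ← hP'.2, hPP]
      subst hp
      subst hPP
      subst hQQ
      rfl
    · rintro ⟨L, ⟨⟨hM, hpos⟩, hhead⟩⟩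
      match L, hhead with
      | MStep.U :: T, _ =>
        rw [isMotzkin_iff] at hM
        obtain ⟨hlen, hsum, hok⟩ := hM
        have hTsum : sE T = -1 := by
          rw [sE_cons] at hsum
          simp [MStep.eff] at hsum
          omega
        have hTok : ok 1 T := by
          rw [ok_cons] at hok
          simpa [MStep.eff] using hok.2
        obtain ⟨P, Q, hT, hPs, hPo, hQs, hQo⟩ := split_exists hTsum hTok
        subst hT
        have hlen' : P.length + Q.length + 2 = n + 2 := by
          simp at hlen
          omega
        have hkle : P.length ≤ n := by omega
        have hcount := comp_count hPo hPs (Q := Q)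
        rw [← List.cons_append] at hpos
        rw [hcount] at hpos
        have hple : P.count MStep.H2 ≤ m := by omega
        refine ⟨⟨⟨P.length, by omega⟩, ⟨P.count MStep.H2, by omega⟩,
          ⟨P, ⟨isMotzkin_iff.mpr ⟨rfl, hPs, hPo⟩, rfl⟩⟩,
          ⟨Q, ⟨isMotzkin_iff.mpr ⟨show Q.length = n - P.length by omega, hQs, hQo⟩,
            show posH2Steps Q = m - P.count MStep.H2 by omega⟩⟩⟩, rfl⟩
  rw [← key, ncard_sigma]
  rw [Fin.sum_univ_eq_sum_range
    (fun k => Nat.card ((p : Fin (m + 1)) × (aS k ↑p × bS (n - k) (m - ↑p))))]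
  apply Finset.sum_congr rfl
  intro k _
  rw [ncard_sigma, Fin.sum_univ_eq_sum_range
    (fun p => Nat.card (aS k p × bS (n - k) (m - p)))]
  apply Finset.sum_congr rfl
  intro p _
  rw [Nat.card_prod]


lemma motzkin_nil : IsMotzkin3 [] 0 := ⟨rfl, by simp, fun i => by simp [mHeight]⟩

@[simp] lemma posH2_nil : posH2Steps [] = 0 := by simp [posH2Steps]

lemma card_bS_zero (m : ℕ) : Nat.card (bS 0 m) = if m = 0 then 1 else 0 := by
  rcases Nat.eq_zero_or_pos m with rfl | hm
  · rw [if_pos rfl, Nat.card_eq_one_iff_unique]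
    constructor
    · constructor
      rintro ⟨L, ⟨hL, _⟩, _⟩ ⟨L', ⟨hL', _⟩, _⟩
      apply Subtype.ext
      exact (List.eq_nil_of_length_eq_zero hL).trans
        (List.eq_nil_of_length_eq_zero hL').symm
    · exact ⟨⟨[], motzkin_nil, posH2_nil⟩⟩
  · rw [if_neg (by omega)]
    have : IsEmpty (bS 0 m) := by
      constructor
      rintro ⟨L, ⟨hL, _, _⟩, hpos⟩
      rw [List.eq_nil_of_length_eq_zero hL] at hpos
      simp at hpos
      omega
    exact Nat.card_of_isEmpty

lemma card_recur (n m : ℕ) :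
    Nat.card (bS (n + 2) m) = 3 * Nat.card (bS (n + 1) m) +
      ∑ k ∈ Finset.range (n + 1), ∑ p ∈ Finset.range (m + 1),
        Nat.card (bS k p) * Nat.card (aS (n - k) (m - p)) := by
  rw [card_bS_rec1, card_uS_rec]
  congr 1
  rw [← Finset.sum_range_reflect]
  apply Finset.sum_congr rfl
  intro k hk
  rw [← Finset.sum_range_reflect]
  apply Finset.sum_congr rfl
  intro p hp
  rw [Finset.mem_range] at hk hp
  simp only [Nat.add_sub_cancel]
  rw [show n - (n - k) = k by omega, show m - (m - p) = p by omega, mul_comm]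

/-! ### Finsupp helpers -/

noncomputable def e (n m : ℕ) : Fin 2 →₀ ℕ := Finsupp.single 0 n + Finsupp.single 1 m

@[simp] lemma e_apply0 (n m : ℕ) : e n m 0 = n := by
  simp [e, Finsupp.single_apply]

@[simp] lemma e_apply1 (n m : ℕ) : e n m 1 = m := by
  simp [e, Finsupp.single_apply]

lemma e_eq (d : Fin 2 →₀ ℕ) : d = e (d 0) (d 1) := by
  ext i
  fin_cases i
  · simp
  · simp

lemma e_zero_iff (n m : ℕ) : e n m = 0 ↔ n = 0 ∧ m = 0 := by
  constructor
  · intro h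
    constructor
    · rw [← e_apply0 n m, h]; rfl
    · rw [← e_apply1 n m, h]; rfl
  · rintro ⟨rfl, rfl⟩
    simp [e]

lemma single0_le_e (c n m : ℕ) : Finsupp.single (0 : Fin 2) c ≤ e n m ↔ c ≤ n := by
  rw [Finsupp.single_le_iff, e_apply0]

lemma e_sub_single0 (c n m : ℕ) : e n m - Finsupp.single 0 c = e (n - c) m := by
  ext i
  fin_cases i
  · simp [Finsupp.tsub_apply, Finsupp.single_apply]
  · simp [Finsupp.tsub_apply, Finsupp.single_apply]

lemma e_add (k l p q : ℕ) : e k p + e l q = e (k + l) (p + q) := by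
  ext i
  fin_cases i
  · simp
  · simp

lemma sum_antidiag {M : Type*} [AddCommMonoid M] (n m : ℕ)
    (F : (Fin 2 →₀ ℕ) → (Fin 2 →₀ ℕ) → M) :
    ∑ p ∈ Finset.HasAntidiagonal.antidiagonal (e n m), F p.1 p.2 =
      ∑ kl ∈ Finset.HasAntidiagonal.antidiagonal n, ∑ pq ∈ Finset.HasAntidiagonal.antidiagonal m,
        F (e kl.1 pq.1) (e kl.2 pq.2) := by
  rw [← Finset.sum_product']
  apply Finset.sum_nbij' (i := fun p => ((p.1 0, p.2 0), (p.1 1, p.2 1)))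
    (j := fun q => (e q.1.1 q.2.1, e q.1.2 q.2.2))
  · intro p hp
    rw [Finset.HasAntidiagonal.mem_antidiagonal] at hp
    rw [Finset.mem_product, Finset.HasAntidiagonal.mem_antidiagonal, Finset.HasAntidiagonal.mem_antidiagonal]
    constructor
    · have := congrArg (fun f => f 0) hp
      simpa using this
    · have := congrArg (fun f => f 1) hp
      simpa using this
  · intro q hq
    rw [Finset.mem_product, Finset.HasAntidiagonal.mem_antidiagonal, Finset.HasAntidiagonal.mem_antidiagonal] at hq
    rw [Finset.HasAntidiagonal.mem_antidiagonal, e_add, hq.1, hq.2]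
  · intro p hp
    rw [Prod.ext_iff]
    constructor
    · exact (e_eq p.1).symm
    · exact (e_eq p.2).symm
  · intro q hq
    simp
  · intro p hp
    rw [← e_eq, ← e_eq]

end MW

/-- Let `a n m` be the number of 3-Motzkin paths of length `n` with exactly `m` steps `H2`,
and `b n m` the number of 3-Motzkin paths of length `n` with exactly `m` steps `H2` of
positive height.  Let `A = ∑ a(n,m) xⁿ yᵐ` and `B = ∑ b(n,m) xⁿ yᵐ` be the corresponding
formal power series in two commuting variables `x = X 0`, `y = X 1` over `ℚ`.
Then `B = 1 + 3·x·B + x²·B·A`. -/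


theorem stmt18 (a b : ℕ → ℕ → ℕ)
    (ha : ∀ n m, a n m =
      Nat.card {L : List MStep // IsMotzkin3 L n ∧ L.count MStep.H2 = m})
    (hb : ∀ n m, b n m =
      Nat.card {L : List MStep // IsMotzkin3 L n ∧ posH2Steps L = m})
    (A B : MvPowerSeries (Fin 2) ℚ)
    (hA : ∀ n m : ℕ,
      MvPowerSeries.coeff (R := ℚ) (Finsupp.single 0 n + Finsupp.single 1 m) A = a n m)
    (hB : ∀ n m : ℕ,
      MvPowerSeries.coeff (R := ℚ) (Finsupp.single 0 n + Finsupp.single 1 m) B = b n m) :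
    B = 1 + 3 * MvPowerSeries.X 0 * B + (MvPowerSeries.X 0) ^ 2 * B * A := by
  have hb0 : ∀ m, b 0 m = if m = 0 then 1 else 0 := fun m => by
    rw [hb]; exact MW.card_bS_zero m
  have hb1 : ∀ m, b 1 m = 3 * b 0 m := fun m => by
    rw [hb, hb]
    have := MW.card_bS_rec1 0 m
    rw [MW.card_uS_one, add_zero] at this
    exact this
  have hrec : ∀ n m, b (n + 2) m = 3 * b (n + 1) m +
      ∑ k ∈ Finset.range (n + 1), ∑ p ∈ Finset.range (m + 1),
        b k p * a (n - k) (m - p) := by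
    intro n m
    rw [hb, hb]
    show Nat.card (MW.bS (n + 2) m) = 3 * Nat.card (MW.bS (n + 1) m) + _
    rw [MW.card_recur]
    congr 1
    apply Finset.sum_congr rfl; intro k _
    apply Finset.sum_congr rfl; intro p _
    rw [hb, ha]
  have hB' : ∀ n m : ℕ, MvPowerSeries.coeff (R := ℚ) (MW.e n m) B = b n m := hB
  have hA' : ∀ n m : ℕ, MvPowerSeries.coeff (R := ℚ) (MW.e n m) A = a n m := hA
  apply MvPowerSeries.ext
  intro d
  obtain ⟨n, m, rfl⟩ : ∃ n m, d = MW.e n m := ⟨d 0, d 1, MW.e_eq d⟩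
  rw [map_add, map_add]
  have h2 : ∀ n m : ℕ, MvPowerSeries.coeff (R := ℚ) (MW.e n m) (3 * MvPowerSeries.X 0 * B)
      = 3 * (if Finsupp.single 0 1 ≤ MW.e n m then
          MvPowerSeries.coeff (R := ℚ) (MW.e n m - Finsupp.single 0 1) B else 0) := by
    intro n m
    have e1 : (3 : MvPowerSeries (Fin 2) ℚ) * MvPowerSeries.X 0 * B
        = (3 : ℕ) • (MvPowerSeries.X 0 * B) := by
      rw [nsmul_eq_mul, Nat.cast_ofNat, mul_assoc]
    rw [e1, map_nsmul, MvPowerSeries.X_def, MvPowerSeries.coeff_monomial_mul]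
    split_ifs <;> simp
  have h3 : ∀ n m : ℕ, MvPowerSeries.coeff (R := ℚ) (MW.e n m) (MvPowerSeries.X 0 ^ 2 * B * A)
      = (if Finsupp.single 0 2 ≤ MW.e n m then
          MvPowerSeries.coeff (R := ℚ) (MW.e n m - Finsupp.single 0 2) (B * A) else 0) := by
    intro n m
    rw [mul_assoc, MvPowerSeries.X_pow_eq, MvPowerSeries.coeff_monomial_mul]
    split_ifs <;> simp
  rw [hB', h2, h3, MvPowerSeries.coeff_one]
  match n with
  | 0 =>
    have c1 : ¬ (Finsupp.single (0 : Fin 2) 1 ≤ MW.e 0 m) := by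
      rw [MW.single0_le_e]; omega
    have c2 : ¬ (Finsupp.single (0 : Fin 2) 2 ≤ MW.e 0 m) := by
      rw [MW.single0_le_e]; omega
    rw [if_neg c1, if_neg c2, hb0]
    by_cases hm : m = 0
    · subst hm
      rw [if_pos ((MW.e_zero_iff 0 0).mpr ⟨rfl, rfl⟩), if_pos rfl]
      norm_num
    · rw [if_neg (fun h => hm ((MW.e_zero_iff 0 m).mp h).2), if_neg hm]
      norm_num
  | 1 =>
    have c0 : ¬ (MW.e 1 m = 0) := fun h => by
      have := ((MW.e_zero_iff 1 m).mp h).1; omega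
    have c1 : Finsupp.single (0 : Fin 2) 1 ≤ MW.e 1 m := (MW.single0_le_e 1 1 m).mpr le_rfl
    have c2 : ¬ (Finsupp.single (0 : Fin 2) 2 ≤ MW.e 1 m) := by
      rw [MW.single0_le_e]; omega
    rw [if_neg c0, if_pos c1, if_neg c2, MW.e_sub_single0, show (1 - 1 : ℕ) = 0 by rfl,
      hB' 0 m, hb1 m]
    push_cast
    ring
  | (n + 2) =>
    have c0 : ¬ (MW.e (n + 2) m = 0) := fun h => by
      have := ((MW.e_zero_iff (n + 2) m).mp h).1; omega
    have c1 : Finsupp.single (0 : Fin 2) 1 ≤ MW.e (n + 2) m :=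
      (MW.single0_le_e 1 (n + 2) m).mpr (by omega)
    have c2 : Finsupp.single (0 : Fin 2) 2 ≤ MW.e (n + 2) m :=
      (MW.single0_le_e 2 (n + 2) m).mpr (by omega)
    rw [if_neg c0, if_pos c1, if_pos c2, MW.e_sub_single0, MW.e_sub_single0,
      show (n + 2 - 1 : ℕ) = n + 1 by omega, show (n + 2 - 2 : ℕ) = n by omega,
      hB' (n + 1) m, MvPowerSeries.coeff_mul,
      MW.sum_antidiag n m (fun p q => MvPowerSeries.coeff (R := ℚ) p B * MvPowerSeries.coeff (R := ℚ) q A)]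
    simp only [hB', hA']
    simp only [Finset.Nat.sum_antidiagonal_eq_sum_range_succ_mk]
    rw [hrec n m]
    push_cast
    ring
end

section
/- For every integer n ≥ 2, the number of UH-free Schröder paths of length 2(n−1) whose first step is U equals the number of 12312-avoiding partitions of [n] in which 1 and 2 lie in different blocks. -/
/-- Steps of a Schröder path: `U = (1,1)`, `D = (1,-1)`, `H = H² = (2,0)`. -/
inductive SStep : Type
  | U : SStep
  | D : SStep
  | H : SStep
  deriving DecidableEq

/-- The contribution of a step to the x-coordinate. -/
def SStep.len : SStep → ℕ
  | U => 1
  | D => 1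
  | H => 2

/-- The contribution of a step to the y-coordinate. -/
def SStep.eff : SStep → ℤ
  | U => 1
  | D => -1
  | H => 0

/-- The height (y-coordinate of the starting point) of the `i`-th step (0-indexed);
for `i = L.length` this is the final height of the path. -/
def sHeight (L : List SStep) (i : ℕ) : ℤ := ((L.take i).map SStep.eff).sum

/-- `L` is a Schröder path of length `2 * n`: it has total horizontal displacement `2 * n`,
ends at height `0`, and never goes below the x-axis. -/
def IsSchroder (L : List SStep) (n : ℕ) : Prop :=
  (L.map SStep.len).sum = 2 * n ∧ (L.map SStep.eff).sum = 0 ∧ ∀ i, 0 ≤ sHeight L i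

/-- A peak at position `i`: an up step immediately followed by a down step.
The height of this peak is `sHeight L (i+1)`, the height of its down step. -/
def IsPeakAt (L : List SStep) (i : ℕ) : Prop :=
  L[i]? = some SStep.U ∧ L[i+1]? = some SStep.D

/-- `L` has no peak of odd height. -/
def NoOddPeak (L : List SStep) : Prop :=
  ∀ i, IsPeakAt L i → ¬ Odd (sHeight L (i+1))

/-- `L` has no peak of even height. -/
def NoEvenPeak (L : List SStep) : Prop :=
  ∀ i, IsPeakAt L i → ¬ Even (sHeight L (i+1))

/-- `L` is UH-free: no up step is immediately followed by a horizontal step. -/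
def UHFree (L : List SStep) : Prop :=
  ∀ i, ¬ (L[i]? = some SStep.U ∧ L[i+1]? = some SStep.H)

/-- The number of peaks of `L` of even height greater than `2`. -/
def evenHighPeaks (L : List SStep) : ℕ :=
  ((Finset.range L.length).filter
    (fun i => L[i]? = some SStep.U ∧ L[i+1]? = some SStep.D ∧
      Even (sHeight L (i+1)) ∧ 2 < sHeight L (i+1))).card

/-! Word side development (scratch) -/

def wmax (u : List ℕ) : ℕ := u.foldr max 0

lemma foldr_max_append (u : List ℕ) (x : ℕ) :
    (u ++ [x]).foldr max 0 = max (u.foldr max 0) x := by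
  induction u with
  | nil => simp
  | cons a t ih => simp [ih, max_assoc]

lemma le_foldr_max {u : List ℕ} {a : ℕ} (h : a ∈ u) : a ≤ u.foldr max 0 := by
  induction u with
  | nil => simp at h
  | cons b t ih =>
    rcases List.mem_cons.1 h with rfl | h'
    · exact le_max_left _ _
    · exact le_trans (ih h') (le_max_right _ _)

lemma foldr_max_mem {u : List ℕ} (h : 1 ≤ u.foldr max 0) : u.foldr max 0 ∈ u := by
  induction u with
  | nil => simp at h
  | cons b t ih =>
    rcases le_or_gt (t.foldr max 0) b with hb | hb
    · simp only [List.foldr_cons, max_eq_left hb]; exact List.mem_cons_self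
    · have : max b (t.foldr max 0) = t.foldr max 0 := max_eq_right hb.le
      simp only [List.foldr_cons, this]
      exact List.mem_cons_of_mem _ (ih (by omega))

lemma foldr_max_le_append (A B : List ℕ) : A.foldr max 0 ≤ (A ++ B).foldr max 0 := by
  induction A with
  | nil => simp
  | cons a t ih => simpa using max_le_max le_rfl ih

lemma prefMax_le_wmax (w : List ℕ) (i : ℕ) : prefMax w i ≤ wmax w := by
  have := foldr_max_le_append (w.take i) (w.drop i)
  simpa [prefMax, wmax, List.take_append_drop] using this

lemma getD_le_wmax {u : List ℕ} {i : ℕ} (h : i < u.length) : u.getD i 0 ≤ wmax u := by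
  apply le_foldr_max
  rw [List.getD_eq_getElem?_getD, List.getElem?_eq_getElem h]
  exact List.getElem_mem _

lemma wmax_eq_prefMax (w : List ℕ) : wmax w = prefMax w w.length := by
  simp [wmax, prefMax]

lemma mem_take_exists {u : List ℕ} {i x : ℕ} (h : x ∈ u.take i) :
    ∃ j, j < i ∧ j < u.length ∧ u.getD j 0 = x := by
  obtain ⟨j, hj, hget⟩ := List.getElem_of_mem h
  have hj1 : j < i := lt_of_lt_of_le hj (by simp [List.length_take])
  have hj2 : j < u.length := lt_of_lt_of_le hj (by simp [List.length_take])
  refine ⟨j, hj1, hj2, ?_⟩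
  rw [List.getD_eq_getElem?_getD, List.getElem?_eq_getElem hj2]
  simp only [Option.getD_some]
  rw [← hget, List.getElem_take]

/-- key IsCanonicalWord fact: every positive value below u_i occurs before i -/
lemma occ_before {u : List ℕ} (hu : IsCanonicalWord u) :
    ∀ i, i < u.length → ∀ t, 1 ≤ t → t < u.getD i 0 → ∃ j, j < i ∧ u.getD j 0 = t := by
  intro i
  induction i using Nat.strong_induction_on with
  | _ i ih =>
    intro hi t ht htlt
    have h2 := (hu i hi).2
    have hpm : t ≤ prefMax u i := by omega
    have hpm1 : 1 ≤ prefMax u i := le_trans ht hpm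
    have hmem : prefMax u i ∈ u.take i := foldr_max_mem hpm1
    obtain ⟨j, hji, hjlen, hjval⟩ := mem_take_exists hmem
    rcases eq_or_lt_of_le hpm with heq | hlt
    · exact ⟨j, hji, by omega⟩
    · obtain ⟨j', hj', hval'⟩ := ih j hji hjlen t ht (by omega)
      exact ⟨j', lt_trans hj' hji, hval'⟩

/-- every value in [1, wmax] occurs -/
lemma occ_of_le_wmax {u : List ℕ} (hu : IsCanonicalWord u) {t : ℕ} (ht : 1 ≤ t) (htm : t ≤ wmax u) :
    ∃ j, j < u.length ∧ u.getD j 0 = t := by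
  have hm1 : 1 ≤ wmax u := le_trans ht htm
  have hmem : wmax u ∈ u := foldr_max_mem hm1
  obtain ⟨r, hr, hget⟩ := List.getElem_of_mem hmem
  have hrval : u.getD r 0 = wmax u := by
    rw [List.getD_eq_getElem?_getD, List.getElem?_eq_getElem hr]; simp [hget]
  rcases eq_or_lt_of_le htm with heq | hlt
  · exact ⟨r, hr, by omega⟩
  · obtain ⟨j, hj, hval⟩ := occ_before hu r hr t ht (by omega)
    exact ⟨j, lt_trans hj hr, hval⟩

def witW (u : List ℕ) (x : ℕ) : Prop :=
  ∃ p q r s, p < q ∧ q < r ∧ r < s ∧ s < u.length ∧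
    u.getD p 0 = u.getD s 0 ∧ u.getD q 0 = x ∧ u.getD p 0 < x ∧ x < u.getD r 0

noncomputable def allowedW (u : List ℕ) : Finset ℕ :=
  @Finset.filter _ (fun x => ¬ witW u x) (fun _ => Classical.propDecidable _)
    (Finset.Icc 1 (wmax u + 1))

lemma mem_allowedW {u : List ℕ} {x : ℕ} :
    x ∈ allowedW u ↔ (1 ≤ x ∧ x ≤ wmax u + 1) ∧ ¬ witW u x := by
  simp [allowedW, Finset.mem_filter, Finset.mem_Icc]

noncomputable def labelW (u : List ℕ) : ℕ := (allowedW u).card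

lemma not_witW_of_ge_wmax {u : List ℕ} {x : ℕ} (hx : wmax u ≤ x) : ¬ witW u x := by
  rintro ⟨p, q, r, s, h1, h2, h3, h4, h5, h6, h7, h8⟩
  have : u.getD r 0 ≤ wmax u := getD_le_wmax (by omega)
  omega

lemma wmax_mem_allowedW {u : List ℕ} (h1 : 1 ≤ wmax u) : wmax u ∈ allowedW u :=
  mem_allowedW.2 ⟨⟨h1, by omega⟩, not_witW_of_ge_wmax le_rfl⟩

lemma wmax_add_one_mem_allowedW (u : List ℕ) : wmax u + 1 ∈ allowedW u :=
  mem_allowedW.2 ⟨⟨by omega, le_rfl⟩, not_witW_of_ge_wmax (by omega)⟩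

lemma wmax_pos {u : List ℕ} (hu : IsCanonicalWord u) (hne : u ≠ []) : 1 ≤ wmax u := by
  have h0 : 0 < u.length := List.length_pos_iff.2 hne
  have := (hu 0 h0).1
  have := getD_le_wmax h0
  omega

lemma two_le_labelW {u : List ℕ} (hu : IsCanonicalWord u) (hne : u ≠ []) : 2 ≤ labelW u := by
  have h1 := wmax_mem_allowedW (u := u) (wmax_pos hu hne)
  have h2 := wmax_add_one_mem_allowedW u
  have : ({wmax u, wmax u + 1} : Finset ℕ) ⊆ allowedW u := by
    intro y hy; simp at hy; rcases hy with rfl | rfl <;> assumption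
  calc 2 = ({wmax u, wmax u + 1} : Finset ℕ).card := by
        rw [Finset.card_insert_of_notMem (by simp), Finset.card_singleton]
     _ ≤ _ := Finset.card_le_card this

lemma getD_append_lt (u : List ℕ) (x : ℕ) {i : ℕ} (h : i < u.length) :
    (u ++ [x]).getD i 0 = u.getD i 0 := List.getD_append _ _ _ _ h

lemma getD_append_self (u : List ℕ) (x : ℕ) : (u ++ [x]).getD u.length 0 = x := by
  simp [List.getD_eq_getElem?_getD]

lemma wmax_append_of_le {u : List ℕ} {x : ℕ} (h : x ≤ wmax u) : wmax (u ++ [x]) = wmax u := by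
  simp only [wmax] at *
  rw [foldr_max_append]; omega

lemma wmax_append_new (u : List ℕ) : wmax (u ++ [wmax u + 1]) = wmax u + 1 := by
  simp only [wmax] at *
  rw [foldr_max_append]; omega

lemma prefMax_append (u : List ℕ) (x : ℕ) {i : ℕ} (h : i ≤ u.length) :
    prefMax (u ++ [x]) i = prefMax u i := by
  simp only [prefMax]
  rw [List.take_append_of_le_length h]

lemma rgs_append_iff {u : List ℕ} {x : ℕ} :
    IsCanonicalWord (u ++ [x]) ↔ IsCanonicalWord u ∧ 1 ≤ x ∧ x ≤ wmax u + 1 := by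
  constructor
  · intro h
    refine ⟨?_, ?_⟩
    · intro i hi
      have hi' : i < (u ++ [x]).length := by simp; omega
      have := h i hi'
      rwa [getD_append_lt u x hi, prefMax_append u x hi.le] at this
    · have hl : u.length < (u ++ [x]).length := by simp
      have := h u.length hl
      rwa [getD_append_self, prefMax_append u x le_rfl, ← wmax_eq_prefMax] at this
  · rintro ⟨hu, hx1, hx2⟩ i hi
    simp only [List.length_append, List.length_cons, List.length_nil] at hi
    rcases lt_or_ge i u.length with h | h
    · rw [getD_append_lt u x h, prefMax_append u x h.le]
      exact hu i h
    · have : i = u.length := by omega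
      subst this
      rw [getD_append_self, prefMax_append u x le_rfl, ← wmax_eq_prefMax]
      exact ⟨hx1, hx2⟩

lemma avoids_append_iff {u : List ℕ} {x : ℕ} :
    Avoids12312 (u ++ [x]) ↔ Avoids12312 u ∧ ¬ witW u x := by
  constructor
  · intro h
    constructor
    · rintro ⟨i1, i2, i3, i4, i5, h12, h23, h34, h45, h5, e14, e25, l12, l23⟩
      refine h ⟨i1, i2, i3, i4, i5, h12, h23, h34, h45, by simp; omega, ?_, ?_, ?_, ?_⟩ <;>
        rw [getD_append_lt u x (by omega), getD_append_lt u x (by omega)] <;> assumption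
    · rintro ⟨p, q, r, s, hpq, hqr, hrs, hs, eps, eqx, lpx, lxr⟩
      refine h ⟨p, q, r, s, u.length, hpq, hqr, hrs, hs, by simp, ?_, ?_, ?_, ?_⟩
      · rw [getD_append_lt u x (by omega), getD_append_lt u x (by omega)]; exact eps
      · rw [getD_append_lt u x (by omega), getD_append_self]; exact eqx
      · rw [getD_append_lt u x (by omega), getD_append_lt u x (by omega)]; omega
      · rw [getD_append_lt u x (by omega), getD_append_lt u x (by omega)]; omega
  · rintro ⟨hav, hwit⟩
    rintro ⟨i1, i2, i3, i4, i5, h12, h23, h34, h45, h5, e14, e25, l12, l23⟩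
    simp only [List.length_append, List.length_cons, List.length_nil] at h5
    rcases lt_or_ge i5 u.length with h | h
    · exact hav ⟨i1, i2, i3, i4, i5, h12, h23, h34, h45, h,
        by rw [getD_append_lt u x (by omega), getD_append_lt u x (by omega)] at e14; exact e14,
        by rw [getD_append_lt u x (by omega), getD_append_lt u x (by omega)] at e25; exact e25,
        by rw [getD_append_lt u x (by omega), getD_append_lt u x (by omega)] at l12; exact l12,
        by rw [getD_append_lt u x (by omega), getD_append_lt u x (by omega)] at l23; exact l23⟩
    · have hi5 : i5 = u.length := by omega
      subst hi5
      rw [getD_append_lt u x (by omega), getD_append_self] at e25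
      rw [getD_append_lt u x (by omega), getD_append_lt u x (by omega)] at e14 l12 l23
      exact hwit ⟨i1, i2, i3, i4, h12, h23, h34, by omega, e14, e25, by omega, by omega⟩

lemma witW_append_new {u : List ℕ} {x : ℕ} :
    witW (u ++ [wmax u + 1]) x ↔ witW u x := by
  constructor
  · rintro ⟨p, q, r, s, hpq, hqr, hrs, hs, eps, eqx, lpx, lxr⟩
    simp only [List.length_append, List.length_cons, List.length_nil] at hs
    rcases lt_or_ge s u.length with h | h
    · exact ⟨p, q, r, s, hpq, hqr, hrs, h,
        by rw [getD_append_lt u _ (by omega), getD_append_lt u _ (by omega)] at eps; exact eps,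
        by rw [getD_append_lt u _ (by omega)] at eqx; exact eqx,
        by rw [getD_append_lt u _ (by omega)] at lpx; exact lpx,
        by rw [getD_append_lt u _ (by omega)] at lxr; exact lxr⟩
    · exfalso
      have hs' : s = u.length := by omega
      subst hs'
      rw [getD_append_lt u _ (by omega), getD_append_self] at eps
      have := getD_le_wmax (u := u) (i := p) (by omega)
      omega
  · rintro ⟨p, q, r, s, hpq, hqr, hrs, hs, eps, eqx, lpx, lxr⟩
    exact ⟨p, q, r, s, hpq, hqr, hrs, by simp; omega,
      by rw [getD_append_lt u _ (by omega), getD_append_lt u _ (by omega)]; exact eps,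
      by rw [getD_append_lt u _ (by omega)]; exact eqx,
      by rw [getD_append_lt u _ (by omega)]; exact lpx,
      by rw [getD_append_lt u _ (by omega)]; exact lxr⟩

lemma allowedW_append_new (u : List ℕ) :
    allowedW (u ++ [wmax u + 1]) = insert (wmax u + 2) (allowedW u) := by
  ext x
  simp only [mem_allowedW, Finset.mem_insert, wmax_append_new, witW_append_new]
  constructor
  · rintro ⟨⟨h1, h2⟩, hw⟩
    rcases eq_or_lt_of_le h2 with heq | hlt
    · left; omega
    · right; exact ⟨⟨h1, by omega⟩, hw⟩
  · rintro (rfl | ⟨⟨h1, h2⟩, hw⟩)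
    · exact ⟨⟨by omega, le_rfl⟩, not_witW_of_ge_wmax (by omega)⟩
    · exact ⟨⟨h1, by omega⟩, hw⟩

lemma labelW_append_new (u : List ℕ) :
    labelW (u ++ [wmax u + 1]) = labelW u + 1 := by
  rw [labelW, allowedW_append_new, Finset.card_insert_of_notMem, labelW]
  intro h
  have := (mem_allowedW.1 h).1.2
  omega

lemma witW_append_old {u : List ℕ} {v x : ℕ} (hv : v ≤ wmax u) :
    witW (u ++ [v]) x ↔ witW u x ∨ (v < x ∧ ∃ p q r, p < q ∧ q < r ∧ r < u.length ∧
      u.getD p 0 = v ∧ u.getD q 0 = x ∧ x < u.getD r 0) := by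
  constructor
  · rintro ⟨p, q, r, s, hpq, hqr, hrs, hs, eps, eqx, lpx, lxr⟩
    simp only [List.length_append, List.length_cons, List.length_nil] at hs
    rcases lt_or_ge s u.length with h | h
    · left
      exact ⟨p, q, r, s, hpq, hqr, hrs, h,
        by rw [getD_append_lt u _ (by omega), getD_append_lt u _ (by omega)] at eps; exact eps,
        by rw [getD_append_lt u _ (by omega)] at eqx; exact eqx,
        by rw [getD_append_lt u _ (by omega)] at lpx; exact lpx,
        by rw [getD_append_lt u _ (by omega)] at lxr; exact lxr⟩
    · right
      have hs' : s = u.length := by omega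
      subst hs'
      rw [getD_append_lt u _ (by omega), getD_append_self] at eps
      rw [getD_append_lt u _ (by omega)] at eqx lpx lxr
      exact ⟨by omega, p, q, r, hpq, hqr, by omega, eps, eqx, by omega⟩
  · rintro (⟨p, q, r, s, hpq, hqr, hrs, hs, eps, eqx, lpx, lxr⟩ | ⟨hvx, p, q, r, hpq, hqr, hr, epv, eqx, lxr⟩)
    · exact ⟨p, q, r, s, hpq, hqr, hrs, by simp; omega,
        by rw [getD_append_lt u _ (by omega), getD_append_lt u _ (by omega)]; exact eps,
        by rw [getD_append_lt u _ (by omega)]; exact eqx,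
        by rw [getD_append_lt u _ (by omega)]; exact lpx,
        by rw [getD_append_lt u _ (by omega)]; exact lxr⟩
    · refine ⟨p, q, r, u.length, hpq, hqr, hr, by simp, ?_, ?_, ?_, ?_⟩
      · rw [getD_append_lt u _ (by omega), getD_append_self]; exact epv
      · rw [getD_append_lt u _ (by omega)]; exact eqx
      · rw [getD_append_lt u _ (by omega)]; omega
      · rw [getD_append_lt u _ (by omega)]; omega

lemma allowedW_append_old {u : List ℕ} (hu : IsCanonicalWord u) {v : ℕ}
    (hvmem : v ∈ allowedW u) (hv : v ≤ wmax u) :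
    allowedW (u ++ [v]) =
      ((allowedW u).filter (fun y => y ≤ v)) ∪ {wmax u, wmax u + 1} := by
  have hv1 : 1 ≤ v := (mem_allowedW.1 hvmem).1.1
  have hm1 : 1 ≤ wmax u := le_trans hv1 hv
  ext x
  simp only [mem_allowedW, Finset.mem_union, Finset.mem_filter, Finset.mem_insert,
    Finset.mem_singleton, wmax_append_of_le hv, witW_append_old hv]
  constructor
  · rintro ⟨⟨h1, h2⟩, hw⟩
    rcases lt_or_ge x (wmax u) with hxm | hxm
    · -- x < wmax u : must have x ≤ v, else construct witness occurrence
      rcases le_or_gt x v with hxv | hvx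
      · left; exact ⟨⟨⟨h1, h2⟩, fun h' => hw (Or.inl h')⟩, hxv⟩
      · exfalso
        -- build occurrence v .. x .. wmax
        obtain ⟨r, hr, hrval⟩ := occ_of_le_wmax hu hm1 le_rfl
        obtain ⟨q, hq, hqval⟩ := occ_before hu r hr x h1 (by omega)
        obtain ⟨p, hp, hpval⟩ := occ_before hu q (by omega) v hv1 (by omega)
        exact hw (Or.inr ⟨hvx, p, q, r, hp, hq, hr, hpval, hqval, by omega⟩)
    · right
      omega
  · rintro (⟨⟨⟨h1, h2⟩, hw⟩, hxv⟩ | h)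
    · refine ⟨⟨h1, h2⟩, ?_⟩
      rintro (h' | ⟨hvx, _⟩)
      · exact hw h'
      · omega
    · have hx : x = wmax u ∨ x = wmax u + 1 := h
      rcases hx with rfl | rfl
      · refine ⟨⟨hm1, by omega⟩, ?_⟩
        rintro (h' | ⟨hvx, ⟨p, q, r, _, _, hr, _, _, lxr⟩⟩)
        · exact not_witW_of_ge_wmax le_rfl h'
        · have := getD_le_wmax (u := u) (i := r) hr; omega
      · refine ⟨⟨by omega, le_rfl⟩, ?_⟩
        rintro (h' | ⟨hvx, ⟨p, q, r, _, _, hr, _, _, lxr⟩⟩)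
        · exact not_witW_of_ge_wmax (by omega) h'
        · have := getD_le_wmax (u := u) (i := r) hr; omega

/-! ### generic order-iso helpers -/

lemma orderIso_last {s : Finset ℕ} {k : ℕ} (h : s.card = k) (hk : 0 < k) {x : ℕ}
    (hx : x ∈ s) (hmax : ∀ y ∈ s, y ≤ x) :
    ((s.orderIsoOfFin h ⟨k - 1, by omega⟩ : {a // a ∈ s}) : ℕ) = x := by
  set e := s.orderIsoOfFin h with he
  set i := e.symm ⟨x, hx⟩ with hi
  have hei : ((e i : {a // a ∈ s}) : ℕ) = x := by simp [hi]
  have h1 : (e ⟨k - 1, by omega⟩ : ℕ) ≤ x := hmax _ (e ⟨k - 1, by omega⟩).2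
  have h2 : i ≤ ⟨k - 1, by omega⟩ := by
    rcases i with ⟨iv, hiv⟩
    exact Fin.mk_le_mk.2 (by omega)
  have h3 : (e i : ℕ) ≤ (e ⟨k - 1, by omega⟩ : ℕ) := by
    have := e.monotone h2
    exact_mod_cast this
  omega

lemma orderIso_sectop {s : Finset ℕ} {k : ℕ} (h : s.card = k) (hk : 2 ≤ k) {x : ℕ}
    (hx : x ∈ s) (hx1 : x + 1 ∈ s) (hmax : ∀ y ∈ s, y ≤ x + 1) :
    ((s.orderIsoOfFin h ⟨k - 2, by omega⟩ : {a // a ∈ s}) : ℕ) = x := by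
  set e := s.orderIsoOfFin h with he
  have hlast : ((e ⟨k - 1, by omega⟩ : {a // a ∈ s}) : ℕ) = x + 1 :=
    orderIso_last h (by omega) hx1 hmax
  set i := e.symm ⟨x, hx⟩ with hi
  have hei : ((e i : {a // a ∈ s}) : ℕ) = x := by simp [hi]
  have hilt : i < ⟨k - 1, by omega⟩ := by
    by_contra hcon
    push_neg at hcon
    have := e.monotone hcon
    have : ((e ⟨k - 1, by omega⟩ : {a // a ∈ s}) : ℕ) ≤ (e i : ℕ) := by exact_mod_cast this
    omega
  have hile : i ≤ ⟨k - 2, by omega⟩ := by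
    rcases i with ⟨iv, hiv⟩
    rw [Fin.mk_lt_mk] at hilt
    exact Fin.mk_le_mk.2 (by omega)
  have h1 : (e i : ℕ) ≤ (e ⟨k - 2, by omega⟩ : ℕ) := by exact_mod_cast e.monotone hile
  have h2 : (e ⟨k - 2, by omega⟩ : ℕ) < (e ⟨k - 1, by omega⟩ : ℕ) := by
    have : (⟨k - 2, by omega⟩ : Fin k) < ⟨k - 1, by omega⟩ := Fin.mk_lt_mk.2 (by omega)
    exact_mod_cast e.strictMono this
  omega

lemma card_filter_le_orderIso {s : Finset ℕ} {k : ℕ} (h : s.card = k) (j : Fin k) :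
    (s.filter (fun y => y ≤ ((s.orderIsoOfFin h j : {a // a ∈ s}) : ℕ))).card = (j : ℕ) + 1 := by
  classical
  set e := s.orderIsoOfFin h with he
  have : s.filter (fun y => y ≤ ((e j : {a // a ∈ s}) : ℕ))
      = (Finset.Iic j).image (fun i => ((e i : {a // a ∈ s}) : ℕ)) := by
    ext y
    simp only [Finset.mem_filter, Finset.mem_image, Finset.mem_Iic]
    constructor
    · rintro ⟨hy, hyle⟩
      refine ⟨e.symm ⟨y, hy⟩, ?_, by simp⟩
      have : (⟨y, hy⟩ : {a // a ∈ s}) ≤ e j := hyle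
      have := e.symm.monotone this
      simpa using this
    · rintro ⟨i, hij, rfl⟩
      refine ⟨(e i).2, ?_⟩
      exact_mod_cast e.monotone hij
  rw [this, Finset.card_image_of_injective _ (fun a b hab => by
    have : e a = e b := Subtype.ext hab
    exact e.injective this)]
  simp [Fin.card_Iic]

def succLabel (k j : ℕ) : ℕ := if j = k - 1 then k + 1 else if j = k - 2 then k else j + 3

/-! ### word child construction -/

noncomputable def welt (u : List ℕ) (j : Fin (labelW u)) : ℕ :=
  (((allowedW u).orderIsoOfFin rfl j : {a // a ∈ allowedW u}) : ℕ)

lemma welt_mem (u : List ℕ) (j : Fin (labelW u)) : welt u j ∈ allowedW u :=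
  ((allowedW u).orderIsoOfFin rfl j).2

lemma card_allowedW (u : List ℕ) : (allowedW u).card = labelW u := rfl

lemma welt_last {u : List ℕ} (hu : IsCanonicalWord u) (hne : u ≠ []) :
    welt u ⟨labelW u - 1, by have := two_le_labelW hu hne; omega⟩ = wmax u + 1 := by
  apply orderIso_last rfl (by have := two_le_labelW hu hne; have := card_allowedW u; omega)
    (wmax_add_one_mem_allowedW u)
  intro y hy; exact (mem_allowedW.1 hy).1.2

lemma welt_sectop {u : List ℕ} (hu : IsCanonicalWord u) (hne : u ≠ []) :
    welt u ⟨labelW u - 2, by have := two_le_labelW hu hne; omega⟩ = wmax u := by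
  apply orderIso_sectop rfl
    (by have := two_le_labelW hu hne; have := card_allowedW u; omega)
    (wmax_mem_allowedW (wmax_pos hu hne)) (wmax_add_one_mem_allowedW u)
  intro y hy; exact (mem_allowedW.1 hy).1.2

noncomputable def wordChild (u : List ℕ) (j : Fin (labelW u)) : List ℕ := u ++ [welt u j]

lemma allowedW_eq_wmax_append {u : List ℕ} (hu : IsCanonicalWord u) (hne : u ≠ []) :
    allowedW (u ++ [wmax u]) = allowedW u := by
  rw [allowedW_append_old hu (wmax_mem_allowedW (wmax_pos hu hne)) le_rfl]
  ext y
  simp only [Finset.mem_union, Finset.mem_filter, Finset.mem_insert, Finset.mem_singleton]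
  constructor
  · rintro (⟨hy, _⟩ | h)
    · exact hy
    · rcases h with rfl | rfl
      · exact wmax_mem_allowedW (wmax_pos hu hne)
      · exact wmax_add_one_mem_allowedW u
  · intro hy
    have h2 := (mem_allowedW.1 hy).1.2
    rcases le_or_gt y (wmax u) with h | h
    · exact Or.inl ⟨hy, h⟩
    · right; right; omega

lemma welt_lt_wmax {u : List ℕ} (hu : IsCanonicalWord u) (hne : u ≠ []) (j : Fin (labelW u))
    (hjlt : (j : ℕ) < labelW u - 2) : welt u j < wmax u := by
  have hk := two_le_labelW hu hne
  have hlt : j < (⟨labelW u - 2, by omega⟩ : Fin (labelW u)) := by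
    rw [Fin.lt_def]; exact hjlt
  have h := ((allowedW u).orderIsoOfFin rfl).strictMono hlt
  have h2 : welt u j < welt u ⟨labelW u - 2, by omega⟩ := by
    simpa [welt] using h
  rwa [welt_sectop hu hne] at h2

lemma labelW_wordChild {u : List ℕ} (hu : IsCanonicalWord u) (hne : u ≠ []) (j : Fin (labelW u)) :
    labelW (wordChild u j) = succLabel (labelW u) j := by
  classical
  have hk := two_le_labelW hu hne
  by_cases hj1 : (j : ℕ) = labelW u - 1
  · have hx : welt u j = wmax u + 1 := by
      have hj : j = ⟨labelW u - 1, by omega⟩ := Fin.ext hj1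
      rw [hj]; exact welt_last hu hne
    rw [wordChild, hx, labelW_append_new, succLabel, if_pos hj1]
  · by_cases hj2 : (j : ℕ) = labelW u - 2
    · have hx : welt u j = wmax u := by
        have hj : j = ⟨labelW u - 2, by omega⟩ := Fin.ext hj2
        rw [hj]; exact welt_sectop hu hne
      rw [wordChild, hx, labelW, allowedW_eq_wmax_append hu hne, succLabel,
        if_neg hj1, if_pos hj2, card_allowedW]
    · have hjlt : (j : ℕ) < labelW u - 2 := by have := j.2; omega
      have hxlt : welt u j < wmax u := welt_lt_wmax hu hne j hjlt
      have hxmem := welt_mem u j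
      rw [wordChild, labelW, allowedW_append_old hu hxmem hxlt.le]
      have hdisj : Disjoint ((allowedW u).filter (fun y => y ≤ welt u j))
          ({wmax u, wmax u + 1} : Finset ℕ) := by
        rw [Finset.disjoint_right]
        intro y hy hmem
        have := (Finset.mem_filter.1 hmem).2
        simp only [Finset.mem_insert, Finset.mem_singleton] at hy
        omega
      rw [Finset.card_union_of_disjoint hdisj]
      have hcf : ((allowedW u).filter (fun y => y ≤ welt u j)).card = (j : ℕ) + 1 :=
        card_filter_le_orderIso rfl j
      rw [hcf]
      have h2 : ({wmax u, wmax u + 1} : Finset ℕ).card = 2 := by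
        rw [Finset.card_insert_of_notMem (by simp), Finset.card_singleton]
      rw [h2, succLabel, if_neg hj1, if_neg hj2]

/-! ### the word step equivalence -/

def WT (n : ℕ) : Type := {w : List ℕ // w.length = n ∧ IsCanonicalWord w ∧ Avoids12312 w}

lemma wordChild_length (u : List ℕ) (j : Fin (labelW u)) :
    (wordChild u j).length = u.length + 1 := by simp [wordChild]

lemma wordChild_props {u : List ℕ} (hu : IsCanonicalWord u) (hav : Avoids12312 u) (j : Fin (labelW u)) :
    IsCanonicalWord (wordChild u j) ∧ Avoids12312 (wordChild u j) := by
  have hmem := welt_mem u j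
  rw [mem_allowedW] at hmem
  constructor
  · rw [wordChild, rgs_append_iff]
    exact ⟨hu, hmem.1.1, hmem.1.2⟩
  · rw [wordChild, avoids_append_iff]
    exact ⟨hav, hmem.2⟩

noncomputable def wordStep {n : ℕ} (x : Σ u : WT n, Fin (labelW u.val)) : WT (n + 1) :=
  ⟨wordChild x.1.val x.2,
    by rw [wordChild_length, x.1.2.1],
    (wordChild_props x.1.2.2.1 x.1.2.2.2 x.2).1,
    (wordChild_props x.1.2.2.1 x.1.2.2.2 x.2).2⟩

lemma wordStep_injective {n : ℕ} : Function.Injective (wordStep (n := n)) := by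
  rintro ⟨⟨u1, hl1, hr1, ha1⟩, j1⟩ ⟨⟨u2, hl2, hr2, ha2⟩, j2⟩ heq
  have hval : wordChild u1 j1 = wordChild u2 j2 := congrArg Subtype.val heq
  have huu : u1 = u2 := by
    have := congrArg List.dropLast hval
    simpa [wordChild, List.dropLast_concat] using this
  subst huu
  have hxx : welt u1 j1 = welt u1 j2 := by
    have hval' : u1 ++ [welt u1 j1] = u1 ++ [welt u1 j2] := hval
    have := List.append_cancel_left hval'
    simpa using this
  have : j1 = j2 := by
    apply ((allowedW u1).orderIsoOfFin rfl).injective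
    exact Subtype.ext hxx
  subst this
  rfl

lemma wordStep_surjective {n : ℕ} : Function.Surjective (wordStep (n := n)) := by
  rintro ⟨w, hlen, hrgs, hav⟩
  have hne : w ≠ [] := by intro h; subst h; simp at hlen
  have hw : w = w.dropLast ++ [w.getLast hne] := (List.dropLast_append_getLast hne).symm
  set u := w.dropLast with hudef
  set x := w.getLast hne with hxdef
  have hrgs' : IsCanonicalWord (u ++ [x]) := by rw [← hw]; exact hrgs
  have hav' : Avoids12312 (u ++ [x]) := by rw [← hw]; exact hav
  rw [rgs_append_iff] at hrgs'
  rw [avoids_append_iff] at hav'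
  have hxmem : x ∈ allowedW u := mem_allowedW.2 ⟨⟨hrgs'.2.1, hrgs'.2.2⟩, hav'.2⟩
  have hulen : u.length = n := by
    have := congrArg List.length hw
    rw [List.length_append] at this
    simp at this ⊢
    omega
  set j : Fin (labelW u) := ((allowedW u).orderIsoOfFin rfl).symm ⟨x, hxmem⟩ with hjdef
  refine ⟨⟨⟨u, hulen, hrgs'.1, hav'.1⟩, j⟩, ?_⟩
  apply Subtype.ext
  show wordChild u j = w
  have hwelt : welt u j = x := by
    rw [welt, hjdef]
    simp
  rw [wordChild, hwelt, ← hw]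

noncomputable def wordEquiv (n : ℕ) : (Σ u : WT n, Fin (labelW u.val)) ≃ WT (n + 1) :=
  Equiv.ofBijective wordStep ⟨wordStep_injective, wordStep_surjective⟩

/-! ### feature -/

def featW (w : List ℕ) : Prop := w.getD 1 0 = 2

lemma featW_wordChild {u : List ℕ} (hlen : 2 ≤ u.length) (j : Fin (labelW u)) :
    featW (wordChild u j) ↔ featW u := by
  rw [featW, featW, wordChild, getD_append_lt u _ (by omega)]

lemma length_one_rgs {u : List ℕ} (hlen : u.length = 1) (hu : IsCanonicalWord u) : u = [1] := by
  obtain ⟨a, rfl⟩ := List.length_eq_one_iff.1 hlen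
  have := hu 0 (by simp)
  simp [prefMax] at this
  have : a = 1 := by omega
  subst this
  rfl

lemma rgs_one : IsCanonicalWord [1] := by
  intro i hi
  simp at hi
  subst hi
  simp [prefMax]

lemma avoids_one : Avoids12312 [1] := by
  rintro ⟨i1, i2, i3, i4, i5, h12, h23, h34, h45, h5, _⟩
  simp at h5
  omega

lemma wmax_one : wmax [1] = 1 := by simp [wmax]

lemma allowedW_one : allowedW [1] = {1, 2} := by
  ext x
  rw [mem_allowedW, wmax_one]
  constructor
  · rintro ⟨⟨h1, h2⟩, _⟩
    simp
    omega
  · intro hx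
    simp at hx
    refine ⟨by omega, ?_⟩
    rintro ⟨p, q, r, s, h1, h2, h3, h4, _⟩
    simp at h4
    omega

lemma labelW_one : labelW [1] = 2 := by
  rw [labelW, allowedW_one]
  rfl

lemma featW_wordChild_one (j : Fin (labelW [1])) :
    featW (wordChild [1] j) ↔ (j : ℕ) = 1 := by
  have hgd : ([1] ++ [welt [1] j]).getD 1 0 = welt [1] j := getD_append_self [1] _
  have hkey : featW (wordChild [1] j) ↔ welt [1] j = 2 := by
    rw [featW, wordChild, hgd]
  have hwelt1 : (j : ℕ) = 1 → welt [1] j = 2 := by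
    intro hj
    have hje : j = ⟨labelW [1] - 1, by have h := labelW_one; omega⟩ := by
      apply Fin.ext
      show (j : ℕ) = labelW [1] - 1
      have h := labelW_one
      omega
    rw [hje, welt_last rgs_one (by simp), wmax_one]
  have hwelt0 : (j : ℕ) = 0 → welt [1] j = 1 := by
    intro hj
    have hje : j = ⟨labelW [1] - 2, by have h := labelW_one; omega⟩ := by
      apply Fin.ext
      show (j : ℕ) = labelW [1] - 2
      have h := labelW_one
      omega
    rw [hje, welt_sectop rgs_one (by simp), wmax_one]
  rw [hkey]
  constructor
  · intro h
    by_contra hc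
    have hj0 : (j : ℕ) = 0 := by have := j.2; have := labelW_one; omega
    rw [hwelt0 hj0] at h
    omega
  · intro hc
    exact hwelt1 hc

lemma featW_iff_ne {w : List ℕ} (hlen : 2 ≤ w.length) (hu : IsCanonicalWord w) :
    (w.getD 0 0 ≠ w.getD 1 0) ↔ featW w := by
  obtain ⟨a, t, rfl⟩ : ∃ a t, w = a :: t := by
    cases w with
    | nil => simp at hlen
    | cons a t => exact ⟨a, t, rfl⟩
  have h0 := hu 0 (by omega)
  have h1 := hu 1 (by omega)
  simp only [prefMax, List.take_zero, List.foldr_nil, List.take_succ_cons,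
    List.take_zero, List.foldr_cons] at h0 h1
  have ha : a = 1 := by
    simp [List.getD] at h0
    omega
  subst ha
  obtain ⟨b, t', rfl⟩ : ∃ b t', t = b :: t' := by
    cases t with
    | nil => simp at hlen
    | cons b t' => exact ⟨b, t', rfl⟩
  simp [featW, List.getD] at h1 ⊢
  omega

/-! ### height lemmas -/

lemma sHeight_zero (L : List SStep) : sHeight L 0 = 0 := by simp [sHeight]

lemma sHeight_of_ge {L : List SStep} {i : ℕ} (h : L.length ≤ i) :
    sHeight L i = (L.map SStep.eff).sum := by
  rw [sHeight, List.take_of_length_le h]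

lemma sHeight_length (L : List SStep) : sHeight L L.length = (L.map SStep.eff).sum :=
  sHeight_of_ge le_rfl

lemma sHeight_append_le {A B : List SStep} {i : ℕ} (h : i ≤ A.length) :
    sHeight (A ++ B) i = sHeight A i := by
  rw [sHeight, sHeight, List.take_append_of_le_length h]

lemma sHeight_append_add (A B : List SStep) (t : ℕ) :
    sHeight (A ++ B) (A.length + t) = (A.map SStep.eff).sum + sHeight B t := by
  rw [sHeight, List.take_append, List.map_append, List.sum_append, sHeight]
  rw [List.take_of_length_le (by simp), Nat.add_sub_cancel_left]

lemma sHeight_cons (s : SStep) (B : List SStep) (t : ℕ) :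
    sHeight (s :: B) (t + 1) = SStep.eff s + sHeight B t := by
  simp [sHeight, List.take_succ_cons]

lemma sHeight_take {L : List SStep} {g i : ℕ} (h : i ≤ g) :
    sHeight (L.take g) i = sHeight L i := by
  simp [sHeight, List.take_take, min_eq_left h]

lemma sHeight_drop {L : List SStep} {g : ℕ} (hg : g ≤ L.length) (t : ℕ) :
    sHeight (L.drop g) t = sHeight L (g + t) - sHeight L g := by
  have key := sHeight_append_add (L.take g) (L.drop g) t
  rw [List.take_append_drop] at key
  have h2 : (L.take g).length = g := by simp [hg]
  rw [h2] at key
  have h3 : sHeight L g = ((L.take g).map SStep.eff).sum := rfl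
  omega

lemma sHeight_succ {L : List SStep} {i : ℕ} {s : SStep} (h : L[i]? = some s) :
    sHeight L (i + 1) = sHeight L i + s.eff := by
  rw [sHeight, sHeight, List.take_succ, h]
  simp

lemma schroder_sHeight_length {L : List SStep} {m : ℕ} (hS : IsSchroder L m) :
    sHeight L L.length = 0 := by rw [sHeight_length]; exact hS.2.1

lemma schroder_ne_nil {L : List SStep} {m : ℕ} (hS : IsSchroder L (m + 1)) : L ≠ [] := by
  intro h; subst h; have := hS.1; simp at this

lemma schroder_last_ne_U {L : List SStep} {m : ℕ} (hS : IsSchroder L m) (hne : L ≠ [])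
    {s : SStep} (h : L[L.length - 1]? = some s) : s ≠ SStep.U := by
  intro hU; subst hU
  have hlen : 0 < L.length := List.length_pos_iff.2 hne
  have h1 : sHeight L (L.length - 1 + 1) = sHeight L (L.length - 1) + 1 := by
    rw [sHeight_succ h]; rfl
  have h2 : L.length - 1 + 1 = L.length := by omega
  rw [h2, schroder_sHeight_length hS] at h1
  have := hS.2.2 (L.length - 1)
  omega

/-! ### grounds -/

def grounds (L : List SStep) : Finset ℕ :=
  (Finset.range (L.length + 1)).filter
    (fun j => sHeight L j = 0 ∧ L[j]? ≠ some SStep.H)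

lemma mem_grounds {L : List SStep} {j : ℕ} :
    j ∈ grounds L ↔ j ≤ L.length ∧ sHeight L j = 0 ∧ L[j]? ≠ some SStep.H := by
  simp [grounds, Finset.mem_filter, Finset.mem_range, Nat.lt_succ_iff]

lemma length_mem_grounds {L : List SStep} {m : ℕ} (hS : IsSchroder L m) :
    L.length ∈ grounds L :=
  mem_grounds.2 ⟨le_rfl, schroder_sHeight_length hS, by simp⟩

def labelP (L : List SStep) : ℕ := (grounds L).card + 1

lemma card_grounds (L : List SStep) : (grounds L).card = labelP L - 1 := rfl

lemma two_le_labelP {L : List SStep} {m : ℕ} (hS : IsSchroder L m) : 2 ≤ labelP L := by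
  have h := length_mem_grounds hS
  have : 1 ≤ (grounds L).card := Finset.card_pos.2 ⟨_, h⟩
  simp only [labelP]; omega

/-! ### the two child constructions -/

def insCh (L : List SStep) (g : ℕ) : List SStep :=
  L.take g ++ SStep.U :: (L.drop g ++ [SStep.D])

def appH (L : List SStep) : List SStep := L ++ [SStep.H]

lemma insCh_length {L : List SStep} {g : ℕ} (hg : g ≤ L.length) :
    (insCh L g).length = L.length + 2 := by
  simp [insCh]; omega

lemma insCh_getElem? {L : List SStep} {g : ℕ} (hg : g ≤ L.length) (i : ℕ) :
    (insCh L g)[i]? =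
      if i < g then L[i]?
      else if i = g then some SStep.U
      else if i ≤ L.length then L[i-1]?
      else if i = L.length + 1 then some SStep.D
      else none := by
  have hlenA : (L.take g).length = g := by simp [hg]
  have hlenC : (L.drop g).length = L.length - g := by simp
  rw [insCh, List.getElem?_append, hlenA]
  rcases lt_or_ge i g with h | h
  · rw [if_pos h, if_pos h, List.getElem?_take]
    simp [h]
  · rw [if_neg (by omega), if_neg (by omega)]
    rcases eq_or_lt_of_le h with rfl | hgi
    · simp
    · rw [if_neg (by omega)]
      have hsub : i - g = (i - g - 1) + 1 := by omega
      rw [hsub, List.getElem?_cons_succ, List.getElem?_append, hlenC]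
      rcases le_or_gt i L.length with h2 | h2
      · rw [if_pos (by omega), if_pos h2, List.getElem?_drop]
        congr 1
        omega
      · rw [if_neg (by omega), if_neg (by omega)]
        rcases eq_or_lt_of_le (Nat.succ_le_of_lt h2) with h3 | h3
        · have : i - g - 1 - (L.length - g) = 0 := by omega
          rw [this, if_pos (by omega)]
          simp
        · have : i - g - 1 - (L.length - g) = (i - g - 1 - (L.length - g) - 1) + 1 := by omega
          rw [this, if_neg (by omega), List.getElem?_cons_succ]
          simp

lemma insCh_sHeight {L : List SStep} {g : ℕ} (hg : g ≤ L.length) (i : ℕ) :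
    sHeight (insCh L g) i =
      if i ≤ g then sHeight L i
      else if i ≤ L.length + 1 then sHeight L (i-1) + 1
      else (L.map SStep.eff).sum := by
  have hlenA : (L.take g).length = g := by simp [hg]
  have hlenC : (L.drop g).length = L.length - g := by simp
  rcases le_or_gt i g with h | h
  · rw [if_pos h, insCh, sHeight_append_le (by omega), sHeight_take h]
  · rw [if_neg (by omega)]
    have hi : i = g + (1 + (i - g - 1)) := by omega
    have key : sHeight (insCh L g) i
        = sHeight L g + (1 + sHeight (L.drop g ++ [SStep.D]) (i - g - 1)) := by
      have h0 := sHeight_append_add (L.take g) (SStep.U :: (L.drop g ++ [SStep.D]))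
        (1 + (i - g - 1))
      rw [hlenA] at h0
      have h2 : sHeight (SStep.U :: (L.drop g ++ [SStep.D])) (1 + (i - g - 1))
          = 1 + sHeight (L.drop g ++ [SStep.D]) (i - g - 1) := by
        have he : (1 : ℤ) = SStep.eff SStep.U := rfl
        have hn : 1 + (i - g - 1) = (i - g - 1) + 1 := by omega
        rw [hn, sHeight_cons, ← he]
      have h3 : sHeight L g = ((L.take g).map SStep.eff).sum := rfl
      rw [insCh]
      calc sHeight (L.take g ++ SStep.U :: (L.drop g ++ [SStep.D])) i
          = sHeight (L.take g ++ SStep.U :: (L.drop g ++ [SStep.D])) (g + (1 + (i - g - 1))) := by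
            rw [← hi]
        _ = ((L.take g).map SStep.eff).sum
              + sHeight (SStep.U :: (L.drop g ++ [SStep.D])) (1 + (i - g - 1)) := h0
        _ = sHeight L g + (1 + sHeight (L.drop g ++ [SStep.D]) (i - g - 1)) := by
            rw [h2, ← h3]
    rcases le_or_gt i (L.length + 1) with h4 | h4
    · rw [if_pos h4, key, sHeight_append_le (by omega), sHeight_drop hg]
      have : g + (i - g - 1) = i - 1 := by omega
      rw [this]
      ring
    · rw [if_neg (by omega), key]
      have h5 : sHeight (L.drop g ++ [SStep.D]) (i - g - 1)
          = ((L.drop g ++ [SStep.D]).map SStep.eff).sum := by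
        apply sHeight_of_ge
        simp only [List.length_append, hlenC, List.length_cons, List.length_nil]
        omega
      rw [h5]
      have h6 : sHeight L g = ((L.take g).map SStep.eff).sum := rfl
      have h7 : (L.map SStep.eff).sum
          = ((L.take g).map SStep.eff).sum + ((L.drop g).map SStep.eff).sum := by
        conv_lhs => rw [← List.take_append_drop g L]
        rw [List.map_append, List.sum_append]
      have h8 : ((L.drop g ++ [SStep.D]).map SStep.eff).sum
          = ((L.drop g).map SStep.eff).sum + (-1) := by
        rw [List.map_append, List.sum_append]; rfl
      rw [h8]
      omega

lemma insCh_schroder {L : List SStep} {m : ℕ} (hS : IsSchroder L m) {g : ℕ}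
    (hg : g ≤ L.length) : IsSchroder (insCh L g) (m + 1) := by
  refine ⟨?_, ?_, ?_⟩
  · have heq : (insCh L g).map SStep.len
        = (L.take g).map SStep.len
          ++ SStep.U.len :: ((L.drop g).map SStep.len ++ [SStep.D.len]) := by
      simp [insCh]
    rw [heq, List.sum_append, List.sum_cons, List.sum_append]
    have h7 : (L.map SStep.len).sum
        = ((L.take g).map SStep.len).sum + ((L.drop g).map SStep.len).sum := by
      conv_lhs => rw [← List.take_append_drop g L]
      rw [List.map_append, List.sum_append]
    have h1 := hS.1
    have h2 : SStep.U.len = 1 := rfl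
    have h3 : ([SStep.D.len] : List ℕ).sum = 1 := rfl
    rw [h2, h3]
    omega
  · have h := insCh_sHeight hg (L.length + 2)
    rw [if_neg (by omega), if_neg (by omega)] at h
    have h2 : (insCh L g).length ≤ L.length + 2 := by simp [insCh]; omega
    rw [← sHeight_of_ge h2, h, hS.2.1]
  · intro i
    rw [insCh_sHeight hg i]
    split_ifs with h1 h2
    · exact hS.2.2 i
    · have := hS.2.2 (i - 1); omega
    · rw [hS.2.1]

lemma insCh_UHFree {L : List SStep} (hU : UHFree L) {g : ℕ}
    (hgmem : g ∈ grounds L) : UHFree (insCh L g) := by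
  obtain ⟨hg, hgh, hgs⟩ := mem_grounds.1 hgmem
  intro i ⟨hi1, hi2⟩
  rw [insCh_getElem? hg] at hi1 hi2
  by_cases c1 : i < g
  · by_cases c2 : i + 1 < g
    · rw [if_pos c1] at hi1; rw [if_pos c2] at hi2; exact hU i ⟨hi1, hi2⟩
    · have hc : i + 1 = g := by omega
      rw [if_neg (by omega), if_pos hc] at hi2; simp at hi2
  · by_cases c3 : i = g
    · by_cases c4 : i + 1 ≤ L.length
      · rw [if_neg (by omega), if_neg (by omega), if_pos c4] at hi2
        have hc : i + 1 - 1 = g := by omega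
        rw [hc] at hi2; exact hgs hi2
      · by_cases c5 : i + 1 = L.length + 1
        · rw [if_neg (by omega), if_neg (by omega), if_neg c4, if_pos c5] at hi2; simp at hi2
        · rw [if_neg (by omega), if_neg (by omega), if_neg c4, if_neg c5] at hi2; simp at hi2
    · by_cases c7 : i ≤ L.length
      · rw [if_neg c1, if_neg c3, if_pos c7] at hi1
        by_cases c8 : i + 1 ≤ L.length
        · rw [if_neg (by omega), if_neg (by omega), if_pos c8] at hi2
          have h9 : i + 1 - 1 = (i - 1) + 1 := by omega
          rw [h9] at hi2
          exact hU (i - 1) ⟨hi1, hi2⟩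
        · by_cases c9 : i + 1 = L.length + 1
          · rw [if_neg (by omega), if_neg (by omega), if_neg c8, if_pos c9] at hi2; simp at hi2
          · rw [if_neg (by omega), if_neg (by omega), if_neg c8, if_neg c9] at hi2; simp at hi2
      · by_cases c10 : i = L.length + 1
        · rw [if_neg c1, if_neg c3, if_neg c7, if_pos c10] at hi1; simp at hi1
        · rw [if_neg c1, if_neg c3, if_neg c7, if_neg c10] at hi1; simp at hi1

lemma grounds_insCh {L : List SStep} {m : ℕ} (hS : IsSchroder L m) {g : ℕ}
    (hgmem : g ∈ grounds L) :
    grounds (insCh L g) = ((grounds L).filter (fun j => j < g)) ∪ {g, L.length + 2} := by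
  classical
  obtain ⟨hg, hgh, hgs⟩ := mem_grounds.1 hgmem
  ext j
  rw [mem_grounds, Finset.mem_union, Finset.mem_filter, mem_grounds,
    Finset.mem_insert, Finset.mem_singleton, insCh_length hg, insCh_sHeight hg,
    insCh_getElem? hg]
  constructor
  · rintro ⟨hj, hh, hs⟩
    by_cases c1 : j < g
    · rw [if_pos (by omega)] at hh
      rw [if_pos c1] at hs
      exact Or.inl ⟨⟨by omega, hh, hs⟩, c1⟩
    · by_cases c2 : j = g
      · exact Or.inr (Or.inl c2)
      · -- g < j : height positive unless j = len + 2
        by_cases c3 : j ≤ L.length + 1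
        · exfalso
          rw [if_neg (by omega), if_pos c3] at hh
          have := hS.2.2 (j - 1)
          omega
        · right; right; omega
  · rintro (⟨⟨hj, hh, hs⟩, hlt⟩ | rfl | rfl)
    · exact ⟨by omega, by rw [if_pos (by omega)]; exact hh, by rw [if_pos hlt]; exact hs⟩
    · refine ⟨by omega, by rw [if_pos le_rfl]; exact hgh, ?_⟩
      rw [if_neg (by omega), if_pos rfl]
      simp
    · refine ⟨by omega, ?_, ?_⟩
      · rw [if_neg (by omega), if_neg (by omega)]
        exact hS.2.1
      · rw [if_neg (by omega), if_neg (by omega), if_neg (by omega), if_neg (by omega)]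
        simp

lemma grounds_le {L : List SStep} {j : ℕ} (h : j ∈ grounds L) : j ≤ L.length :=
  (mem_grounds.1 h).1

lemma labelP_insCh {L : List SStep} {m : ℕ} (hS : IsSchroder L m) {g : ℕ}
    (hgmem : g ∈ grounds L) :
    labelP (insCh L g) = ((grounds L).filter (fun j => j < g)).card + 3 := by
  classical
  rw [labelP, grounds_insCh hS hgmem]
  have hg := grounds_le hgmem
  have hdisj : Disjoint ((grounds L).filter (fun j => j < g)) ({g, L.length + 2} : Finset ℕ) := by
    rw [Finset.disjoint_right]
    intro y hy hmem
    have := (Finset.mem_filter.1 hmem).2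
    simp only [Finset.mem_insert, Finset.mem_singleton] at hy
    have := grounds_le (Finset.mem_filter.1 hmem).1
    omega
  rw [Finset.card_union_of_disjoint hdisj]
  have : ({g, L.length + 2} : Finset ℕ).card = 2 := by
    rw [Finset.card_insert_of_notMem (by simp; omega), Finset.card_singleton]
  rw [this]

/-! ### append H -/

lemma appH_schroder {L : List SStep} {m : ℕ} (hS : IsSchroder L m) :
    IsSchroder (appH L) (m + 1) := by
  refine ⟨?_, ?_, ?_⟩
  · rw [appH, List.map_append, List.sum_append, hS.1]; rfl
  · rw [appH, List.map_append, List.sum_append, hS.2.1]; rfl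
  · intro i
    rcases le_or_gt i L.length with h | h
    · rw [appH, sHeight_append_le h]; exact hS.2.2 i
    · have hlen : (appH L).length = L.length + 1 := by simp [appH]
      have : sHeight (appH L) i = ((appH L).map SStep.eff).sum := by
        apply sHeight_of_ge; omega
      rw [this, appH, List.map_append, List.sum_append, hS.2.1]
      simp [SStep.eff]

lemma appH_getElem? (L : List SStep) (i : ℕ) :
    (appH L)[i]? = if i < L.length then L[i]? else if i = L.length then some SStep.H
      else none := by
  rw [appH, List.getElem?_append]
  rcases lt_or_ge i L.length with h | h
  · rw [if_pos h, if_pos h]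
  · rw [if_neg (by omega), if_neg (by omega)]
    rcases eq_or_lt_of_le h with rfl | h2
    · simp
    · rw [if_neg (by omega)]
      have : i - L.length = (i - L.length - 1) + 1 := by omega
      rw [this]
      simp

lemma appH_UHFree {L : List SStep} {m : ℕ} (hS : IsSchroder L m) (hU : UHFree L) :
    UHFree (appH L) := by
  intro i ⟨hi1, hi2⟩
  rw [appH_getElem?] at hi1 hi2
  by_cases c1 : i + 1 < L.length
  · rw [if_pos (by omega)] at hi1
    rw [if_pos c1] at hi2
    exact hU i ⟨hi1, hi2⟩
  · by_cases c2 : i + 1 = L.length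
    · -- last of L is U : contradiction with heights
      rw [if_pos (by omega)] at hi1
      have hne : L ≠ [] := by intro h; subst h; simp at c2
      have : i = L.length - 1 := by omega
      rw [this] at hi1
      exact schroder_last_ne_U hS hne hi1 rfl
    · rw [if_neg (by omega)] at hi1
      by_cases c3 : i = L.length
      · rw [if_pos c3] at hi1; simp at hi1
      · rw [if_neg c3] at hi1; simp at hi1

lemma grounds_appH {L : List SStep} {m : ℕ} (hS : IsSchroder L m) :
    grounds (appH L) = insert (L.length + 1) ((grounds L).erase L.length) := by
  classical
  ext j
  have hlen : (appH L).length = L.length + 1 := by simp [appH]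
  rw [mem_grounds, Finset.mem_insert, Finset.mem_erase, mem_grounds, hlen, appH_getElem?]
  constructor
  · rintro ⟨hj, hh, hs⟩
    by_cases c1 : j < L.length
    · right
      refine ⟨by omega, by omega, ?_, by rwa [if_pos c1] at hs⟩
      rw [appH, sHeight_append_le (by omega)] at hh
      exact hh
    · by_cases c2 : j = L.length
      · exfalso
        rw [if_neg (by omega), if_pos c2] at hs
        exact hs rfl
      · left; omega
  · rintro (rfl | ⟨hne, hj, hh, hs⟩)
    · refine ⟨le_rfl, ?_, by rw [if_neg (by omega), if_neg (by omega)]; simp⟩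
      have : sHeight (appH L) (L.length + 1) = ((appH L).map SStep.eff).sum := by
        apply sHeight_of_ge; omega
      rw [this]
      exact (appH_schroder hS).2.1
    · have c1 : j < L.length := by omega
      refine ⟨by omega, ?_, by rw [if_pos c1]; exact hs⟩
      rw [appH, sHeight_append_le (by omega)]
      exact hh

lemma labelP_appH {L : List SStep} {m : ℕ} (hS : IsSchroder L m) :
    labelP (appH L) = labelP L := by
  classical
  rw [labelP, grounds_appH hS, labelP]
  have h1 : L.length + 1 ∉ (grounds L).erase L.length := by
    intro h
    have := grounds_le (Finset.mem_erase.1 h).2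
    omega
  rw [Finset.card_insert_of_notMem h1,
    Finset.card_erase_of_mem (length_mem_grounds hS)]
  have := Finset.card_pos.2 ⟨_, length_mem_grounds hS⟩
  omega

/-! ### inverse decomposition -/

def zset (L : List SStep) : Finset ℕ :=
  (Finset.range L.length).filter (fun j => sHeight L j = 0)

lemma zset_nonempty {L : List SStep} (h : L ≠ []) : (zset L).Nonempty := by
  refine ⟨0, ?_⟩
  simp [zset, Finset.mem_filter, Finset.mem_range, sHeight_zero,
    List.length_pos_iff.2 h]

noncomputable def zmax (L : List SStep) : ℕ := (zset L).max.getD 0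

lemma zmax_mem {L : List SStep} (h : L ≠ []) : zmax L ∈ zset L := by
  obtain ⟨a, ha⟩ := Finset.max_of_nonempty (zset_nonempty h)
  rw [zmax, ha]
  exact Finset.mem_of_max ha

lemma le_zmax {L : List SStep} (h : L ≠ []) {j : ℕ} (hj : j ∈ zset L) : j ≤ zmax L := by
  obtain ⟨a, ha⟩ := Finset.max_of_nonempty (zset_nonempty h)
  rw [zmax, ha]
  exact Finset.le_max_of_eq hj ha

lemma mem_zset {L : List SStep} {j : ℕ} :
    j ∈ zset L ↔ j < L.length ∧ sHeight L j = 0 := by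
  simp [zset, Finset.mem_filter, Finset.mem_range]

lemma zmax_insCh {L : List SStep} {m : ℕ} (hS : IsSchroder L m) {g : ℕ}
    (hgmem : g ∈ grounds L) : zmax (insCh L g) = g := by
  have hg := grounds_le hgmem
  have hgh := (mem_grounds.1 hgmem).2.1
  have hne : insCh L g ≠ [] := by
    intro h
    have := congrArg List.length h
    rw [insCh_length hg] at this
    simp at this
  have hlen : (insCh L g).length = L.length + 2 := insCh_length hg
  apply le_antisymm
  · have hmem := zmax_mem hne
    rw [mem_zset] at hmem
    obtain ⟨h1, h2⟩ := hmem
    by_contra hcon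
    push_neg at hcon
    rw [insCh_sHeight hg] at h2
    rw [if_neg (by omega), if_pos (by omega)] at h2
    have := hS.2.2 (zmax (insCh L g) - 1)
    omega
  · apply le_zmax hne
    rw [mem_zset, hlen, insCh_sHeight hg, if_pos le_rfl]
    exact ⟨by omega, hgh⟩

def parentD (L : List SStep) (g : ℕ) : List SStep :=
  L.take g ++ (L.drop (g + 1)).dropLast

lemma parentD_insCh {L : List SStep} {g : ℕ} (hg : g ≤ L.length) :
    parentD (insCh L g) g = L := by
  have h1 : (L.take g).length = g := by simp [hg]
  have h2 : (insCh L g).take g = L.take g := by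
    rw [insCh, List.take_left' h1]
  have h3 : (insCh L g).drop (g + 1) = L.drop g ++ [SStep.D] := by
    have heq : insCh L g = (L.take g ++ [SStep.U]) ++ (L.drop g ++ [SStep.D]) := by
      simp [insCh]
    rw [heq, List.drop_left' (by simp [h1])]
  rw [parentD, h2, h3, List.dropLast_concat, List.take_append_drop]

lemma insCh_parentD {L : List SStep} {m : ℕ} (hS : IsSchroder L (m + 1)) (hU : UHFree L)
    {g : ℕ} (hglen : g < L.length) (hgh : sHeight L g = 0)
    (hmaxprop : ∀ t, g < t → t < L.length → sHeight L t ≠ 0)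
    (hlast : L[L.length - 1]? = some SStep.D) :
    insCh (parentD L g) g = L ∧
    (parentD L g).length = L.length - 2 ∧
    g ≤ L.length - 2 ∧
    L[g]? = some SStep.U := by
  have hne : L ≠ [] := schroder_ne_nil hS
  have hlen0 : 0 < L.length := List.length_pos_iff.2 hne
  -- the step at position g
  obtain ⟨sg, hsg⟩ : ∃ s, L[g]? = some s := ⟨L[g]'hglen, List.getElem?_eq_getElem hglen⟩
  have hgs : sHeight L (g + 1) = sHeight L g + sg.eff := sHeight_succ hsg
  -- g + 1 < length
  have hg1 : g + 1 < L.length := by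
    rcases eq_or_lt_of_le (Nat.succ_le_of_lt hglen) with h | h
    · exfalso
      have hgl : g = L.length - 1 := by omega
      rw [hgl] at hsg
      rw [hsg] at hlast
      have hDg : sg = SStep.D := by injection hlast
      subst hDg
      have h2 : sHeight L L.length = 0 := schroder_sHeight_length hS
      have h3 : L.length - 1 + 1 = L.length := by omega
      rw [hgl, h3] at hgs
      simp only [SStep.eff] at hgs
      rw [hgl] at hgh
      omega
    · exact h
  have hgpos : sHeight L (g + 1) ≠ 0 := hmaxprop (g + 1) (by omega) hg1
  have hsgU : sg = SStep.U := by
    have hnn := hS.2.2 (g + 1)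
    cases sg
    · rfl
    · exfalso; simp only [SStep.eff] at hgs; omega
    · exfalso; simp only [SStep.eff] at hgs; omega
  subst hsgU
  -- decomposition of L
  have hdrop_ne : L.drop (g + 1) ≠ [] := by
    intro h
    have := congrArg List.length h
    simp at this
    omega
  have hlast' : (L.drop (g + 1)).getLast hdrop_ne = SStep.D := by
    rw [List.getLast_eq_getElem]
    have hlen : (L.drop (g + 1)).length = L.length - (g + 1) := by simp
    rw [List.getElem_drop]
    have hDval : L[L.length - 1]'(by omega) = SStep.D := by
      rw [List.getElem?_eq_getElem (by omega : L.length - 1 < L.length)] at hlast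
      injection hlast
    have he : g + 1 + ((L.drop (g + 1)).length - 1) = L.length - 1 := by
      rw [hlen]; omega
    simp_rw [he]
    exact hDval
  have hdecomp : L.drop (g + 1) = (L.drop (g + 1)).dropLast ++ [SStep.D] := by
    conv_lhs => rw [← List.dropLast_append_getLast hdrop_ne]
    rw [hlast']
  have htake : L.take (g + 1) = L.take g ++ [SStep.U] := by
    rw [List.take_succ, hsg]
    rfl
  have hL : L = L.take g ++ SStep.U :: ((L.drop (g + 1)).dropLast ++ [SStep.D]) := by
    conv_lhs => rw [← List.take_append_drop (g + 1) L, htake, hdecomp]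
    simp
  have h1 : (L.take g).length = g := by simp; omega
  have hlenP : (parentD L g).length = L.length - 2 := by
    rw [parentD]
    have h2 : (L.drop (g + 1)).length = L.length - (g + 1) := by simp
    simp only [List.length_append, List.length_dropLast, h1, h2]
    omega
  refine ⟨?_, hlenP, by omega, hsg⟩
  have htake2 : (parentD L g).take g = L.take g := by
    rw [parentD, List.take_left' h1]
  have hdrop2 : (parentD L g).drop g = (L.drop (g + 1)).dropLast := by
    rw [parentD, List.drop_left' h1]
  rw [insCh, htake2, hdrop2]
  exact hL.symm

lemma sum_len_insCh {L : List SStep} {g : ℕ} (hg : g ≤ L.length) :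
    ((insCh L g).map SStep.len).sum = (L.map SStep.len).sum + 2 := by
  have heq : (insCh L g).map SStep.len
      = (L.take g).map SStep.len
        ++ SStep.U.len :: ((L.drop g).map SStep.len ++ [SStep.D.len]) := by
    simp [insCh]
  rw [heq, List.sum_append, List.sum_cons, List.sum_append]
  have h7 : (L.map SStep.len).sum
      = ((L.take g).map SStep.len).sum + ((L.drop g).map SStep.len).sum := by
    conv_lhs => rw [← List.take_append_drop g L]
    rw [List.map_append, List.sum_append]
  have h2 : SStep.U.len = 1 := rfl
  have h3 : ([SStep.D.len] : List ℕ).sum = 1 := rfl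
  rw [h2, h3]
  omega

lemma parentD_props {L : List SStep} {m : ℕ} (hS : IsSchroder L (m + 1)) (hU : UHFree L)
    {g : ℕ} (hglen : g < L.length) (hgh : sHeight L g = 0)
    (hmaxprop : ∀ t, g < t → t < L.length → sHeight L t ≠ 0)
    (hlast : L[L.length - 1]? = some SStep.D) :
    IsSchroder (parentD L g) m ∧ UHFree (parentD L g) ∧ g ∈ grounds (parentD L g) := by
  obtain ⟨hins, hlenP, hgle, hstepU⟩ := insCh_parentD hS hU hglen hgh hmaxprop hlast
  set P := parentD L g with hPdef
  have hgP : g ≤ P.length := by omega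
  have hlenL : L.length = P.length + 2 := by
    have := insCh_length hgP
    rw [hins] at this
    omega
  -- height transfer
  have hh : ∀ i, sHeight L i =
      if i ≤ g then sHeight P i
      else if i ≤ P.length + 1 then sHeight P (i - 1) + 1
      else (P.map SStep.eff).sum := by
    intro i
    have := insCh_sHeight hgP i
    rw [hins] at this
    exact this
  have hPle : ∀ i, i ≤ g → sHeight P i = sHeight L i := by
    intro i hi
    have := hh i
    rw [if_pos hi] at this
    omega
  have hPmid : ∀ i, g < i → i ≤ P.length → sHeight P i = sHeight L (i + 1) - 1 := by
    intro i h1 h2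
    have := hh (i + 1)
    rw [if_neg (by omega), if_pos (by omega)] at this
    have h3 : i + 1 - 1 = i := by omega
    rw [h3] at this
    omega
  have hPlast : sHeight P P.length = 0 := by
    have h4 : sHeight L (P.length + 2) = 0 := by
      have := schroder_sHeight_length hS
      rw [hlenL] at this
      exact this
    have h5 : sHeight L (P.length + 2) = sHeight L (P.length + 1) + SStep.eff SStep.D := by
      apply sHeight_succ
      have : P.length + 1 = L.length - 1 := by omega
      rw [this]; exact hlast
    have h6 : SStep.eff SStep.D = -1 := rfl
    rcases le_or_gt P.length g with h | h
    · have h7 : P.length = g := by omega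
      have := hPle P.length (by omega)
      rw [this, h7]
      exact hgh
    · rw [hPmid P.length h le_rfl]
      omega
  have hPnn : ∀ i, 0 ≤ sHeight P i := by
    intro i
    rcases le_or_gt i g with h | h
    · rw [hPle i h]; exact hS.2.2 i
    · rcases le_or_gt i P.length with h2 | h2
      · rw [hPmid i h h2]
        have hne0 := hmaxprop (i + 1) (by omega) (by omega)
        have := hS.2.2 (i + 1)
        omega
      · rw [sHeight_of_ge (by omega), ← sHeight_length]
        rw [hPlast]
  have hPsum : (P.map SStep.eff).sum = 0 := by
    rw [← sHeight_length]; exact hPlast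
  have hPlen : (P.map SStep.len).sum = 2 * m := by
    have := sum_len_insCh hgP
    rw [hins, hS.1] at this
    omega
  -- getElem transfer
  have hge : ∀ i, L[i]? =
      if i < g then P[i]?
      else if i = g then some SStep.U
      else if i ≤ P.length then P[i-1]?
      else if i = P.length + 1 then some SStep.D
      else none := by
    intro i
    have := insCh_getElem? hgP i
    rw [hins] at this
    exact this
  have hPlt : ∀ i, i < g → P[i]? = L[i]? := by
    intro i hi
    have := hge i
    rw [if_pos hi] at this
    exact this.symm
  have hPge : ∀ i, g ≤ i → i < P.length → P[i]? = L[i+1]? := by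
    intro i h1 h2
    have := hge (i + 1)
    rw [if_neg (by omega), if_neg (by omega), if_pos (by omega)] at this
    have h3 : i + 1 - 1 = i := by omega
    rw [h3] at this
    exact this.symm
  have hPUH : UHFree P := by
    intro i ⟨h1, h2⟩
    have hi1lt : i + 1 < P.length := by
      by_contra hcon
      rw [List.getElem?_eq_none (by omega)] at h2
      simp at h2
    by_cases c1 : i + 1 < g
    · rw [hPlt i (by omega)] at h1
      rw [hPlt (i+1) c1] at h2
      exact hU i ⟨h1, h2⟩
    · by_cases c2 : i + 1 = g
      · subst c2
        rw [hPge (i+1) le_rfl hi1lt] at h2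
        exact hU (i+1) ⟨hstepU, h2⟩
      · have hgi : g ≤ i := by omega
        rw [hPge i hgi (by omega)] at h1
        rw [hPge (i+1) (by omega) hi1lt] at h2
        exact hU (i+1) ⟨h1, h2⟩
  have hgmem : g ∈ grounds P := by
    rw [mem_grounds]
    refine ⟨hgP, by rw [hPle g le_rfl]; exact hgh, ?_⟩
    rcases eq_or_lt_of_le hgP with h | h
    · rw [List.getElem?_eq_none (by omega)]
      simp
    · rw [hPge g le_rfl h]
      intro hcon
      exact hU g ⟨hstepU, hcon⟩
  exact ⟨⟨hPlen, hPsum, hPnn⟩, hPUH, hgmem⟩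

lemma last_step_cases {L : List SStep} {m : ℕ} (hS : IsSchroder L (m + 1)) :
    L[L.length - 1]? = some SStep.D ∨ L[L.length - 1]? = some SStep.H := by
  have hne : L ≠ [] := schroder_ne_nil hS
  have hlen : 0 < L.length := List.length_pos_iff.2 hne
  obtain ⟨s, hs⟩ : ∃ s, L[L.length - 1]? = some s :=
    ⟨L[L.length - 1]'(by omega), List.getElem?_eq_getElem (by omega)⟩
  have hne' := schroder_last_ne_U hS hne hs
  cases s
  · exact absurd rfl hne'
  · left; exact hs
  · right; exact hs

lemma appH_dropLast {L : List SStep} (hne : L ≠ [])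
    (hlast : L[L.length - 1]? = some SStep.H) : appH L.dropLast = L := by
  have hlen : 0 < L.length := List.length_pos_iff.2 hne
  have hgl : L.getLast hne = SStep.H := by
    rw [List.getLast_eq_getElem]
    rw [List.getElem?_eq_getElem (by omega : L.length - 1 < L.length)] at hlast
    injection hlast
  conv_rhs => rw [← List.dropLast_append_getLast hne, hgl]
  rfl

lemma dropLast_props {L : List SStep} {m : ℕ} (hS : IsSchroder L (m + 1)) (hU : UHFree L)
    (hlast : L[L.length - 1]? = some SStep.H) :
    IsSchroder L.dropLast m ∧ UHFree L.dropLast := by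
  have hne : L ≠ [] := schroder_ne_nil hS
  have hL : L = L.dropLast ++ [SStep.H] := (appH_dropLast hne hlast).symm
  have hlenP : L.dropLast.length = L.length - 1 := by simp
  have hlen : 0 < L.length := List.length_pos_iff.2 hne
  have hsum : (L.map SStep.len).sum = (L.dropLast.map SStep.len).sum + 2 := by
    conv_lhs => rw [hL]
    rw [List.map_append, List.sum_append]
    rfl
  have heff : (L.map SStep.eff).sum = (L.dropLast.map SStep.eff).sum := by
    conv_lhs => rw [hL]
    rw [List.map_append, List.sum_append]
    simp [SStep.eff]
  refine ⟨⟨?_, ?_, ?_⟩, ?_⟩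
  · have := hS.1; omega
  · rw [← heff]; exact hS.2.1
  · intro i
    rcases le_or_gt i L.dropLast.length with h | h
    · have : sHeight L.dropLast i = sHeight L i := by
        conv_rhs => rw [hL]
        rw [sHeight_append_le h]
      rw [this]; exact hS.2.2 i
    · rw [sHeight_of_ge (by omega), ← heff, hS.2.1]
  · intro i ⟨h1, h2⟩
    have hi1 : i + 1 < L.dropLast.length := by
      by_contra hcon
      rw [List.getElem?_eq_none (by omega)] at h2
      simp at h2
    have ht : ∀ t, t < L.dropLast.length → L.dropLast[t]? = L[t]? := by
      intro t htl
      conv_rhs => rw [hL]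
      rw [List.getElem?_append, if_pos htl]
    rw [ht i (by omega)] at h1
    rw [ht (i+1) hi1] at h2
    exact hU i ⟨h1, h2⟩

/-! ### feature and child packaging -/

def featP (L : List SStep) : Prop := L[0]? = some SStep.U

lemma first_step_cases {L : List SStep} {m : ℕ} (hS : IsSchroder L m) (hne : L ≠ []) :
    L[0]? = some SStep.U ∨ L[0]? = some SStep.H := by
  have hlen : 0 < L.length := List.length_pos_iff.2 hne
  obtain ⟨s, hs⟩ : ∃ s, L[0]? = some s := ⟨L[0]'hlen, List.getElem?_eq_getElem hlen⟩
  have h1 : sHeight L 1 = sHeight L 0 + s.eff := sHeight_succ hs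
  rw [sHeight_zero] at h1
  have := hS.2.2 1
  cases s
  · left; exact hs
  · exfalso; simp [SStep.eff] at h1; omega
  · right; exact hs

noncomputable def gelt (L : List SStep) (i : Fin (grounds L).card) : ℕ :=
  (((grounds L).orderIsoOfFin rfl i : {a // a ∈ grounds L}) : ℕ)

lemma gelt_mem (L : List SStep) (i : Fin (grounds L).card) : gelt L i ∈ grounds L :=
  ((grounds L).orderIsoOfFin rfl i).2

noncomputable def pathChild (L : List SStep) (hk : 2 ≤ labelP L) (j : Fin (labelP L)) :
    List SStep :=
  if (j : ℕ) = labelP L - 2 then appH L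
  else insCh L (gelt L ⟨min (j : ℕ) (labelP L - 2), by
    have h := card_grounds L; omega⟩)

lemma card_filter_lt_orderIso {s : Finset ℕ} {k : ℕ} (h : s.card = k) (j : Fin k) :
    (s.filter (fun y => y < ((s.orderIsoOfFin h j : {a // a ∈ s}) : ℕ))).card = (j : ℕ) := by
  classical
  set e := s.orderIsoOfFin h with he
  have heq : s.filter (fun y => y < ((e j : {a // a ∈ s}) : ℕ))
      = (Finset.Iio j).image (fun i => ((e i : {a // a ∈ s}) : ℕ)) := by
    ext y
    simp only [Finset.mem_filter, Finset.mem_image, Finset.mem_Iio]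
    constructor
    · rintro ⟨hy, hylt⟩
      refine ⟨e.symm ⟨y, hy⟩, ?_, by simp⟩
      have h1 : (⟨y, hy⟩ : {a // a ∈ s}) < e j := hylt
      have := e.symm.strictMono h1
      simpa using this
    · rintro ⟨i, hij, rfl⟩
      refine ⟨(e i).2, ?_⟩
      exact_mod_cast e.strictMono hij
  rw [heq, Finset.card_image_of_injective _ (fun a b hab => by
    have : e a = e b := Subtype.ext hab
    exact e.injective this)]
  simp

lemma pathChild_props {L : List SStep} {m : ℕ} (hS : IsSchroder L m) (hU : UHFree L)
    (hk : 2 ≤ labelP L) (j : Fin (labelP L)) :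
    IsSchroder (pathChild L hk j) (m + 1) ∧ UHFree (pathChild L hk j) ∧
    labelP (pathChild L hk j) = succLabel (labelP L) j := by
  have hcard := card_grounds L
  by_cases hc : (j : ℕ) = labelP L - 2
  · rw [pathChild, if_pos hc, succLabel, if_neg (by omega), if_pos hc]
    exact ⟨appH_schroder hS, appH_UHFree hS hU, labelP_appH hS⟩
  · rw [pathChild, if_neg hc]
    set i : Fin (grounds L).card := ⟨min (j : ℕ) (labelP L - 2), by omega⟩ with hidef
    have hmem := gelt_mem L i
    have hlbl : labelP (insCh L (gelt L i)) = (i : ℕ) + 3 := by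
      rw [labelP_insCh hS hmem]
      rw [show (Finset.filter (fun j => j < gelt L i) (grounds L)).card = (i : ℕ) from
        card_filter_lt_orderIso rfl i]
    refine ⟨insCh_schroder hS (grounds_le hmem), insCh_UHFree hU hmem, ?_⟩
    rw [hlbl, succLabel]
    have hj2 := j.2
    by_cases hc1 : (j : ℕ) = labelP L - 1
    · rw [if_pos hc1]
      have : (i : ℕ) = labelP L - 2 := by simp [hidef]; omega
      omega
    · rw [if_neg hc1, if_neg hc]
      have : (i : ℕ) = (j : ℕ) := by simp [hidef]; omega
      omega

lemma featP_appH (L : List SStep) : featP (appH L) ↔ featP L := by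
  rcases List.eq_nil_or_concat L with rfl | ⟨L', a, rfl⟩
  · simp [featP, appH]
  · rw [featP, featP, appH_getElem?, if_pos (by simp)]

lemma featP_insCh {L : List SStep} {m : ℕ} (hS : IsSchroder L m) (hne : L ≠ [])
    {g : ℕ} (hgmem : g ∈ grounds L) : featP (insCh L g) ↔ featP L := by
  obtain ⟨hg, hgh, hgs⟩ := mem_grounds.1 hgmem
  rw [featP, featP, insCh_getElem? hg]
  rcases Nat.eq_zero_or_pos g with rfl | hgpos
  · rw [if_neg (by omega), if_pos rfl]
    rcases first_step_cases hS hne with h | h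
    · simp [h]
    · exact absurd h hgs
  · rw [if_pos hgpos]

lemma pathChild_feat {L : List SStep} {m : ℕ} (hS : IsSchroder L m) (hne : L ≠ [])
    (hk : 2 ≤ labelP L) (j : Fin (labelP L)) :
    featP (pathChild L hk j) ↔ featP L := by
  by_cases hc : (j : ℕ) = labelP L - 2
  · rw [pathChild, if_pos hc]; exact featP_appH L
  · rw [pathChild, if_neg hc]
    exact featP_insCh hS hne (gelt_mem L _)

/-! ### the path step equivalence -/

def PT (m : ℕ) : Type := {L : List SStep // IsSchroder L m ∧ UHFree L}

noncomputable def pathStep {m : ℕ} (x : Σ L : PT m, Fin (labelP L.val)) : PT (m + 1) :=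
  ⟨pathChild x.1.val (two_le_labelP x.1.2.1) x.2,
    (pathChild_props x.1.2.1 x.1.2.2 _ x.2).1,
    (pathChild_props x.1.2.1 x.1.2.2 _ x.2).2.1⟩

lemma insCh_inj {L1 L2 : List SStep} {m : ℕ} (hS1 : IsSchroder L1 m) (hS2 : IsSchroder L2 m)
    {g1 g2 : ℕ} (hg1 : g1 ∈ grounds L1) (hg2 : g2 ∈ grounds L2)
    (heq : insCh L1 g1 = insCh L2 g2) : L1 = L2 ∧ g1 = g2 := by
  have hz1 := zmax_insCh hS1 hg1
  have hz2 := zmax_insCh hS2 hg2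
  have hgg : g1 = g2 := by rw [← hz1, ← hz2, heq]
  subst hgg
  have hp1 := parentD_insCh (grounds_le hg1)
  have hp2 := parentD_insCh (grounds_le hg2)
  constructor
  · rw [← hp1, ← hp2, heq]
  · rfl

lemma appH_ne_insCh {L1 L2 : List SStep} {g : ℕ} (hg : g ≤ L2.length) :
    appH L1 ≠ insCh L2 g := by
  intro heq
  have hlen : L1.length + 1 = L2.length + 2 := by
    have := congrArg List.length heq
    rw [insCh_length hg] at this
    simpa [appH] using this
  have h1 : (appH L1)[L1.length]? = some SStep.H := by
    rw [appH_getElem?, if_neg (by omega), if_pos rfl]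
  have h2 : (insCh L2 g)[L2.length + 1]? = some SStep.D := by
    rw [insCh_getElem? hg, if_neg (by omega), if_neg (by omega), if_neg (by omega),
      if_pos rfl]
  rw [heq] at h1
  have : L1.length = L2.length + 1 := by omega
  rw [this, h2] at h1
  simp at h1

lemma pathStep_injective {m : ℕ} : Function.Injective (pathStep (m := m)) := by
  rintro ⟨⟨L1, hS1, hU1⟩, j1⟩ ⟨⟨L2, hS2, hU2⟩, j2⟩ heq
  have hval : pathChild L1 (two_le_labelP hS1) j1 = pathChild L2 (two_le_labelP hS2) j2 :=
    congrArg Subtype.val heq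
  have hk1 := two_le_labelP hS1
  have hk2 := two_le_labelP hS2
  have hcard1 := card_grounds L1
  have hcard2 := card_grounds L2
  have main : L1 = L2 ∧ (j1 : ℕ) = (j2 : ℕ) := by
    by_cases hc1 : (j1 : ℕ) = labelP L1 - 2 <;> by_cases hc2 : (j2 : ℕ) = labelP L2 - 2
    · rw [pathChild, if_pos hc1, pathChild, if_pos hc2] at hval
      have hLL : L1 = L2 := by
        have := congrArg List.dropLast hval
        simpa [appH] using this
      subst hLL
      exact ⟨rfl, by omega⟩
    · rw [pathChild, if_pos hc1, pathChild, if_neg hc2] at hval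
      exact absurd hval (appH_ne_insCh (grounds_le (gelt_mem _ _)))
    · rw [pathChild, if_neg hc1, pathChild, if_pos hc2] at hval
      exact absurd hval.symm (appH_ne_insCh (grounds_le (gelt_mem _ _)))
    · rw [pathChild, if_neg hc1, pathChild, if_neg hc2] at hval
      obtain ⟨hLL, hgg⟩ := insCh_inj hS1 hS2 (gelt_mem _ _) (gelt_mem _ _) hval
      subst hLL
      refine ⟨rfl, ?_⟩
      -- same list; now indices
      have hginj : (⟨min (j1 : ℕ) (labelP L1 - 2), by omega⟩ : Fin (grounds L1).card)
          = ⟨min (j2 : ℕ) (labelP L1 - 2), by omega⟩ := by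
        have : ((grounds L1).orderIsoOfFin rfl) ⟨min (j1 : ℕ) (labelP L1 - 2), by omega⟩
            = ((grounds L1).orderIsoOfFin rfl) ⟨min (j2 : ℕ) (labelP L1 - 2), by omega⟩ :=
          Subtype.ext hgg
        exact ((grounds L1).orderIsoOfFin rfl).injective this
      have hmin : min (j1 : ℕ) (labelP L1 - 2) = min (j2 : ℕ) (labelP L1 - 2) :=
        congrArg Fin.val hginj
      have hj1 : (j1 : ℕ) < labelP L1 := j1.2
      have hj2 : (j2 : ℕ) < labelP L1 := j2.2
      omega
  obtain ⟨hLL, hjj⟩ := main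
  subst hLL
  have : j1 = j2 := Fin.ext hjj
  subst this
  rfl

lemma pathStep_surjective {m : ℕ} : Function.Surjective (pathStep (m := m)) := by
  rintro ⟨L', hS', hU'⟩
  have hne : L' ≠ [] := schroder_ne_nil hS'
  rcases last_step_cases hS' with hlast | hlast
  · -- ends with D
    have hzmem := zmax_mem hne
    rw [mem_zset] at hzmem
    obtain ⟨hglen, hgh⟩ := hzmem
    have hmaxprop : ∀ t, zmax L' < t → t < L'.length → sHeight L' t ≠ 0 := by
      intro t h1 h2 h3
      have := le_zmax hne (mem_zset.2 ⟨h2, h3⟩)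
      omega
    obtain ⟨hins, hlenP, hgle, hstepU⟩ := insCh_parentD hS' hU' hglen hgh hmaxprop hlast
    obtain ⟨hSP, hUP, hgmem⟩ := parentD_props hS' hU' hglen hgh hmaxprop hlast
    have hkP := two_le_labelP hSP
    have hcardP := card_grounds (parentD L' (zmax L'))
    set P := parentD L' (zmax L') with hPdef
    set gi : Fin (grounds P).card := ((grounds P).orderIsoOfFin rfl).symm ⟨zmax L', hgmem⟩
      with hgidef
    have hgival : gelt P gi = zmax L' := by
      rw [gelt, hgidef]
      simp
    set jv : ℕ := if (gi : ℕ) = labelP P - 2 then labelP P - 1 else (gi : ℕ) with hjvdef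
    have hjvlt : jv < labelP P := by
      have := gi.2
      rw [hjvdef]
      split_ifs <;> omega
    refine ⟨⟨⟨P, hSP, hUP⟩, ⟨jv, by show jv < labelP P; exact hjvlt⟩⟩, ?_⟩
    apply Subtype.ext
    show pathChild P (two_le_labelP hSP) ⟨jv, hjvlt⟩ = L'
    have hgi2 := gi.2
    have hcnd : ¬ (jv = labelP P - 2) := by
      rw [hjvdef]
      split_ifs with h <;> omega
    rw [pathChild, if_neg hcnd]
    have hminval : (⟨min jv (labelP P - 2), by omega⟩ : Fin (grounds P).card) = gi := by
      apply Fin.ext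
      show min jv (labelP P - 2) = (gi : ℕ)
      rw [hjvdef]
      split_ifs with h <;> omega
    rw [hminval, hgival, hins]
  · -- ends with H
    obtain ⟨hSP, hUP⟩ := dropLast_props hS' hU' hlast
    have hkP := two_le_labelP hSP
    refine ⟨⟨⟨L'.dropLast, hSP, hUP⟩, ⟨labelP L'.dropLast - 2,
      by show labelP L'.dropLast - 2 < labelP L'.dropLast; omega⟩⟩, ?_⟩
    apply Subtype.ext
    show pathChild L'.dropLast (two_le_labelP hSP) ⟨labelP L'.dropLast - 2, by omega⟩ = L'
    rw [pathChild, if_pos rfl]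
    exact appH_dropLast hne hlast

noncomputable def pathEquiv (m : ℕ) : (Σ L : PT m, Fin (labelP L.val)) ≃ PT (m + 1) :=
  Equiv.ofBijective pathStep ⟨pathStep_injective, pathStep_surjective⟩

/-! ### nil lemmas -/

lemma isSchroder_nil : IsSchroder [] 0 := by
  refine ⟨by simp, by simp, fun i => ?_⟩
  simp [sHeight]

lemma uhfree_nil : UHFree [] := by intro i ⟨h1, _⟩; simp at h1

lemma schroder_zero_eq_nil {L : List SStep} (hS : IsSchroder L 0) : L = [] := by
  cases L with
  | nil => rfl
  | cons a t =>
    exfalso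
    have := hS.1
    simp at this
    cases a <;> simp [SStep.len] at this

lemma grounds_nil : grounds ([] : List SStep) = {0} := by
  ext j
  rw [mem_grounds]
  simp only [List.length_nil, Nat.le_zero, Finset.mem_singleton]
  constructor
  · rintro ⟨h, _, _⟩; exact h
  · rintro rfl; exact ⟨rfl, by simp [sHeight], by simp⟩

lemma labelP_nil : labelP ([] : List SStep) = 2 := by
  rw [labelP, grounds_nil]; rfl

lemma featP_nil : ¬ featP ([] : List SStep) := by simp [featP]

lemma gelt_nil (i : Fin (grounds ([] : List SStep)).card) : gelt [] i = 0 := by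
  have hc : (grounds ([] : List SStep)).card = 1 := by rw [grounds_nil]; rfl
  have hival : (i : ℕ) = 0 := by have := i.2; omega
  have : i = ⟨(grounds ([] : List SStep)).card - 1, by omega⟩ := Fin.ext (by omega)
  rw [this]
  apply orderIso_last rfl (by omega) (by rw [grounds_nil]; simp)
  intro y hy
  rw [grounds_nil] at hy
  simp at hy
  omega

lemma insCh_nil : insCh [] 0 = [SStep.U, SStep.D] := by simp [insCh]

lemma pathChild_feat_nil (hk : 2 ≤ labelP ([] : List SStep))
    (j : Fin (labelP ([] : List SStep))) :
    featP (pathChild [] hk j) ↔ (j : ℕ) = 1 := by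
  have hl := labelP_nil
  by_cases hc : (j : ℕ) = labelP ([] : List SStep) - 2
  · rw [pathChild, if_pos hc]
    have : ¬ featP (appH []) := by simp [featP, appH]
    constructor
    · intro h; exact absurd h this
    · intro h; omega
  · rw [pathChild, if_neg hc, gelt_nil, insCh_nil]
    have : featP [SStep.U, SStep.D] := by simp [featP]
    constructor
    · intro _
      have := j.2
      omega
    · intro _; exact this

/-! ### glue: the generating-tree isomorphism -/

lemma wt_one_eq (w : WT 1) : w.val = [1] := length_one_rgs w.2.1 w.2.2.1

lemma pt_zero_eq (L : PT 0) : L.val = [] := schroder_zero_eq_nil L.2.1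

noncomputable def baseEquiv : WT 1 ≃ PT 0 where
  toFun _ := ⟨[], isSchroder_nil, uhfree_nil⟩
  invFun _ := ⟨[1], rfl, rgs_one, avoids_one⟩
  left_inv w := Subtype.ext (wt_one_eq w).symm
  right_inv L := Subtype.ext (pt_zero_eq L).symm

lemma featW_one : ¬ featW [1] := by simp [featW, List.getD]

lemma featW_wordChild_one' {u : List ℕ} (hu : u = [1]) (j : Fin (labelW u)) :
    featW (wordChild u j) ↔ (j : ℕ) = 1 := by
  subst hu; exact featW_wordChild_one j

lemma pathChild_feat_nil' {L : List SStep} (hL : L = []) (hk : 2 ≤ labelP L)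
    (j : Fin (labelP L)) :
    featP (pathChild L hk j) ↔ (j : ℕ) = 1 := by
  subst hL; exact pathChild_feat_nil hk j

lemma main_step : ∀ n : ℕ, ∃ e : WT (n + 1) ≃ PT n,
    ∀ w, labelW w.val = labelP (e w).val ∧ (featW w.val ↔ featP (e w).val) := by
  intro n
  induction n with
  | zero =>
    refine ⟨baseEquiv, fun w => ?_⟩
    have hw := wt_one_eq w
    have hl : (baseEquiv w).val = [] := rfl
    constructor
    · rw [hw, hl, labelW_one, labelP_nil]
    · rw [hw, hl]
      constructor
      · intro h; exact absurd h featW_one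
      · intro h; exact absurd h featP_nil
  | succ n ih =>
    obtain ⟨e, he⟩ := ih
    refine ⟨(wordEquiv (n + 1)).symm.trans
      ((Equiv.sigmaCongr e (fun u => finCongr (he u).1)).trans (pathEquiv n)), fun w => ?_⟩
    obtain ⟨⟨u, j⟩, rfl⟩ := (wordEquiv (n + 1)).surjective w
    have hform : ((wordEquiv (n + 1)).symm.trans
        ((Equiv.sigmaCongr e (fun u => finCongr (he u).1)).trans (pathEquiv n)))
          (wordEquiv (n + 1) ⟨u, j⟩)
        = pathEquiv n ⟨e u, finCongr (he u).1 j⟩ := by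
      rw [Equiv.trans_apply, Equiv.symm_apply_apply, Equiv.trans_apply]
      rfl
    rw [hform]
    have hvalW : (wordEquiv (n + 1) ⟨u, j⟩).val = wordChild u.val j := rfl
    have hvalP : (pathEquiv n ⟨e u, finCongr (he u).1 j⟩).val
        = pathChild (e u).val (two_le_labelP (e u).2.1) (finCongr (he u).1 j) := rfl
    have hne : u.val ≠ [] := by
      intro h
      have := u.2.1
      rw [h] at this
      simp at this
    have hjval : ((finCongr (he u).1 j : Fin (labelP (e u).val)) : ℕ) = (j : ℕ) := rfl
    constructor
    · rw [hvalW, hvalP, labelW_wordChild u.2.2.1 hne j,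
        (pathChild_props (e u).2.1 (e u).2.2 (two_le_labelP (e u).2.1)
          (finCongr (he u).1 j)).2.2, hjval]
      exact congrArg (fun t => succLabel t (j : ℕ)) (he u).1
    · rw [hvalW, hvalP]
      rcases Nat.eq_zero_or_pos n with rfl | hn
      · have hu1 : u.val = [1] := wt_one_eq u
        have hL0 : (e u).val = [] := pt_zero_eq (e u)
        rw [featW_wordChild_one' hu1 j, pathChild_feat_nil' hL0 _ _, hjval]
      · obtain ⟨n', rfl⟩ : ∃ n', n = n' + 1 := ⟨n - 1, by omega⟩
        have hulen : 2 ≤ u.val.length := by rw [u.2.1]; omega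
        have hLne : (e u).val ≠ [] := schroder_ne_nil (e u).2.1
        rw [featW_wordChild hulen j,
          pathChild_feat (e u).2.1 hLne (two_le_labelP (e u).2.1) (finCongr (he u).1 j)]
        exact (he u).2

/-- For every integer `n ≥ 2`, the number of UH-free Schröder paths of length `2 * (n - 1)`
whose first step is `U` equals the number of 12312-avoiding partitions of `[n]` in which
`1` and `2` lie in different blocks. -/
theorem stmt19 (n : ℕ) (hn : 2 ≤ n) :
    Nat.card {L : List SStep // IsSchroder L (n - 1) ∧ UHFree L ∧
        L[0]? = some SStep.U} =
    Nat.card {w : List ℕ // w.length = n ∧ IsCanonicalWord w ∧ Avoids12312 w ∧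
        w.getD 0 0 ≠ w.getD 1 0} := by
  obtain ⟨k, rfl⟩ : ∃ k, n = k + 2 := ⟨n - 2, by omega⟩
  obtain ⟨e, he⟩ := main_step (k + 1)
  have eqA : {L : List SStep // IsSchroder L (k + 1) ∧ UHFree L ∧
      L[0]? = some SStep.U} ≃ {x : PT (k + 1) // featP x.val} :=
    { toFun := fun x => ⟨⟨x.val, x.2.1, x.2.2.1⟩, x.2.2.2⟩
      invFun := fun x => ⟨x.val.val, x.val.2.1, x.val.2.2, x.2⟩
      left_inv := fun x => rfl
      right_inv := fun x => rfl }
  have eqC : {x : PT (k + 1) // featP x.val} ≃ {x : WT (k + 2) // featW x.val} :=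
    (Equiv.subtypeEquiv e (fun w => (he w).2)).symm
  have eqB : {x : WT (k + 2) // featW x.val} ≃ {w : List ℕ // w.length = k + 2 ∧
      IsCanonicalWord w ∧ Avoids12312 w ∧ w.getD 0 0 ≠ w.getD 1 0} :=
    { toFun := fun x => ⟨x.val.val, x.val.2.1, x.val.2.2.1, x.val.2.2.2,
        (featW_iff_ne (by rw [x.val.2.1]; omega) x.val.2.2.1).2 x.2⟩
      invFun := fun x => ⟨⟨x.val, x.2.1, x.2.2.1, x.2.2.2.1⟩,
        (featW_iff_ne (by rw [x.2.1]; omega) x.2.2.1).1 x.2.2.2.2⟩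
      left_inv := fun x => rfl
      right_inv := fun x => rfl }
  exact Nat.card_congr (eqA.trans (eqC.trans eqB))
end
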